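/- arXiv:1806.03429 — 6 statements merged into one kernel-verified Lean document; each statement's English description precedes it below -/
import Mathlib

section
/- Let S ⊂ P^N be an irreducible projective variety such that dim Sec(S) = dim S + 1. Then Sec(S) is a linear subspace of P^N. -/
open MvPolynomial

noncomputable section

variable {σ : Type*}

/-- The common zero locus of a set of polynomials. -/
def zLocus (I : Set (MvPolynomial σ ℂ)) : Set (σ → ℂ) :=
  {x | ∀ f ∈ I, eval x f = 0}

/-- A set is algebraic if it is a common zero locus of polynomials. -/
def IsAlg (S : Set (σ → ℂ)) : Prop :=
  ∃ I : Set (MvPolynomial σ ℂ), S = zLocus I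

/-- Zariski closure. -/
def zcl (S : Set (σ → ℂ)) : Set (σ → ℂ) :=
  ⋂₀ {T | IsAlg T ∧ S ⊆ T}

/-- Irreducibility of a set with respect to algebraic subsets. -/
def IsIrredV (S : Set (σ → ℂ)) : Prop :=
  S.Nonempty ∧ ∀ T₁ T₂ : Set (σ → ℂ), IsAlg T₁ → IsAlg T₂ →
    S ⊆ T₁ ∪ T₂ → S ⊆ T₁ ∨ S ⊆ T₂

/-- Dimension of (the affine cone over) a variety, via chains of irreducible
algebraic subsets. For the cone over a projective variety this is
(projective dimension) + 1. -/
def adim (S : Set (σ → ℂ)) : WithBot (WithTop ℕ) :=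
  Order.krullDim {T : Set (σ → ℂ) // IsAlg T ∧ IsIrredV T ∧ T ⊆ S}

/-- `S` is (the affine cone over) a projective cone: there is a vertex `v`
such that the line through `v` and any point of `S` stays in `S`. -/
def IsConeV (S : Set (σ → ℂ)) : Prop :=
  ∃ v ∈ S, v ≠ 0 ∧ ∀ x ∈ S, ∀ a b : ℂ, a • v + b • x ∈ S

/-- Secant variety (of cones): closure of the union of lines through pairs of points. -/
def secantV (S : Set (σ → ℂ)) : Set (σ → ℂ) :=
  zcl {v | ∃ x ∈ S, ∃ y ∈ S, ∃ a b : ℂ, v = a • x + b • y}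

/-- The gradient of a polynomial at a point. -/
def gradP [Fintype σ] [DecidableEq σ] (P : MvPolynomial σ ℂ) (v : σ → ℂ) : σ → ℂ :=
  fun i => eval v (pderiv i P)

/-- The singular locus (cone) of the hypersurface defined by `P`. -/
def singLocus [Fintype σ] [DecidableEq σ] (P : MvPolynomial σ ℂ) : Set (σ → ℂ) :=
  {v | ∀ i, eval v (pderiv i P) = 0}

end


noncomputable section Aux1



variable {σ τ : Type*}

lemma isAlg_sInter {F : Set (Set (σ → ℂ))} (h : ∀ T ∈ F, IsAlg T) : IsAlg (⋂₀ F) := by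
  choose I hI using h
  classical
  refine ⟨⋃ (T : F), I T.1 T.2, ?_⟩
  ext x
  simp only [Set.mem_sInter, zLocus, Set.mem_iUnion, Set.mem_setOf_eq]
  constructor
  · rintro hx f ⟨⟨T, hT⟩, hf⟩
    have := hx T hT
    rw [hI T hT] at this
    exact this f hf
  · intro hx T hT
    rw [hI T hT]
    exact fun f hf => hx f ⟨⟨T, hT⟩, hf⟩

lemma subset_zcl (S : Set (σ → ℂ)) : S ⊆ zcl S :=
  fun x hx => Set.mem_sInter.2 fun _ hT => hT.2 hx

lemma isAlg_zcl (S : Set (σ → ℂ)) : IsAlg (zcl S) :=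
  isAlg_sInter fun _ hT => hT.1

lemma zcl_le {S T : Set (σ → ℂ)} (hT : IsAlg T) (h : S ⊆ T) : zcl S ⊆ T :=
  fun _ hx => Set.mem_sInter.1 hx T ⟨hT, h⟩

lemma zcl_mono {S S' : Set (σ → ℂ)} (h : S ⊆ S') : zcl S ⊆ zcl S' :=
  fun x hx => Set.mem_sInter.2 fun T hT => Set.mem_sInter.1 hx T ⟨hT.1, h.trans hT.2⟩

lemma IsAlg.zcl_eq {S : Set (σ → ℂ)} (h : IsAlg S) : zcl S = S :=
  subset_antisymm (zcl_le h subset_rfl) (subset_zcl S)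

/-- Polynomial maps between affine spaces. -/
def PMap (F : τ → MvPolynomial σ ℂ) : (σ → ℂ) → (τ → ℂ) := fun v j => eval v (F j)

lemma eval_PMap (F : τ → MvPolynomial σ ℂ) (v : σ → ℂ) (f : MvPolynomial τ ℂ) :
    eval (PMap F v) f = eval v (bind₁ F f) := by
  simp only [eval, PMap]
  rw [eval₂Hom_bind₁]
  rfl

lemma isAlg_preimage (F : τ → MvPolynomial σ ℂ) {T : Set (τ → ℂ)} (hT : IsAlg T) :
    IsAlg (PMap F ⁻¹' T) := by
  obtain ⟨I, rfl⟩ := hT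
  refine ⟨bind₁ F '' I, ?_⟩
  ext v
  simp only [Set.mem_preimage, zLocus, Set.mem_setOf_eq, Set.forall_mem_image]
  exact forall₂_congr fun f _ => by rw [eval_PMap]

lemma pmap_zcl {F : τ → MvPolynomial σ ℂ} {A : Set (σ → ℂ)} {B : Set (τ → ℂ)}
    (h : ∀ x ∈ A, PMap F x ∈ B) : ∀ x ∈ zcl A, PMap F x ∈ zcl B := by
  intro x hx
  have : zcl A ⊆ PMap F ⁻¹' (zcl B) :=
    zcl_le (isAlg_preimage F (isAlg_zcl B)) (fun a ha => subset_zcl B (h a ha))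
  exact this hx

lemma isIrredV_image (F : τ → MvPolynomial σ ℂ) {A : Set (σ → ℂ)} (h : IsIrredV A) :
    IsIrredV (PMap F '' A) := by
  obtain ⟨⟨a, ha⟩, hmain⟩ := h
  refine ⟨⟨PMap F a, a, ha, rfl⟩, ?_⟩
  intro T₁ T₂ h₁ h₂ hsub
  have : A ⊆ (PMap F ⁻¹' T₁) ∪ (PMap F ⁻¹' T₂) := fun x hx => hsub ⟨x, hx, rfl⟩
  rcases hmain _ _ (isAlg_preimage F h₁) (isAlg_preimage F h₂) this with hc | hc
  · exact Or.inl (by rintro _ ⟨x, hx, rfl⟩; exact hc hx)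
  · exact Or.inr (by rintro _ ⟨x, hx, rfl⟩; exact hc hx)

lemma IsIrredV.zcl {A : Set (σ → ℂ)} (h : IsIrredV A) : IsIrredV (zcl A) := by
  obtain ⟨⟨a, ha⟩, hmain⟩ := h
  refine ⟨⟨a, subset_zcl A ha⟩, ?_⟩
  intro T₁ T₂ h₁ h₂ hsub
  rcases hmain _ _ h₁ h₂ ((subset_zcl A).trans hsub) with hc | hc
  · exact Or.inl (zcl_le h₁ hc)
  · exact Or.inr (zcl_le h₂ hc)

lemma isAlg_singleton (v : σ → ℂ) : IsAlg ({v} : Set (σ → ℂ)) := by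
  refine ⟨Set.range (fun i => X i - C (v i)), ?_⟩
  ext x
  simp only [Set.mem_singleton_iff, zLocus, Set.mem_setOf_eq, Set.forall_mem_range]
  constructor
  · rintro rfl i; simp
  · intro h; funext i; have := h i; simpa [sub_eq_zero] using this

lemma isIrredV_singleton (v : σ → ℂ) : IsIrredV ({v} : Set (σ → ℂ)) := by
  refine ⟨⟨v, rfl⟩, ?_⟩
  intro T₁ T₂ _ _ hsub
  rcases hsub rfl with h | h
  · exact Or.inl (Set.singleton_subset_iff.2 h)
  · exact Or.inr (Set.singleton_subset_iff.2 h)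



variable {σ τ : Type*}

/-- product of sets of affine spaces -/
def sProd (A : Set (σ → ℂ)) (B : Set (τ → ℂ)) : Set (σ ⊕ τ → ℂ) :=
  {w | (fun i => w (Sum.inl i)) ∈ A ∧ (fun j => w (Sum.inr j)) ∈ B}

lemma pmap_elimL (y : τ → ℂ) (x : σ → ℂ) :
    PMap (Sum.elim X (fun j => C (y j)) : σ ⊕ τ → MvPolynomial σ ℂ) x = Sum.elim x y := by
  funext k; cases k <;> simp [PMap]

lemma pmap_elimR (x : σ → ℂ) (y : τ → ℂ) :
    PMap (Sum.elim (fun i => C (x i)) X : σ ⊕ τ → MvPolynomial τ ℂ) y = Sum.elim x y := by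
  funext k; cases k <;> simp [PMap]

lemma elim_eq (w : σ ⊕ τ → ℂ) : Sum.elim (fun i => w (Sum.inl i)) (fun j => w (Sum.inr j)) = w := by
  funext k; cases k <;> rfl

lemma isIrredV_sProd {A : Set (σ → ℂ)} {B : Set (τ → ℂ)}
    (hA : IsIrredV A) (hB : IsIrredV B) : IsIrredV (sProd A B) := by
  obtain ⟨⟨a, ha⟩, hAmain⟩ := hA
  obtain ⟨⟨b, hb⟩, hBmain⟩ := hB
  constructor
  · exact ⟨Sum.elim a b, by simpa [sProd] using ⟨ha, hb⟩⟩
  intro T₁ T₂ h₁ h₂ hsub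
  set Y : Fin 2 → Set (τ → ℂ) := fun n =>
    ⋂₀ ((fun x : σ → ℂ => (PMap (Sum.elim (fun i => C (x i)) X) ⁻¹' (if n = 0 then T₁ else T₂))) '' A)
    with hY
  have hYalg : ∀ n, IsAlg (Y n) := by
    intro n
    apply isAlg_sInter
    rintro _ ⟨x, hx, rfl⟩
    exact isAlg_preimage _ (by split <;> assumption)
  have hYmem : ∀ n (y : τ → ℂ), y ∈ Y n ↔ ∀ x ∈ A, Sum.elim x y ∈ (if n = 0 then T₁ else T₂) := by
    intro n y
    rw [hY]
    simp only [Set.mem_sInter, Set.forall_mem_image, Set.mem_preimage]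
    constructor
    · intro h x hx; have := h hx; rwa [pmap_elimR] at this
    · intro h x hx; rw [pmap_elimR]; exact h x hx
  have hBY : B ⊆ Y 0 ∪ Y 1 := by
    intro y hy
    have hsl : A ⊆ (PMap (Sum.elim X (fun j => C (y j))) ⁻¹' T₁) ∪
        (PMap (Sum.elim X (fun j => C (y j))) ⁻¹' T₂) := by
      intro x hx
      have : Sum.elim x y ∈ T₁ ∪ T₂ := hsub (by simpa [sProd] using ⟨hx, hy⟩)
      rcases this with h | h
      · exact Or.inl (by simpa [Set.mem_preimage, pmap_elimL] using h)
      · exact Or.inr (by simpa [Set.mem_preimage, pmap_elimL] using h)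
    rcases hAmain _ _ (isAlg_preimage _ h₁) (isAlg_preimage _ h₂) hsl with hc | hc
    · refine Or.inl ((hYmem 0 y).2 fun x hx => ?_)
      have := hc hx; simp only [Set.mem_preimage, pmap_elimL] at this; simpa using this
    · refine Or.inr ((hYmem 1 y).2 fun x hx => ?_)
      have := hc hx; simp only [Set.mem_preimage, pmap_elimL] at this; simpa using this
  rcases hBmain _ _ (hYalg 0) (hYalg 1) hBY with hc | hc
  · refine Or.inl ?_
    rintro w ⟨hw1, hw2⟩
    have := (hYmem 0 _).1 (hc hw2) _ hw1
    rwa [elim_eq] at this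
  · refine Or.inr ?_
    rintro w ⟨hw1, hw2⟩
    have := (hYmem 1 _).1 (hc hw2) _ hw1
    rwa [elim_eq] at this

lemma isIrredV_univ : IsIrredV (Set.univ : Set (τ → ℂ)) := by
  refine ⟨⟨0, trivial⟩, ?_⟩
  rintro T₁ T₂ ⟨I₁, rfl⟩ ⟨I₂, rfl⟩ hsub
  by_cases h₁ : Set.univ ⊆ zLocus I₁
  · exact Or.inl h₁
  right
  obtain ⟨v₁, -, hv₁⟩ : ∃ v₁ ∈ Set.univ, v₁ ∉ zLocus I₁ := Set.not_subset.mp h₁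
  obtain ⟨f₁, hf₁I, hf₁⟩ : ∃ f₁ ∈ I₁, eval v₁ f₁ ≠ 0 := by
    simpa [zLocus] using hv₁
  intro v₂ _
  by_contra hv₂
  obtain ⟨f₂, hf₂I, hf₂⟩ : ∃ f₂ ∈ I₂, eval v₂ f₂ ≠ 0 := by
    simpa [zLocus] using hv₂
  have hzero : ∀ w : τ → ℂ, eval w (f₁ * f₂) = 0 := by
    intro w
    rcases hsub (Set.mem_univ w) with h | h
    · rw [map_mul, h f₁ hf₁I, zero_mul]
    · rw [map_mul, h f₂ hf₂I, mul_zero]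
  have : f₁ * f₂ = 0 := by
    apply MvPolynomial.funext
    intro x; rw [hzero x, map_zero]
  rcases mul_eq_zero.mp this with h | h
  · exact hf₁ (by rw [h, map_zero])
  · exact hf₂ (by rw [h, map_zero])

/-- The vanishing ideal of a set. -/
def vI (T : Set (σ → ℂ)) : Ideal (MvPolynomial σ ℂ) where
  carrier := {f | ∀ v ∈ T, eval v f = 0}
  add_mem' := by intro f g hf hg v hv; simp [hf v hv, hg v hv]
  zero_mem' := by intro v hv; simp
  smul_mem' := by intro c f hf v hv; simp [smul_eq_mul, hf v hv]

lemma mem_vI {T : Set (σ → ℂ)} {f : MvPolynomial σ ℂ} : f ∈ vI T ↔ ∀ v ∈ T, eval v f = 0 :=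
  Iff.rfl

lemma zLocus_vI {T : Set (σ → ℂ)} (hT : IsAlg T) : zLocus (vI T : Set (MvPolynomial σ ℂ)) = T := by
  obtain ⟨I, rfl⟩ := hT
  apply subset_antisymm
  · intro x hx f hf
    exact hx f (fun v hv => hv f hf)
  · intro x hx f hf
    exact hf x hx

lemma vI_lt {T T' : Set (σ → ℂ)} (hT : IsAlg T) (hT' : IsAlg T') (h : T ⊂ T') : vI T' < vI T := by
  constructor
  · intro f hf v hv; exact hf v (h.1 hv)
  · intro hle
    have : vI T' = vI T := le_antisymm (fun f hf v hv => hf v (h.1 hv)) hle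
    have hTT : T = T' := by
      rw [← zLocus_vI hT, ← zLocus_vI hT', this]
    exact h.2 (le_of_eq hTT.symm)

lemma vI_prime {T : Set (σ → ℂ)} (h : IsIrredV T) : (vI T).IsPrime := by
  obtain ⟨⟨a, ha⟩, hmain⟩ := h
  constructor
  · intro htop
    have : (1 : MvPolynomial σ ℂ) ∈ vI T := htop ▸ Submodule.mem_top
    have := this a ha
    simp at this
  · intro f g hfg
    have hsub : T ⊆ zLocus {f} ∪ zLocus {g} := by
      intro v hv
      have := hfg v hv
      rw [map_mul] at this
      rcases mul_eq_zero.mp this with h | h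
      · exact Or.inl (by intro p hp; rwa [Set.mem_singleton_iff.mp hp])
      · exact Or.inr (by intro p hp; rwa [Set.mem_singleton_iff.mp hp])
    rcases hmain _ _ ⟨{f}, rfl⟩ ⟨{g}, rfl⟩ hsub with hc | hc
    · exact Or.inl (fun v hv => hc hv f rfl)
    · exact Or.inr (fun v hv => hc hv g rfl)



end Aux1

noncomputable section Aux2
variable {σ : Type*} [Fintype σ]

variable {σ : Type*} [Fintype σ]

def Indep (q : Ideal (MvPolynomial σ ℂ)) {n : ℕ} (f : Fin n → MvPolynomial σ ℂ) : Prop :=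
  ∀ P : MvPolynomial (Fin n) ℂ, aeval f P ∈ q → P = 0

lemma exists_dep {n : ℕ} (f : Fin n → MvPolynomial σ ℂ) (hn : Fintype.card σ < n) :
    ∃ P : MvPolynomial (Fin n) ℂ, P ≠ 0 ∧ aeval f P = 0 := by
  classical
  by_contra hcon
  push_neg at hcon
  set m := Fintype.card σ with hm
  set D := (Finset.univ.sup fun i => (f i).totalDegree) + 1 with hD
  have hn1 : 1 ≤ n := le_trans (Nat.succ_le_succ (Nat.zero_le m)) hn
  set t := (D * n) ^ m with ht
  set K := D * n * t with hK
  set ec : (Fin n → Fin (t + 1)) → (Fin n →₀ ℕ) :=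
    fun c => Finsupp.equivFunOnFinite.symm (fun i => (c i : ℕ)) with hec
  have hecapp : ∀ c i, ec c i = (c i : ℕ) := by
    intro c i; simp [hec]
  have hecinj : Function.Injective ec := by
    intro c c' h
    funext i
    have := congrArg (fun d : Fin n →₀ ℕ => d i) h
    simp only [hecapp] at this
    exact Fin.val_injective this
  set v : (Fin n → Fin (t + 1)) → MvPolynomial σ ℂ :=
    fun c => aeval f (monomial (ec c) (1 : ℂ)) with hv
  -- linear independence of the monomial images
  have hli : LinearIndependent ℂ v := by
    rw [Fintype.linearIndependent_iff]
    intro μ hμ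
    set P : MvPolynomial (Fin n) ℂ := ∑ c, μ c • monomial (ec c) (1 : ℂ) with hP
    have hPval : aeval f P = 0 := by
      have heq : aeval f P = ∑ c, μ c • v c := by
        rw [hP, map_sum]
        refine Finset.sum_congr rfl fun c _ => ?_
        simp only [map_smul, hv]
      rw [heq, hμ]
    have hP0 : P = 0 := by
      by_contra hne
      exact hcon P hne hPval
    intro c₀
    have hco := congrArg (coeff (ec c₀)) hP0
    rw [hP] at hco
    rw [coeff_sum] at hco
    simp only [coeff_smul, coeff_monomial, smul_eq_mul, coeff_zero] at hco
    rw [Finset.sum_eq_single c₀] at hco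
    · simpa using hco
    · intro c _ hc
      rw [if_neg (fun h => hc (hecinj h)), mul_zero]
    · intro h; exact absurd (Finset.mem_univ c₀) h
  -- the spanning monomial set
  set E : Finset (MvPolynomial σ ℂ) := Finset.image
    (fun e : σ → Fin (K + 1) =>
      (monomial (Finsupp.equivFunOnFinite.symm fun i => ((e i : ℕ))) (1 : ℂ))) Finset.univ with hE
  have hspan : ∀ g : MvPolynomial σ ℂ, g.totalDegree ≤ K →
      g ∈ Submodule.span ℂ (E : Set (MvPolynomial σ ℂ)) := by
    intro g hg
    rw [g.as_sum]
    apply Submodule.sum_mem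
    intro d hd
    have h1 : monomial d (coeff d g) = (coeff d g) • monomial d (1 : ℂ) := by
      rw [smul_monomial, smul_eq_mul, mul_one]
    rw [h1]
    apply Submodule.smul_mem
    apply Submodule.subset_span
    have hdK : ∀ i, d i ≤ K := by
      intro i
      have h2 : d i ≤ d.sum fun _ k => k := by
        by_cases hz : d i = 0
        · rw [hz]; exact Nat.zero_le _
        · have hi : i ∈ d.support := Finsupp.mem_support_iff.2 hz
          exact Finset.single_le_sum (f := fun j => d j) (fun j _ => Nat.zero_le _) hi
      exact h2.trans ((le_totalDegree hd).trans hg)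
    have : d = Finsupp.equivFunOnFinite.symm fun i =>
        (((⟨d i, Nat.lt_succ_of_le (hdK i)⟩ : Fin (K + 1)) : ℕ)) := by
      ext i
      simp
    rw [hE]
    simp only [Finset.coe_image, Set.mem_image, Finset.coe_univ, Set.mem_univ, true_and]
    exact ⟨fun i => ⟨d i, Nat.lt_succ_of_le (hdK i)⟩, by rw [← this]⟩
  -- degree bound on v c
  have hdeg : ∀ c, (v c).totalDegree ≤ K := by
    intro c
    have h1 : v c = ∏ i, f i ^ (c i : ℕ) := by
      show (aeval f) ((monomial (ec c)) (1 : ℂ)) = _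
      rw [aeval_monomial, map_one, one_mul]
      rw [Finsupp.prod_fintype _ _ (fun i => pow_zero (f i))]
      exact Finset.prod_congr rfl fun i _ => by rw [hecapp]
    rw [h1]
    calc (∏ i, f i ^ (c i : ℕ)).totalDegree
        ≤ ∑ i, (f i ^ (c i : ℕ)).totalDegree := totalDegree_finset_prod _ _
      _ ≤ ∑ _i : Fin n, t * D := by
          apply Finset.sum_le_sum
          intro i _
          calc (f i ^ (c i : ℕ)).totalDegree ≤ (c i : ℕ) * (f i).totalDegree :=
                totalDegree_pow _ _
            _ ≤ t * D := by
                apply Nat.mul_le_mul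
                · exact Nat.lt_succ_iff.mp (c i).2
                · refine le_trans (Finset.le_sup (f := fun i => (f i).totalDegree) (Finset.mem_univ i)) ?_
                  rw [hD]
                  omega
      _ = n * (t * D) := by rw [Finset.sum_const, Finset.card_univ, Fintype.card_fin, smul_eq_mul]
      _ = K := by rw [hK]; ring
  -- counting
  set W := Submodule.span ℂ (E : Set (MvPolynomial σ ℂ)) with hW
  set v' : (Fin n → Fin (t + 1)) → W := fun c => ⟨v c, hspan _ (hdeg c)⟩ with hv'
  have hli' : LinearIndependent ℂ v' := by
    apply LinearIndependent.of_comp W.subtype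
    have : W.subtype ∘ v' = v := rfl
    rw [this]
    exact hli
  have hcard1 : Fintype.card (Fin n → Fin (t + 1)) ≤ Module.finrank ℂ W :=
    hli'.fintype_card_le_finrank
  have hcard2 : Module.finrank ℂ W ≤ E.card := finrank_span_finset_le_card E
  have hcard3 : E.card ≤ (K + 1) ^ m := by
    calc E.card ≤ (Finset.univ : Finset (σ → Fin (K + 1))).card := Finset.card_image_le
      _ = (K + 1) ^ m := by
          rw [Finset.card_univ, Fintype.card_fun, Fintype.card_fin]
  have hcardeq : Fintype.card (Fin n → Fin (t + 1)) = (t + 1) ^ n := by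
    rw [Fintype.card_fun, Fintype.card_fin, Fintype.card_fin]
  -- arithmetic contradiction
  have hDn : 1 ≤ D * n := Nat.one_le_iff_ne_zero.2 (by positivity)
  have harith : (K + 1) ^ m < (t + 1) ^ n := by
    calc (K + 1) ^ m ≤ (D * n * (t + 1)) ^ m := by
          apply Nat.pow_le_pow_left
          have : D * n * (t + 1) = D * n * t + D * n := by ring
          omega
      _ = (D * n) ^ m * (t + 1) ^ m := by rw [mul_pow]
      _ = t * (t + 1) ^ m := by rw [← ht]
      _ < (t + 1) * (t + 1) ^ m := by
          exact mul_lt_mul_of_pos_right (lt_add_one t) (by positivity)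
      _ = (t + 1) ^ (m + 1) := by ring
      _ ≤ (t + 1) ^ n := Nat.pow_le_pow_right (Nat.le_add_left _ _) hn
  omega



variable {σ : Type*} [Fintype σ]

lemma aeval_cons {d : ℕ} (g : MvPolynomial σ ℂ) (f : Fin d → MvPolynomial σ ℂ)
    (P : MvPolynomial (Fin (d + 1)) ℂ) :
    aeval (Fin.cons g f) P =
      Polynomial.eval₂ (aeval f : MvPolynomial (Fin d) ℂ →ₐ[ℂ] MvPolynomial σ ℂ).toRingHom g
        (finSuccEquiv ℂ d P) := by
  set L : MvPolynomial (Fin (d + 1)) ℂ →+* MvPolynomial σ ℂ :=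
    (aeval (Fin.cons g f : Fin (d + 1) → MvPolynomial σ ℂ)).toRingHom with hL
  set Rh : MvPolynomial (Fin (d + 1)) ℂ →+* MvPolynomial σ ℂ :=
    (Polynomial.eval₂RingHom (aeval f : MvPolynomial (Fin d) ℂ →ₐ[ℂ] MvPolynomial σ ℂ).toRingHom
      g).comp (finSuccEquiv ℂ d).toAlgHom.toRingHom with hR
  have hLR : L = Rh := by
    apply MvPolynomial.ringHom_ext
    · intro r
      have hC : (MvPolynomial.finSuccEquiv ℂ d) (C r) = Polynomial.C (C r) := by
        have h := RingHom.congr_fun (finSuccEquiv_comp_C_eq_C (R := ℂ) d) r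
        simp only [RingHom.coe_comp, Function.comp_apply] at h
        have h2 := congrArg (MvPolynomial.finSuccEquiv ℂ d) h
        simpa using h2.symm
      simp [hL, hR, hC]
    · intro i
      refine Fin.cases ?_ ?_ i
      · simp [hL, hR, finSuccEquiv_X_zero]
      · intro j
        simp [hL, hR, finSuccEquiv_X_succ]
  exact RingHom.congr_fun hLR P

lemma indep_cons {p q : Ideal (MvPolynomial σ ℂ)} (hp : p.IsPrime) (hpq : p ≤ q)
    {g : MvPolynomial σ ℂ} (hgq : g ∈ q) (hgp : g ∉ p) {d : ℕ}
    {f : Fin d → MvPolynomial σ ℂ} (hf : Indep q f) : Indep p (Fin.cons g f) := by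
  have key : ∀ (k : ℕ) (Q : Polynomial (MvPolynomial (Fin d) ℂ)), Q.natDegree ≤ k →
      Polynomial.eval₂ (aeval f).toRingHom g Q ∈ p → Q = 0 := by
    intro k
    induction k with
    | zero =>
      intro Q hQdeg hQ
      have hQC : Q = Polynomial.C (Q.coeff 0) := Polynomial.eq_C_of_natDegree_le_zero hQdeg
      rw [hQC] at hQ ⊢
      rw [Polynomial.eval₂_C] at hQ
      rw [hf _ (hpq hQ)]
      simp
    | succ k ih =>
      intro Q hQdeg hQ
      have hsplit : Polynomial.X * Q.divX + Polynomial.C (Q.coeff 0) = Q :=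
        Polynomial.X_mul_divX_add Q
      have heval : Polynomial.eval₂ (aeval f).toRingHom g Q
          = g * Polynomial.eval₂ (aeval f).toRingHom g Q.divX + aeval f (Q.coeff 0) := by
        conv_lhs => rw [← hsplit]
        rw [Polynomial.eval₂_add, Polynomial.eval₂_mul, Polynomial.eval₂_X, Polynomial.eval₂_C]
        rfl
      have hc0 : Q.coeff 0 = 0 := by
        apply hf
        have h1 : aeval f (Q.coeff 0) = Polynomial.eval₂ (aeval f).toRingHom g Q
            - g * Polynomial.eval₂ (aeval f).toRingHom g Q.divX := by rw [heval]; ring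
        rw [h1]
        exact Submodule.sub_mem _ (hpq hQ) (Ideal.mul_mem_right _ _ hgq)
      have hdivp : Polynomial.eval₂ (aeval f).toRingHom g Q.divX ∈ p := by
        have h2 : g * Polynomial.eval₂ (aeval f).toRingHom g Q.divX ∈ p := by
          rw [hc0] at heval
          simp only [map_zero, add_zero] at heval
          rw [← heval]
          exact hQ
        rcases hp.mem_or_mem h2 with h | h
        · exact absurd h hgp
        · exact h
      have hdiv0 : Q.divX = 0 := by
        refine ih Q.divX ?_ hdivp
        have := Polynomial.natDegree_divX_eq_natDegree_tsub_one (p := Q)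
        omega
      rw [← hsplit, hdiv0, hc0]
      simp
  intro P hP
  rw [aeval_cons] at hP
  have hQ0 : finSuccEquiv ℂ d P = 0 := key (finSuccEquiv ℂ d P).natDegree _ le_rfl hP
  have := congrArg (finSuccEquiv ℂ d).symm hQ0
  simpa using this

def dSet (q : Ideal (MvPolynomial σ ℂ)) : Set ℕ :=
  {n | ∃ f : Fin n → MvPolynomial σ ℂ, Indep q f}

noncomputable def dInv (q : Ideal (MvPolynomial σ ℂ)) : ℕ := sSup (dSet q)

lemma dSet_le (q : Ideal (MvPolynomial σ ℂ)) : ∀ k ∈ dSet q, k ≤ Fintype.card σ := by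
  intro k hk
  by_contra hgt
  push_neg at hgt
  obtain ⟨f, hf⟩ := hk
  obtain ⟨P, hP0, hPval⟩ := exists_dep f hgt
  exact hP0 (hf P (by rw [hPval]; exact q.zero_mem))

lemma dSet_bdd (q : Ideal (MvPolynomial σ ℂ)) : BddAbove (dSet q) :=
  ⟨Fintype.card σ, fun k hk => dSet_le q k hk⟩

lemma zero_mem_dSet {q : Ideal (MvPolynomial σ ℂ)} (hq : q ≠ ⊤) : 0 ∈ dSet q := by
  refine ⟨fun i => i.elim0, ?_⟩
  intro P hP
  have hPC : P = C (constantCoeff P) := (eq_C_of_isEmpty P)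
  rw [hPC] at hP
  rw [aeval_C] at hP
  by_cases hc : constantCoeff P = 0
  · rw [hPC, hc, map_zero]
  · exfalso
    apply hq
    rw [Ideal.eq_top_iff_one]
    have := q.mul_mem_left (algebraMap ℂ (MvPolynomial σ ℂ) (constantCoeff P)⁻¹) hP
    rw [← map_mul, inv_mul_cancel₀ hc, map_one] at this
    exact this

lemma dInv_mem {q : Ideal (MvPolynomial σ ℂ)} (hq : q ≠ ⊤) : dInv q ∈ dSet q :=
  Nat.sSup_mem ⟨0, zero_mem_dSet hq⟩ (dSet_bdd q)

lemma dInv_le {q : Ideal (MvPolynomial σ ℂ)} (hq : q ≠ ⊤) : dInv q ≤ Fintype.card σ :=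
  dSet_le q _ (dInv_mem hq)

lemma dInv_lt {p q : Ideal (MvPolynomial σ ℂ)} (hp : p.IsPrime) (hq : q ≠ ⊤)
    (hlt : p < q) : dInv q < dInv p := by
  obtain ⟨f, hf⟩ := dInv_mem hq
  obtain ⟨g, hgq, hgp⟩ := SetLike.exists_of_lt hlt
  have hcons : Indep p (Fin.cons g f) := indep_cons hp hlt.le hgq hgp hf
  have : dInv q + 1 ∈ dSet p := ⟨Fin.cons g f, hcons⟩
  have hle := le_csSup (dSet_bdd p) this
  exact lt_of_lt_of_le (Nat.lt_succ_self _) hle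



lemma vI_ne_top {T : Set (σ → ℂ)} (hT : T.Nonempty) : vI T ≠ ⊤ := by
  intro h
  obtain ⟨a, ha⟩ := hT
  have h1 : (1 : MvPolynomial σ ℂ) ∈ vI T := by rw [h]; trivial
  have := h1 a ha
  simp at this

lemma length_le_card {A : Set (σ → ℂ)}
    (p : LTSeries {T : Set (σ → ℂ) // IsAlg T ∧ IsIrredV T ∧ T ⊆ A}) :
    p.length ≤ Fintype.card σ := by
  have hD : StrictMono (fun x : {T : Set (σ → ℂ) // IsAlg T ∧ IsIrredV T ∧ T ⊆ A} =>
      dInv (vI x.1)) := by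
    intro x y hxy
    have hss : x.1 ⊂ y.1 := Subtype.coe_lt_coe.mpr hxy
    exact dInv_lt (vI_prime y.2.2.1) (vI_ne_top x.2.2.1.1) (vI_lt x.2.1 y.2.1 hss)
  set q := p.map _ hD with hq
  have h0 := LTSeries.apply_add_index_le_apply_add_index_nat q 0 (Fin.last _) (Fin.zero_le _)
  have hlast : q (Fin.last _) ≤ Fintype.card σ := by
    exact dInv_le (vI_ne_top ((p (Fin.last _)).2.2.1.1))
  simp only [Fin.val_last, Fin.val_zero, add_zero] at h0
  have hql : q.length = p.length := rfl
  omega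

lemma adim_le_card (A : Set (σ → ℂ)) :
    adim A ≤ ((Fintype.card σ : ℕ∞) : WithBot ℕ∞) := by
  rw [adim]
  rcases isEmpty_or_nonempty {T : Set (σ → ℂ) // IsAlg T ∧ IsIrredV T ∧ T ⊆ A} with hem | hne
  · rw [Order.krullDim_eq_bot]
    exact bot_le
  · rw [Order.krullDim_eq_iSup_length]
    exact WithBot.coe_le_coe.mpr (iSup_le fun p => by exact_mod_cast length_le_card p)

end Aux2

section Aux3

lemma exists_length_eq {α : Type*} [Preorder α] {n : ℕ}
    (h : Order.krullDim α = ((n : ℕ∞) : WithBot ℕ∞)) :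
    ∃ p : LTSeries α, p.length = n := by
  have hne : Nonempty α := by
    by_contra hem
    rw [not_nonempty_iff] at hem
    rw [Order.krullDim_eq_bot] at h
    exact absurd h (by simp)
  rw [Order.krullDim_eq_iSup_length] at h
  have h' : (⨆ p : LTSeries α, (p.length : ℕ∞)) = (n : ℕ∞) := by exact_mod_cast h
  by_contra hcon
  push_neg at hcon
  have hle : ∀ p : LTSeries α, (p.length : ℕ∞) ≤ (n : ℕ∞) := fun p =>
    h' ▸ le_iSup (fun p : LTSeries α => (p.length : ℕ∞)) p
  have hlt : ∀ p : LTSeries α, p.length ≤ n := fun p => by exact_mod_cast hle p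
  rcases Nat.eq_zero_or_pos n with h0 | hpos
  · obtain ⟨a⟩ := hne
    exact hcon (RelSeries.singleton _ a) (by simp [h0, RelSeries.singleton])
  · have hle' : ∀ p : LTSeries α, (p.length : ℕ∞) ≤ ((n - 1 : ℕ) : ℕ∞) := by
      intro p
      have h1 := hlt p
      have h2 := hcon p
      exact Nat.cast_le.mpr (by omega)
    have h3 := iSup_le hle'
    rw [h'] at h3
    have h4 : n ≤ n - 1 := by exact_mod_cast h3
    omega

end Aux3

/-- an irreducible projective variety whose secant variety has
dimension `dim S + 1` has a linear secant variety. (Stated for affine cones: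
cone dimensions also differ by one.) -/
theorem stmt1 {N : ℕ} (S : Set (Fin (N + 1) → ℂ))
    (halg : IsAlg S) (hirr : IsIrredV S)
    (hcone : ∀ c : ℂ, ∀ v ∈ S, c • v ∈ S) (h0 : ∃ v ∈ S, v ≠ 0)
    (hdim : adim (secantV S) = adim S + 1) :
    ∃ W : Submodule ℂ (Fin (N + 1) → ℂ), secantV S = ↑W := by
  classical
  obtain ⟨v0, hv0S, hv0⟩ := h0
  set Sig : Set (Fin (N + 1) → ℂ) := {v | ∃ x ∈ S, ∃ y ∈ S, ∃ a b : ℂ, v = a • x + b • y}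
    with hSigdef
  have hsec : secantV S = zcl Sig := rfl
  have hSsub : S ⊆ Sig := fun x hx => ⟨x, hx, x, hx, 1, 0, by simp⟩
  have hSsec : S ⊆ secantV S := hsec ▸ (hSsub.trans (subset_zcl _))
  -- Sig is the polynomial image of S × S × ℂ²
  have hSigIrr : IsIrredV Sig := by
    have himg : Sig = PMap (fun i : Fin (N + 1) =>
        (X (Sum.inl (Sum.inl i)) * X (Sum.inr 0) + X (Sum.inl (Sum.inr i)) * X (Sum.inr 1)
          : MvPolynomial ((Fin (N + 1) ⊕ Fin (N + 1)) ⊕ Fin 2) ℂ)) ''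
        (sProd (sProd S S) (Set.univ : Set (Fin 2 → ℂ))) := by
      ext v
      constructor
      · rintro ⟨x, hx, y, hy, a, b, rfl⟩
        refine ⟨Sum.elim (Sum.elim x y) ![a, b], ⟨⟨hx, hy⟩, trivial⟩, ?_⟩
        funext i
        simp [PMap, Matrix.cons_val_zero, Matrix.cons_val_one]
        ring
      · rintro ⟨w, ⟨⟨hx, hy⟩, -⟩, rfl⟩
        refine ⟨_, hx, _, hy, w (Sum.inr 0), w (Sum.inr 1), ?_⟩
        funext i
        simp [PMap]
        ring
    rw [himg]
    exact isIrredV_image _ (isIrredV_sProd (isIrredV_sProd hirr hirr) isIrredV_univ)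
  have hSecIrr : IsIrredV (secantV S) := hsec ▸ hSigIrr.zcl
  have hSecAlg : IsAlg (secantV S) := hsec ▸ isAlg_zcl _
  -- translation invariance of the secant variety
  have htrans : ∀ x ∈ S, ∀ c : ℂ, ∀ u ∈ secantV S, u + c • x ∈ secantV S := by
    intro x hx c u hu
    have hpm : ∀ u : Fin (N + 1) → ℂ,
        PMap (fun i => X i + C ((c • x) i) : Fin (N + 1) → MvPolynomial (Fin (N + 1)) ℂ) u
          = u + c • x := by
      intro u; funext i; simp [PMap]
    by_cases hbad : ∀ s ∈ S, ∀ a b : ℂ, a • x + b • s ∈ S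
    · -- "cone point" case : translation maps Sig into Sig
      have hmap : ∀ w ∈ Sig, w + c • x ∈ Sig := by
        rintro w ⟨y, hy, z, hz, a, b, rfl⟩
        refine ⟨c • x + a • y, hbad y hy c a, z, hz, 1, b, ?_⟩
        module
      rw [hsec] at hu ⊢
      have := pmap_zcl (F := (fun i => X i + C ((c • x) i))) (B := Sig)
        (fun w hw => by rw [hpm]; exact hmap w hw) u hu
      rwa [hpm] at this
    · -- the cone over S with vertex x fills up the secant variety
      push_neg at hbad
      obtain ⟨s0, hs0, a0, b0, hnot⟩ := hbad
      set SigX : Set (Fin (N + 1) → ℂ) := {w | ∃ s ∈ S, ∃ a b : ℂ, w = a • x + b • s}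
        with hSigXdef
      set Cx := zcl SigX with hCxdef
      have hSsubX : S ⊆ SigX := fun s hs => ⟨s, hs, 0, 1, by simp⟩
      have hSCx : S ⊆ Cx := hSsubX.trans (subset_zcl _)
      have hXsubSig : SigX ⊆ Sig := by
        rintro w ⟨s, hs, a, b, rfl⟩
        exact ⟨x, hx, s, hs, a, b, rfl⟩
      have hCxSec : Cx ⊆ secantV S := hsec ▸ zcl_mono hXsubSig
      have hCxIrr : IsIrredV Cx := by
        have himg : SigX = PMap (fun i : Fin (N + 1) =>
            (C (x i) * X (Sum.inr 0) + X (Sum.inl i) * X (Sum.inr 1)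
              : MvPolynomial (Fin (N + 1) ⊕ Fin 2) ℂ)) ''
            (sProd S (Set.univ : Set (Fin 2 → ℂ))) := by
          ext w
          constructor
          · rintro ⟨s, hs, a, b, rfl⟩
            refine ⟨Sum.elim s ![a, b], ⟨hs, trivial⟩, ?_⟩
            funext i
            simp [PMap, Matrix.cons_val_zero, Matrix.cons_val_one]
            ring
          · rintro ⟨w, ⟨hs, -⟩, rfl⟩
            refine ⟨_, hs, w (Sum.inr 0), w (Sum.inr 1), ?_⟩
            funext i
            simp [PMap]
            ring
        rw [hCxdef, himg]
        exact (isIrredV_image _ (isIrredV_sProd hirr isIrredV_univ)).zcl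
      have hCxAlg : IsAlg Cx := isAlg_zcl _
      have hSCxne : S ⊂ Cx :=
        ⟨hSCx, fun hsub2 => hnot (hsub2 (subset_zcl _ ⟨s0, hs0, a0, b0, rfl⟩))⟩
      have hCeq : Cx = secantV S := by
        by_contra hne
        have hClt : Cx ⊂ secantV S := ⟨hCxSec, fun h2 => hne (subset_antisymm hCxSec h2)⟩
        have hnonempty : Nonempty {T : Set (Fin (N + 1) → ℂ) // IsAlg T ∧ IsIrredV T ∧ T ⊆ S} :=
          ⟨⟨{v0}, isAlg_singleton v0, isIrredV_singleton v0, by simpa using hv0S⟩⟩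
        -- adim S is a natural number
        obtain ⟨n, hn⟩ : ∃ n : ℕ, adim S = ((n : ℕ∞) : WithBot ℕ∞) := by
          have hrep : adim S = (((⨆ p : LTSeries {T : Set (Fin (N + 1) → ℂ) //
              IsAlg T ∧ IsIrredV T ∧ T ⊆ S}, (p.length : ℕ∞)) : ℕ∞) : WithBot ℕ∞) :=
            Order.krullDim_eq_iSup_length
          have hetop : (⨆ p : LTSeries {T : Set (Fin (N + 1) → ℂ) //
              IsAlg T ∧ IsIrredV T ∧ T ⊆ S}, (p.length : ℕ∞)) ≠ ⊤ := by
            have hle : (⨆ p : LTSeries {T : Set (Fin (N + 1) → ℂ) //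
                IsAlg T ∧ IsIrredV T ∧ T ⊆ S}, (p.length : ℕ∞))
                ≤ ((Fintype.card (Fin (N + 1)) : ℕ) : ℕ∞) :=
              iSup_le fun p => Nat.cast_le.mpr (length_le_card p)
            intro htop
            rw [htop, top_le_iff] at hle
            exact ENat.coe_ne_top _ hle
          obtain ⟨n, hne⟩ := WithTop.ne_top_iff_exists.mp hetop
          exact ⟨n, by rw [hrep, ← hne]; rfl⟩
        obtain ⟨p, hp⟩ := exists_length_eq (α := {T : Set (Fin (N + 1) → ℂ) //
          IsAlg T ∧ IsIrredV T ∧ T ⊆ S}) (n := n) hn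
        set incl : {T : Set (Fin (N + 1) → ℂ) // IsAlg T ∧ IsIrredV T ∧ T ⊆ S} →
            {T : Set (Fin (N + 1) → ℂ) // IsAlg T ∧ IsIrredV T ∧ T ⊆ secantV S} :=
          fun x => ⟨x.1, x.2.1, x.2.2.1, x.2.2.2.trans hSsec⟩ with hincl
        have hinclmono : StrictMono incl := by
          intro a b hab
          exact Subtype.coe_lt_coe.mp (Subtype.coe_lt_coe.mpr hab)
        set p1 := p.map incl hinclmono with hp1
        have hrel1 : p1.last < ⟨Cx, hCxAlg, hCxIrr, hCxSec⟩ := by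
          apply Subtype.coe_lt_coe.mp
          exact lt_of_le_of_lt (p.last.2.2.2 : (p1.last).1 ≤ S) hSCxne
        set p2 := p1.snoc _ hrel1 with hp2
        have hrel2 : p2.last < ⟨secantV S, hSecAlg, hSecIrr, subset_rfl⟩ := by
          apply Subtype.coe_lt_coe.mp
          rw [hp2, RelSeries.last_snoc]
          exact hClt
        set p3 := p2.snoc _ hrel2 with hp3
        have hlen := Order.LTSeries.length_le_krullDim p3
        have hlen3 : p3.length = n + 2 := by
          rw [hp3, RelSeries.snoc_length, hp2, RelSeries.snoc_length]
          have : p1.length = p.length := rfl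
          omega
        rw [hlen3] at hlen
        have hkrull : Order.krullDim {T : Set (Fin (N + 1) → ℂ) //
            IsAlg T ∧ IsIrredV T ∧ T ⊆ secantV S} = adim (secantV S) := rfl
        rw [hkrull, hdim, hn] at hlen
        have hcast : (((n : ℕ∞) : WithBot ℕ∞) + 1) = (((n + 1 : ℕ) : ℕ∞) : WithBot ℕ∞) := by
          rw [Nat.cast_add, Nat.cast_one, WithBot.coe_add, WithBot.coe_one]
        replace hlen : ((n + 2 : ℕ) : WithBot ℕ∞) ≤ ((n : ℕ∞) : WithBot ℕ∞) + 1 := hlen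
        rw [hcast] at hlen
        have h3 : n + 2 ≤ n + 1 := by
          replace hlen : (((n + 2 : ℕ) : ℕ∞) : WithBot ℕ∞) ≤ (((n + 1 : ℕ) : ℕ∞) : WithBot ℕ∞) := hlen
          have hdd : ((n + 2 : ℕ) : ℕ∞) ≤ ((n + 1 : ℕ) : ℕ∞) := WithBot.coe_le_coe.mp hlen
          exact_mod_cast hdd
        omega
      -- now translate inside Cx
      have hmapX : ∀ w ∈ SigX, w + c • x ∈ SigX := by
        rintro w ⟨s, hs, a, b, rfl⟩
        refine ⟨s, hs, a + c, b, ?_⟩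
        module
      rw [← hCeq] at hu ⊢
      rw [hCxdef] at hu ⊢
      have := pmap_zcl (F := (fun i => X i + C ((c • x) i))) (B := SigX)
        (fun w hw => by rw [hpm]; exact hmapX w hw) u hu
      rwa [hpm] at this
  -- the span of S is algebraic
  set W := Submodule.span ℂ S with hW
  have hWalg : IsAlg (W : Set (Fin (N + 1) → ℂ)) := by
    refine ⟨(fun ℓ : Module.Dual ℂ (Fin (N + 1) → ℂ) =>
      ∑ i, C (ℓ (Pi.single i 1)) * X i) '' (W.dualAnnihilator : Set _), ?_⟩
    have heval : ∀ (ℓ : Module.Dual ℂ (Fin (N + 1) → ℂ)) (u : Fin (N + 1) → ℂ),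
        eval u (∑ i, C (ℓ (Pi.single i 1)) * X i) = ℓ u := by
      intro ℓ u
      rw [map_sum]
      have hu' : ℓ u = ℓ (∑ i, Pi.single i (u i)) := by rw [Finset.univ_sum_single]
      rw [hu', map_sum]
      refine Finset.sum_congr rfl fun i _ => ?_
      have hsingle : (Pi.single i (u i) : Fin (N + 1) → ℂ)
          = u i • (Pi.single i (1 : ℂ) : Fin (N + 1) → ℂ) := by
        funext j
        by_cases hji : j = i
        · subst hji; simp
        · simp [Pi.single_eq_of_ne hji]
      rw [hsingle, map_smul]
      simp [mul_comm]
    apply subset_antisymm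
    · intro u hu
      rintro f ⟨ℓ, hℓ, rfl⟩
      rw [heval]
      exact (Submodule.mem_dualAnnihilator ℓ).mp hℓ u hu
    · intro u hu
      have : u ∈ Submodule.dualCoannihilator (W.dualAnnihilator) := by
        rw [Submodule.mem_dualCoannihilator]
        intro ℓ hℓ
        have := hu _ ⟨ℓ, hℓ, rfl⟩
        rwa [heval] at this
      rwa [Subspace.dualAnnihilator_dualCoannihilator_eq] at this
  have hSecW : secantV S ⊆ (W : Set (Fin (N + 1) → ℂ)) := by
    rw [hsec]
    apply zcl_le hWalg
    rintro w ⟨xx, hxx, yy, hyy, a, b, rfl⟩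
    exact W.add_mem (W.smul_mem _ (Submodule.subset_span hxx))
      (W.smul_mem _ (Submodule.subset_span hyy))
  have hzero : (0 : Fin (N + 1) → ℂ) ∈ secantV S := by
    rw [hsec]
    exact subset_zcl _ ⟨v0, hv0S, v0, hv0S, 0, 0, by simp⟩
  have hWSec : (W : Set (Fin (N + 1) → ℂ)) ⊆ secantV S := by
    intro u hu
    rw [hW, SetLike.mem_coe, Submodule.mem_span_set'] at hu
    obtain ⟨k, cf, gf, hsum⟩ := hu
    have key : ∀ (k : ℕ) (cf : Fin k → ℂ) (gf : Fin k → S),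
        (∑ i, cf i • (gf i : Fin (N + 1) → ℂ)) ∈ secantV S := by
      intro k
      induction k with
      | zero => intro _ _; simpa using hzero
      | succ k ih =>
        intro cf gf
        rw [Fin.sum_univ_succ]
        have h1 := ih (fun i => cf i.succ) (fun i => gf i.succ)
        have h2 := htrans (gf 0 : Fin (N + 1) → ℂ) (gf 0).2 (cf 0) _ h1
        simpa [add_comm] using h2
    rw [← hsum]
    exact key k cf gf
  exact ⟨W, subset_antisymm hSecW hWSec⟩
end

section
/- For the cubic threefold X ⊂ P^4 defined by F = x_0 x_1 x_2 + x_0^2 x_4 + x_1^2 x_3, the Gauss map has one-dimensional general fibers; more precisely, on the affine chart x_0 = 1, the Gauss map sends (x_1, x_2, x_3) to (x_1x_2 + 2x_1^2x_3, −x_2 − 2x_1x_3, −x_1, −x_1^2) ∈ A^4, and its image is 2-dimensional, so the dual defect of X equals 1. -/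
open MvPolynomial

/-- The Perazzo cubic threefold `x₀x₁x₂ + x₀²x₄ + x₁²x₃` in `ℙ⁴`. -/
noncomputable def perazzoCubic : MvPolynomial (Fin 5) ℂ :=
  MvPolynomial.X 0 * MvPolynomial.X 1 * MvPolynomial.X 2
    + MvPolynomial.X 0 ^ 2 * MvPolynomial.X 4 + MvPolynomial.X 1 ^ 2 * MvPolynomial.X 3

noncomputable section S5Proof
namespace S5T
open MvPolynomial Set

variable {σ : Type*}

theorem mem_zcl_iff {S : Set (σ → ℂ)} {x} :
    x ∈ zcl S ↔ ∀ T, IsAlg T → S ⊆ T → x ∈ T := by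
  simp [zcl, Set.mem_sInter, Set.mem_setOf_eq, and_imp]

theorem subset_zcl (S : Set (σ → ℂ)) : S ⊆ zcl S := by
  intro x hx
  rw [mem_zcl_iff]
  exact fun T _ hST => hST hx

theorem zcl_subset {S T : Set (σ → ℂ)} (hT : IsAlg T) (h : S ⊆ T) : zcl S ⊆ T :=
  fun _ hx => (mem_zcl_iff.1 hx) T hT h

theorem zcl_mono {S S' : Set (σ → ℂ)} (h : S ⊆ S') : zcl S ⊆ zcl S' := by
  intro x hx
  rw [mem_zcl_iff] at hx ⊢
  exact fun T hT hS'T => hx T hT (h.trans hS'T)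

/-- The Zariski closure is the zero locus of the vanishing ideal. -/
theorem zcl_eq (S : Set (σ → ℂ)) : zcl S = zLocus {f | ∀ x ∈ S, eval x f = 0} := by
  apply Set.Subset.antisymm
  · exact zcl_subset ⟨_, rfl⟩ (fun x hx f hf => hf x hx)
  · intro x hx
    rw [mem_zcl_iff]
    rintro T ⟨I, rfl⟩ hST
    exact fun f hfI => hx f (fun y hy => hST hy f hfI)

theorem isAlg_zcl (S : Set (σ → ℂ)) : IsAlg (zcl S) := ⟨_, zcl_eq S⟩

theorem zcl_of_isAlg {T : Set (σ → ℂ)} (hT : IsAlg T) : zcl T = T :=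
  Set.Subset.antisymm (zcl_subset hT subset_rfl) (subset_zcl T)

theorem isIrredV_zcl {S : Set (σ → ℂ)} (hS : IsIrredV S) : IsIrredV (zcl S) := by
  refine ⟨hS.1.mono (subset_zcl S), fun T₁ T₂ h₁ h₂ hsub => ?_⟩
  rcases hS.2 T₁ T₂ h₁ h₂ ((subset_zcl S).trans hsub) with h | h
  · exact Or.inl (zcl_subset h₁ h)
  · exact Or.inr (zcl_subset h₂ h)

/-- vanishing ideal of an irreducible set is prime. -/
theorem isPrime_vanishingIdeal {T : Set (σ → ℂ)} (hT : IsIrredV T) :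
    (vanishingIdeal ℂ T).IsPrime := by
  rw [Ideal.isPrime_iff]
  constructor
  · intro h
    obtain ⟨x, hx⟩ := hT.1
    have : (1 : MvPolynomial σ ℂ) ∈ vanishingIdeal ℂ T := h ▸ Submodule.mem_top
    simpa using (mem_vanishingIdeal_iff.1 this) x hx
  · intro f g hfg
    have hsub : T ⊆ zLocus {f} ∪ zLocus {g} := by
      intro x hx
      have := (mem_vanishingIdeal_iff.1 hfg) x hx
      rw [map_mul] at this
      rcases mul_eq_zero.1 this with h | h
      · exact Or.inl (fun f' hf' => by rwa [Set.mem_singleton_iff.1 hf'])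
      · exact Or.inr (fun f' hf' => by rwa [Set.mem_singleton_iff.1 hf'])
    rcases hT.2 _ _ ⟨_, rfl⟩ ⟨_, rfl⟩ hsub with h | h
    · exact Or.inl (mem_vanishingIdeal_iff.2 fun x hx => h hx f rfl)
    · exact Or.inr (mem_vanishingIdeal_iff.2 fun x hx => h hx g rfl)

/-- An algebraic set is the zero locus (Mathlib's) of its vanishing ideal. -/
theorem eq_zeroLocus_vanishingIdeal {T : Set (σ → ℂ)} (hT : IsAlg T) :
    T = MvPolynomial.zeroLocus ℂ (vanishingIdeal ℂ T) := by
  obtain ⟨I, rfl⟩ := hT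
  apply Set.Subset.antisymm (zeroLocus_vanishingIdeal_le _)
  intro x hx f hf
  exact mem_zeroLocus_iff.1 hx f (mem_vanishingIdeal_iff.2 fun y hy => hy f hf)

theorem vanishingIdeal_strict_anti {T T' : Set (σ → ℂ)} (hT : IsAlg T) (hT' : IsAlg T')
    (h : T < T') : vanishingIdeal ℂ T' < vanishingIdeal ℂ T := by
  refine lt_of_le_of_ne (vanishingIdeal_anti_mono h.le) fun he => ?_
  have : T = T' := by
    rw [eq_zeroLocus_vanishingIdeal hT, eq_zeroLocus_vanishingIdeal hT', he]
  exact h.ne this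


variable {n N : ℕ}

def pmap (p : Fin N → MvPolynomial (Fin n) ℂ) (x : Fin n → ℂ) : Fin N → ℂ :=
  fun i => eval x (p i)

theorem eval_pmap (p : Fin N → MvPolynomial (Fin n) ℂ) (x : Fin n → ℂ)
    (f : MvPolynomial (Fin N) ℂ) : eval (pmap p x) f = eval x (aeval p f) := by
  induction f using MvPolynomial.induction_on with
  | C a => simp [pmap]
  | add f g hf hg => simp [hf, hg]
  | mul_X f i hf => simp [hf, pmap]

theorem cl_core {A : Type*} [CommRing A] : ∀ (m : ℕ) (q : ℕ → Ideal A)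
    (_ : ∀ i, (q i).IsPrime) (_ : ∀ i, q i ≤ q (i + 1))
    (g : ℕ → A) (a : ℕ → ℕ) (h : ℕ → A) (c : A) (_ : c ∉ q m)
    (_ : ∀ j < m, g j ∈ q (j + 1)) (_ : ∀ j < m, g j ∉ q j)
    (_ : c * ∏ j ∈ Finset.range m, g j ^ a j
        + ∑ j ∈ Finset.range m, (∏ i ∈ Finset.range j, g i ^ a i) * (g j ^ (a j + 1) * h j)
        ∈ q 0), False := by
  intro m
  induction m with
  | zero => intro q _ _ g a h c hc _ _ hmem; simp at hmem; exact hc hmem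
  | succ m ih =>
    intro q hq hmono g a h c hc hg1 hg2 hmem
    set P' := ∏ j ∈ Finset.range m, g (j+1) ^ a (j+1) with hP'
    set S' := ∑ j ∈ Finset.range m, (∏ i ∈ Finset.range j, g (i+1) ^ a (i+1))
        * (g (j+1) ^ (a (j+1) + 1) * h (j+1)) with hS'
    have key : g 0 ^ a 0 * (c * P' + (g 0 * h 0 + S')) ∈ q 0 := by
      have e1 : ∏ j ∈ Finset.range (m+1), g j ^ a j = P' * g 0 ^ a 0 :=
        Finset.prod_range_succ' _ m
      have e2 : ∑ j ∈ Finset.range (m+1),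
            (∏ i ∈ Finset.range j, g i ^ a i) * (g j ^ (a j + 1) * h j)
          = (∑ j ∈ Finset.range m, (∏ i ∈ Finset.range (j+1), g i ^ a i)
              * (g (j+1) ^ (a (j+1) + 1) * h (j+1))) + g 0 ^ (a 0 + 1) * h 0 := by
        simpa using Finset.sum_range_succ'
          (fun j => (∏ i ∈ Finset.range j, g i ^ a i) * (g j ^ (a j + 1) * h j)) m
      have e3 : ∀ j, (∏ i ∈ Finset.range (j+1), g i ^ a i)
            * (g (j+1) ^ (a (j+1) + 1) * h (j+1))
          = g 0 ^ a 0 * ((∏ i ∈ Finset.range j, g (i+1) ^ a (i+1))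
              * (g (j+1) ^ (a (j+1) + 1) * h (j+1))) := by
        intro j
        rw [Finset.prod_range_succ' (fun k => g k ^ a k) j]
        ring
      rw [e1, e2, Finset.sum_congr rfl (fun j _ => e3 j), ← Finset.mul_sum, ← hS'] at hmem
      convert hmem using 1
      ring
    have h0 : g 0 ^ a 0 ∉ q 0 := fun hmem0 =>
      hg2 0 (Nat.succ_pos m) ((hq 0).mem_of_pow_mem _ hmem0)
    have hbr := ((hq 0).mem_or_mem key).resolve_left h0
    have hbr1 : c * P' + S' ∈ q 1 := by
      have hg0q1 : g 0 * h 0 ∈ q 1 := Ideal.mul_mem_right _ _ (hg1 0 (Nat.succ_pos m))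
      have := Ideal.sub_mem _ (hmono 0 hbr) hg0q1
      convert this using 1
      ring
    exact ih (fun i => q (i+1)) (fun i => hq _) (fun i => hmono _)
      (fun j => g (j+1)) (fun j => a (j+1)) (fun j => h (j+1)) c hc
      (fun j hj => hg1 (j+1) (by omega)) (fun j hj => hg2 (j+1) (by omega)) hbr1


theorem cl_contra {A : Type*} [CommRing A] [Algebra ℂ A] {m : ℕ}
    (q : ℕ → Ideal A) (hq : ∀ i, (q i).IsPrime) (hmono : ∀ i, q i ≤ q (i + 1))
    (g : ℕ → A) (hg1 : ∀ j < m, g j ∈ q (j + 1)) (hg2 : ∀ j < m, g j ∉ q j)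
    (Q : MvPolynomial (Fin m) ℂ) (hQ : Q ≠ 0)
    (hev : aeval (fun i : Fin m => g (i : ℕ)) Q ∈ q 0) : False := by
  classical
  have hsupp : Q.support.Nonempty := by
    rwa [Finset.nonempty_iff_ne_empty, Ne, MvPolynomial.support_eq_empty]
  -- lex-minimal exponent
  have htne : (Q.support.image (toLex : (Fin m →₀ ℕ) → Lex (Fin m →₀ ℕ))).Nonempty :=
    hsupp.image _
  obtain ⟨α, hαmem, hαe⟩ := Finset.mem_image.1 (Finset.min'_mem _ htne)
  have hmin : ∀ β ∈ Q.support, β ≠ α → toLex α < toLex β := by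
    intro β hβ hne
    have hle : toLex α ≤ toLex β := by
      rw [hαe]
      exact Finset.min'_le _ _ (Finset.mem_image_of_mem _ hβ)
    exact lt_of_le_of_ne hle (fun h => hne (by simpa using congrArg ofLex h.symm))
  set α' : ℕ → ℕ := fun k => if h : k < m then α ⟨k, h⟩ else 0 with hα'
  have hα'eq : ∀ i : Fin m, α' (i : ℕ) = α i := by
    intro i; simp [hα', i.isLt]
  -- expand the evaluation
  have hexp : aeval (fun i : Fin m => g (i : ℕ)) Q
      = ∑ β ∈ Q.support, algebraMap ℂ A (coeff β Q) * ∏ i : Fin m, g (i : ℕ) ^ β i := by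
    rw [aeval_def, eval₂_eq']
  have hsplit : aeval (fun i : Fin m => g (i : ℕ)) Q
      = algebraMap ℂ A (coeff α Q) * ∏ i : Fin m, g (i : ℕ) ^ α i
        + ∑ β ∈ Q.support.erase α, algebraMap ℂ A (coeff β Q) * ∏ i : Fin m, g (i : ℕ) ^ β i := by
    rw [hexp, ← Finset.add_sum_erase _ _ hαmem]
  -- the generators
  set v : Fin m → A := fun j =>
    (∏ i ∈ Finset.range (j : ℕ), g i ^ α' i) * g (j : ℕ) ^ (α' (j : ℕ) + 1) with hv
  -- each non-minimal term is in the ideal spanned by v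
  have hmemspan : ∑ β ∈ Q.support.erase α,
      algebraMap ℂ A (coeff β Q) * ∏ i : Fin m, g (i : ℕ) ^ β i
      ∈ Ideal.span (Set.range v) := by
    apply Ideal.sum_mem
    intro β hβ
    obtain ⟨hne, hβQ⟩ := Finset.mem_erase.1 hβ
    obtain ⟨j, hj1, hj2⟩ := Finsupp.lex_def.1 (hmin β hβQ hne)
    set β' : ℕ → ℕ := fun k => if h : k < m then β ⟨k, h⟩ else 0 with hβ'
    have hβ'eq : ∀ i : Fin m, β' (i : ℕ) = β i := by
      intro i; simp [hβ', i.isLt]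
    have hprod : ∏ i : Fin m, g (i : ℕ) ^ β i
        = v j * (g (j : ℕ) ^ (β' (j : ℕ) - (α' (j : ℕ) + 1))
            * ∏ k ∈ Finset.Ico ((j : ℕ) + 1) m, g k ^ β' k) := by
      have e0 : ∏ i : Fin m, g (i : ℕ) ^ β i = ∏ k ∈ Finset.range m, g k ^ β' k := by
        rw [← Fin.prod_univ_eq_prod_range (fun k => g k ^ β' k) m]
        exact Finset.prod_congr rfl fun i _ => by rw [hβ'eq]
      have e1 : (∏ k ∈ Finset.range ((j : ℕ) + 1), g k ^ β' k)
          * ∏ k ∈ Finset.Ico ((j : ℕ) + 1) m, g k ^ β' k = ∏ k ∈ Finset.range m, g k ^ β' k :=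
        Finset.prod_range_mul_prod_Ico _ (by omega)
      have e2 : ∏ k ∈ Finset.range ((j : ℕ) + 1), g k ^ β' k
          = (∏ k ∈ Finset.range (j : ℕ), g k ^ β' k) * g (j : ℕ) ^ β' (j : ℕ) :=
        Finset.prod_range_succ _ _
      have e3 : ∏ k ∈ Finset.range (j : ℕ), g k ^ β' k
          = ∏ k ∈ Finset.range (j : ℕ), g k ^ α' k := by
        apply Finset.prod_congr rfl
        intro k hk
        have hkm : k < m := lt_trans (Finset.mem_range.1 hk) j.isLt
        have : α ⟨k, hkm⟩ = β ⟨k, hkm⟩ := hj1 ⟨k, hkm⟩ (by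
          rw [Fin.lt_def]; exact Finset.mem_range.1 hk)
        simp [hα', hβ', hkm, this]
      have hjlt : α' (j : ℕ) < β' (j : ℕ) := by
        rw [hα'eq j, hβ'eq j]; exact hj2
      have e4 : g (j : ℕ) ^ β' (j : ℕ)
          = g (j : ℕ) ^ (α' (j : ℕ) + 1) * g (j : ℕ) ^ (β' (j : ℕ) - (α' (j : ℕ) + 1)) := by
        rw [← pow_add]
        congr 1
        omega
      rw [e0, ← e1, e2, e3, e4, hv]
      ring
    rw [hprod]
    exact Ideal.mul_mem_left _ _
      (Ideal.mul_mem_right _ _ (Ideal.subset_span (Set.mem_range_self j)))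
  obtain ⟨hf, hrep⟩ := Ideal.mem_span_range_iff_exists_fun.1 hmemspan
  set h' : ℕ → A := fun k => if h : k < m then hf ⟨k, h⟩ else 0 with hh'
  -- assemble the cl_core hypothesis
  have hmain : algebraMap ℂ A (coeff α Q) * ∏ k ∈ Finset.range m, g k ^ α' k
      + ∑ j ∈ Finset.range m, (∏ i ∈ Finset.range j, g i ^ α' i)
          * (g j ^ (α' j + 1) * h' j) ∈ q 0 := by
    have e0 : ∏ i : Fin m, g (i : ℕ) ^ α i = ∏ k ∈ Finset.range m, g k ^ α' k := by
      rw [← Fin.prod_univ_eq_prod_range (fun k => g k ^ α' k) m]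
      exact Finset.prod_congr rfl fun i _ => by rw [hα'eq]
    have e5 : ∑ j ∈ Finset.range m, (∏ i ∈ Finset.range j, g i ^ α' i)
          * (g j ^ (α' j + 1) * h' j) = ∑ i : Fin m, hf i * v i := by
      rw [← Fin.sum_univ_eq_sum_range (fun j => (∏ i ∈ Finset.range j, g i ^ α' i)
          * (g j ^ (α' j + 1) * h' j)) m]
      apply Finset.sum_congr rfl
      intro i _
      have : h' (i : ℕ) = hf i := by simp [hh', i.isLt]
      rw [this, hv]
      ring
    rw [e5, hrep, ← e0, ← hsplit]
    exact hev
  -- conclude with cl_core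
  refine cl_core m q hq hmono g α' h' (algebraMap ℂ A (coeff α Q)) ?_ hg1 hg2 hmain
  intro hcm
  have hc0 : coeff α Q ≠ 0 := mem_support_iff.1 hαmem
  have : IsUnit (algebraMap ℂ A (coeff α Q)) := (IsUnit.mk0 _ hc0).map _
  exact (hq m).ne_top (Ideal.eq_top_of_isUnit_mem _ hcm this)

theorem coord_le_sum {σ : Type*} (s : σ →₀ ℕ) (i : σ) : s i ≤ s.sum fun _ k => k := by
  rcases eq_or_ne (s i) 0 with h | h
  · simp [h]
  · exact Finset.single_le_sum (fun _ _ => Nat.zero_le _) (Finsupp.mem_support_iff.2 h)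

/-- Any `n+1` polynomials in `n` variables are algebraically dependent over `ℂ`. -/
theorem exists_annihilator (n : ℕ) (f : Fin (n + 1) → MvPolynomial (Fin n) ℂ) :
    ∃ Q : MvPolynomial (Fin (n + 1)) ℂ, Q ≠ 0 ∧ aeval f Q = 0 := by
  classical
  by_contra hcon
  push_neg at hcon
  have hinj : Function.Injective (aeval f : MvPolynomial (Fin (n + 1)) ℂ →ₐ[ℂ] _) := by
    intro Q1 Q2 h12
    by_contra hne
    exact hcon (Q1 - Q2) (sub_ne_zero.2 hne) (by rw [map_sub, h12, sub_self])
  set d := (Finset.univ.sup fun i => (f i).totalDegree) + 1 with hd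
  have hdle : ∀ i, (f i).totalDegree ≤ d := fun i => by
    rw [hd]
    exact Nat.le_succ_of_le (Finset.le_sup (f := fun i => (f i).totalDegree) (Finset.mem_univ i))
  set c := (n + 1) * d with hc
  have hc1 : 1 ≤ c := Nat.one_le_iff_ne_zero.2 (by positivity)
  set D := c ^ n with hD
  set Nb := c * D with hNb
  -- the family of monomials in the f i
  set e : (Fin (n + 1) → Fin (D + 1)) → (Fin (n + 1) →₀ ℕ) :=
    fun s => Finsupp.equivFunOnFinite.symm fun i => (s i : ℕ) with he
  have heinj : Function.Injective e := by
    intro s s' hss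
    funext i
    have := congrArg (fun t => (Finsupp.equivFunOnFinite t) i) hss
    simpa [he, Fin.val_injective.eq_iff] using this
  set u : (Fin (n + 1) → Fin (D + 1)) → MvPolynomial (Fin n) ℂ :=
    fun s => (aeval f : MvPolynomial (Fin (n + 1)) ℂ →ₐ[ℂ] MvPolynomial (Fin n) ℂ)
      (monomial (e s) 1) with hu
  have hli : LinearIndependent ℂ u := by
    have h1 : LinearIndependent ℂ fun s : Fin (n + 1) → Fin (D + 1) =>
        (monomial (e s) (1 : ℂ) : MvPolynomial (Fin (n + 1)) ℂ) := by
      have := (basisMonomials (Fin (n + 1)) ℂ).linearIndependent.comp e heinj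
      rw [coe_basisMonomials] at this
      exact this
    have h2 := h1.map' (aeval f).toLinearMap (LinearMap.ker_eq_bot.2 hinj)
    have h3 : u = ⇑(aeval f).toLinearMap ∘ fun s => (monomial (e s)) (1 : ℂ) := by
      funext s
      rfl
    rw [h3]
    exact h2
  have hmem : ∀ s, u s ∈ restrictDegree (Fin n) ℂ Nb := by
    intro s
    have htd : (u s).totalDegree ≤ Nb := by
      have h1 : u s = ∏ i, f i ^ (e s) i := by
        show (aeval f : MvPolynomial (Fin (n + 1)) ℂ →ₐ[ℂ] MvPolynomial (Fin n) ℂ)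
          ((monomial (e s)) 1) = _
        rw [aeval_monomial, map_one, one_mul]
        exact Finsupp.prod_fintype _ _ (fun i => pow_zero _)
      rw [h1]
      refine le_trans (totalDegree_finset_prod _ _) ?_
      have : ∀ i : Fin (n + 1), (f i ^ (e s) i).totalDegree ≤ D * d := by
        intro i
        refine le_trans (totalDegree_pow _ _) ?_
        have h2 : (e s) i ≤ D := by
          have : (s i : ℕ) < D + 1 := (s i).isLt
          simp only [he, Finsupp.coe_equivFunOnFinite_symm]
          omega
        exact Nat.mul_le_mul h2 (hdle i)
      refine le_trans (Finset.sum_le_sum fun i _ => this i) ?_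
      simp [hNb, hc]
      ring_nf
      omega
    rw [mem_restrictDegree]
    intro sp hsp i
    calc sp i ≤ sp.sum fun _ k => k := coord_le_sum sp i
    _ ≤ (u s).totalDegree := le_totalDegree hsp
    _ ≤ Nb := htd
  set u' : (Fin (n + 1) → Fin (D + 1)) → ↥(restrictDegree (Fin n) ℂ Nb) :=
    fun s => ⟨u s, hmem s⟩ with hu'
  have hli' : LinearIndependent ℂ u' :=
    LinearIndependent.of_comp (restrictDegree (Fin n) ℂ Nb).subtype (by
      exact hli)
  -- dimension count
  set SS : Set (Fin n →₀ ℕ) := {sp | ∀ i, sp i ≤ Nb} with hSS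
  set inj : ↥SS → (Fin n → Fin (Nb + 1)) :=
    fun sp i => ⟨sp.1 i, Nat.lt_succ_of_le (sp.2 i)⟩ with hinjdef
  have hinj2 : Function.Injective inj := by
    intro a b hab
    ext j
    have := congrArg (fun t => ((t j : Fin (Nb + 1)) : ℕ)) hab
    simpa [hinjdef] using this
  haveI : Fintype ↥SS := Fintype.ofInjective inj hinj2
  have hfr : Module.finrank ℂ ↥(restrictDegree (Fin n) ℂ Nb) = Fintype.card ↥SS :=
    Module.finrank_eq_card_basis (basisRestrictSupport ℂ SS)
  have hcard1 : Fintype.card (Fin (n + 1) → Fin (D + 1))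
      ≤ Module.finrank ℂ ↥(restrictDegree (Fin n) ℂ Nb) :=
    hli'.fintype_card_le_finrank
  have hcard2 : Fintype.card ↥SS ≤ Fintype.card (Fin n → Fin (Nb + 1)) :=
    Fintype.card_le_of_injective inj hinj2
  have hfinal : (D + 1) ^ (n + 1) ≤ (Nb + 1) ^ n := by
    have e1 : Fintype.card (Fin (n + 1) → Fin (D + 1)) = (D + 1) ^ (n + 1) := by
      simp [Fintype.card_fun]
    have e2 : Fintype.card (Fin n → Fin (Nb + 1)) = (Nb + 1) ^ n := by
      simp [Fintype.card_fun]
    omega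
  -- arithmetic contradiction
  have harith : (Nb + 1) ^ n < (D + 1) ^ (n + 1) := by
    have h1 : Nb + 1 ≤ c * (D + 1) := by
      rw [hNb]; nlinarith
    have h2 : (Nb + 1) ^ n ≤ (c * (D + 1)) ^ n := Nat.pow_le_pow_left h1 n
    have h3 : (c * (D + 1)) ^ n = c ^ n * (D + 1) ^ n := mul_pow _ _ _
    have h4 : c ^ n * (D + 1) ^ n < (D + 1) * (D + 1) ^ n := by
      have : c ^ n < D + 1 := by rw [hD]; omega
      exact Nat.mul_lt_mul_of_lt_of_le this le_rfl (by positivity)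
    calc (Nb + 1) ^ n ≤ c ^ n * (D + 1) ^ n := by rw [← h3]; exact h2
    _ < (D + 1) * (D + 1) ^ n := h4
    _ = (D + 1) ^ (n + 1) := by ring
  omega

theorem no_long_chain {n N : ℕ} (p : Fin N → MvPolynomial (Fin n) ℂ)
    (q : Fin (n + 2) → Ideal (MvPolynomial (Fin N) ℂ))
    (hq : StrictMono q) (hprime : ∀ j, (q j).IsPrime)
    (hker : ∀ f, aeval p f = 0 → f ∈ q 0) : False := by
  classical
  set qn : ℕ → Ideal (MvPolynomial (Fin N) ℂ) :=
    fun i => q ⟨min i (n + 1), by omega⟩ with hqn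
  have hqnmono : ∀ i, qn i ≤ qn (i + 1) := by
    intro i
    exact hq.monotone (by rw [Fin.mk_le_mk]; omega)
  have hex : ∀ j : ℕ, j < n + 1 → ∃ g, g ∈ qn (j + 1) ∧ g ∉ qn j := by
    intro j hj
    have : qn j < qn (j + 1) := hq (by rw [Fin.mk_lt_mk]; omega)
    obtain ⟨g, hgg1, hgg2⟩ := SetLike.exists_of_lt this
    exact ⟨g, hgg1, hgg2⟩
  set g : ℕ → MvPolynomial (Fin N) ℂ := fun j =>
    if h : j < n + 1 then (hex j h).choose else 0 with hg
  have hg1 : ∀ j < n + 1, g j ∈ qn (j + 1) := by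
    intro j hj; simp only [hg, dif_pos hj]; exact (hex j hj).choose_spec.1
  have hg2 : ∀ j < n + 1, g j ∉ qn j := by
    intro j hj; simp only [hg, dif_pos hj]; exact (hex j hj).choose_spec.2
  obtain ⟨Q, hQ0, hQev⟩ := exists_annihilator n fun i : Fin (n + 1) => aeval p (g (i : ℕ))
  have hmem : aeval (fun i : Fin (n + 1) => g (i : ℕ)) Q ∈ qn 0 := by
    have h1 : aeval p (aeval (fun i : Fin (n + 1) => g (i : ℕ)) Q)
        = aeval (fun i : Fin (n + 1) => aeval p (g (i : ℕ))) Q := by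
      rw [← comp_aeval, AlgHom.coe_comp, Function.comp_apply]
    have h0 : aeval p (aeval (fun i : Fin (n + 1) => g (i : ℕ)) Q) = 0 := by
      rw [h1, hQev]
    have h2 := hker _ h0
    have h3 : qn 0 = q 0 := by
      rw [hqn]
      exact congrArg q (by ext; simp)
    rw [h3]
    exact h2
  exact cl_contra qn (fun i => hprime _) hqnmono g hg1 hg2 Q hQ0 hmem

/-- The range of a polynomial map is irreducible. -/
theorem isIrredV_range (p : Fin N → MvPolynomial (Fin n) ℂ) :
    IsIrredV (Set.range (pmap p)) := by
  constructor
  · exact ⟨pmap p 0, Set.mem_range_self 0⟩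
  · rintro T₁ T₂ ⟨I₁, rfl⟩ ⟨I₂, rfl⟩ hsub
    by_contra hcon
    push_neg at hcon
    obtain ⟨hn1, hn2⟩ := hcon
    obtain ⟨y₁, hy₁, hy₁n⟩ := Set.not_subset.1 hn1
    obtain ⟨y₂, hy₂, hy₂n⟩ := Set.not_subset.1 hn2
    obtain ⟨x₁, rfl⟩ := hy₁
    obtain ⟨x₂, rfl⟩ := hy₂
    simp only [zLocus, Set.mem_setOf_eq, not_forall] at hy₁n hy₂n
    obtain ⟨f₁, hf₁I, hf₁⟩ := hy₁n
    obtain ⟨f₂, hf₂I, hf₂⟩ := hy₂n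
    have h₁ : aeval p f₁ ≠ 0 := fun h => hf₁ (by rw [eval_pmap, h, map_zero])
    have h₂ : aeval p f₂ ≠ 0 := fun h => hf₂ (by rw [eval_pmap, h, map_zero])
    have hF : aeval p f₁ * aeval p f₂ ≠ 0 := mul_ne_zero h₁ h₂
    have hx : ∃ x, eval x (aeval p f₁ * aeval p f₂) ≠ 0 := by
      by_contra hc
      push_neg at hc
      exact hF (MvPolynomial.funext fun x => by rw [hc x, map_zero])
    obtain ⟨x, hx⟩ := hx
    rcases hsub (Set.mem_range_self x) with h | h
    · have h0 : eval (pmap p x) f₁ = 0 := h f₁ hf₁I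
      rw [eval_pmap] at h0
      exact hx (by rw [map_mul, h0, zero_mul])
    · have h0 : eval (pmap p x) f₂ = 0 := h f₂ hf₂I
      rw [eval_pmap] at h0
      exact hx (by rw [map_mul, h0, mul_zero])

/-- Upper bound for the dimension of the closure of the image of a polynomial map. -/
theorem adim_zcl_range_le (p : Fin N → MvPolynomial (Fin n) ℂ) :
    adim (zcl (Set.range (pmap p))) ≤ (n : WithBot (WithTop ℕ)) := by
  classical
  set S := zcl (Set.range (pmap p)) with hS
  rcases isEmpty_or_nonempty {T : Set (Fin N → ℂ) // IsAlg T ∧ IsIrredV T ∧ T ⊆ S} with he | hne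
  · rw [adim, Order.krullDim_eq_bot]
    exact bot_le
  rw [adim, Order.krullDim_eq_iSup_length]
  refine WithBot.coe_le_coe.2 (iSup_le fun l => ?_)
  have hlen : l.length ≤ n := by
    by_contra hlenc
    push_neg at hlenc
    set q : Fin (n + 2) → Ideal (MvPolynomial (Fin N) ℂ) := fun j =>
      vanishingIdeal ℂ (l.toFun ⟨l.length - (j : ℕ), by omega⟩).val with hq
    have hqmono : StrictMono q := by
      intro j j' hjj'
      apply vanishingIdeal_strict_anti (l.toFun _).2.1 (l.toFun _).2.1
      have hlt : (⟨l.length - (j' : ℕ), by omega⟩ : Fin (l.length + 1))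
          < ⟨l.length - (j : ℕ), by omega⟩ := by
        rw [Fin.mk_lt_mk]
        have hj' := j'.isLt
        have hjj : (j : ℕ) < (j' : ℕ) := hjj'
        omega
      exact Subtype.coe_lt_coe.2 (l.strictMono hlt)
    refine no_long_chain p q hqmono
      (fun j => isPrime_vanishingIdeal (l.toFun _).2.2.1) ?_
    intro f hf
    refine mem_vanishingIdeal_iff.2 fun x hx => ?_
    have hxS : x ∈ S := (l.toFun _).2.2.2 hx
    have hsub : S ⊆ zLocus {f} := by
      rw [hS]
      refine zcl_subset ⟨{f}, rfl⟩ ?_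
      rintro y ⟨z, rfl⟩ f' hf'
      rw [Set.mem_singleton_iff] at hf'
      subst hf'
      rw [eval_pmap, hf, map_zero]
    exact hsub hxS f rfl
  exact (Nat.cast_le.2 hlen : ((l.length : ℕ) : ℕ∞) ≤ (n : ℕ∞))

theorem le_adim_of_chain {N : ℕ} (S : Set (Fin N → ℂ)) (d : ℕ)
    (T : Fin (d + 1) → Set (Fin N → ℂ))
    (h : ∀ i, IsAlg (T i) ∧ IsIrredV (T i) ∧ T i ⊆ S) (hmono : StrictMono T) :
    (d : WithBot (WithTop ℕ)) ≤ adim S := by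
  let l : LTSeries {T' : Set (Fin N → ℂ) // IsAlg T' ∧ IsIrredV T' ∧ T' ⊆ S} :=
    ⟨d, fun i => ⟨T i, h i⟩, fun i => by
      exact (Subtype.mk_lt_mk (p := fun T' => IsAlg T' ∧ IsIrredV T' ∧ T' ⊆ S)).2
        (hmono (Fin.castSucc_lt_succ (i := i)))⟩
  have hk := Order.LTSeries.length_le_krullDim l
  exact hk

noncomputable def p₁ : Fin 4 → MvPolynomial (Fin 2) ℂ :=
  ![X 0 * X 1, X 0, X 1, -(X 1 ^ 2)]

noncomputable def p₂ : Fin 5 → MvPolynomial (Fin 3) ℂ :=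
  ![X 1 * X 2, -(X 0 * X 2), X 0 * X 1, X 1 ^ 2, X 0 ^ 2]

theorem pmap_p₁ (x : Fin 2 → ℂ) :
    pmap p₁ x = ![x 0 * x 1, x 0, x 1, -(x 1 ^ 2)] := by
  funext i
  fin_cases i <;> simp [pmap, p₁]

theorem pmap_p₂ (x : Fin 3 → ℂ) :
    pmap p₂ x = ![x 1 * x 2, -(x 0 * x 2), x 0 * x 1, x 1 ^ 2, x 0 ^ 2] := by
  funext i
  fin_cases i <;> simp [pmap, p₂]

theorem range_eq_1 : Set.range (fun w : Fin 3 → ℂ =>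
      (![w 0 * w 1 + 2 * (w 0) ^ 2 * (w 2), -(w 1) - 2 * (w 0) * (w 2),
          -(w 0), -((w 0) ^ 2)] : Fin 4 → ℂ)) = Set.range (pmap p₁) := by
  ext y
  constructor
  · rintro ⟨w, rfl⟩
    refine ⟨![-(w 1) - 2 * w 0 * w 2, -(w 0)], ?_⟩
    rw [pmap_p₁]
    funext i
    fin_cases i <;> simp <;> ring
  · rintro ⟨x, rfl⟩
    refine ⟨![-(x 1), -(x 0), 0], ?_⟩
    rw [pmap_p₁]
    funext i
    fin_cases i <;> simp <;> ring

theorem gradP_perazzo (v : Fin 5 → ℂ) :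
    gradP perazzoCubic v = ![v 1 * v 2 + 2 * v 0 * v 4, v 0 * v 2 + 2 * v 1 * v 3,
      v 0 * v 1, v 1 ^ 2, v 0 ^ 2] := by
  funext i
  fin_cases i <;>
    simp [gradP, perazzoCubic, pderiv_mul, pderiv_pow, pderiv_X_self,
      pderiv_X_of_ne, pderiv_X] <;> ring

theorem eval_perazzo (v : Fin 5 → ℂ) :
    eval v perazzoCubic = v 0 * v 1 * v 2 + v 0 ^ 2 * v 4 + v 1 ^ 2 * v 3 := by
  simp [perazzoCubic]

theorem range_eq_2 : gradP perazzoCubic '' {v : Fin 5 → ℂ | eval v perazzoCubic = 0}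
    = Set.range (pmap p₂) := by
  ext y
  constructor
  · rintro ⟨v, hv, rfl⟩
    rw [Set.mem_setOf_eq, eval_perazzo] at hv
    rw [gradP_perazzo]
    by_cases h0 : v 0 = 0
    · by_cases h1 : v 1 = 0
      · exact ⟨![0, 0, 0], by rw [pmap_p₂]; funext i; fin_cases i <;> simp [h0, h1]⟩
      · have h3 : v 3 = 0 := by
          have hq : v 1 ^ 2 * v 3 = 0 := by
            linear_combination hv - (v 1 * v 2 + v 0 * v 4) * h0
          exact (mul_eq_zero.1 hq).resolve_left (pow_ne_zero 2 h1)
        refine ⟨![0, v 1, v 2], ?_⟩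
        rw [pmap_p₂]
        funext i
        fin_cases i
        · simp [h0]
        · simp [h0, h3]
        · simp [h0]
        · simp
        · simp [h0]
    · have key : v 0 * (v 1 * v 2 + 2 * v 0 * v 4) + v 1 * (v 0 * v 2 + 2 * v 1 * v 3) = 0 := by
        linear_combination 2 * hv
      by_cases h1 : v 1 = 0
      · have hy0 : v 1 * v 2 + 2 * v 0 * v 4 = 0 := by
          have h2 : v 0 * (v 1 * v 2 + 2 * v 0 * v 4) = 0 := by
            linear_combination key - (v 0 * v 2 + 2 * v 1 * v 3) * h1
          exact (mul_eq_zero.1 h2).resolve_left h0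
        refine ⟨![v 0, 0, -(v 0 * v 2 + 2 * v 1 * v 3) / v 0], ?_⟩
        rw [pmap_p₂]
        funext i
        fin_cases i
        · simp; linear_combination -hy0
        · simp; field_simp; ring
        · simp [h1]
        · simp [h1]
        · simp
      · refine ⟨![v 0, v 1, (v 1 * v 2 + 2 * v 0 * v 4) / v 1], ?_⟩
        rw [pmap_p₂]
        funext i
        fin_cases i
        · simp; field_simp
        · simp; field_simp; linear_combination -key
        · simp
        · simp
        · simp
  · rintro ⟨x, rfl⟩
    rw [pmap_p₂]
    by_cases h0 : x 0 = 0
    · refine ⟨![0, x 1, x 2, 0, 0], ?_, ?_⟩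
      · rw [Set.mem_setOf_eq, eval_perazzo]; simp
      · rw [gradP_perazzo]; funext i; fin_cases i <;> simp [h0]
    · refine ⟨![x 0, x 1, -(x 2), 0, x 1 * x 2 / x 0], ?_, ?_⟩
      · rw [Set.mem_setOf_eq, eval_perazzo]
        simp
        field_simp
        ring
      · rw [gradP_perazzo]
        funext i
        fin_cases i
        · simp; field_simp; ring
        · simp
        · simp
        · simp
        · simp


theorem chain_lt {N na nb : ℕ} (pa : Fin N → MvPolynomial (Fin na) ℂ)
    (pb : Fin N → MvPolynomial (Fin nb) ℂ)
    (hsub : ∀ x, ∃ x', pmap pb x' = pmap pa x)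
    (f : MvPolynomial (Fin N) ℂ) (hf : ∀ x, eval (pmap pa x) f = 0)
    (xb : Fin nb → ℂ) (hxb : eval (pmap pb xb) f ≠ 0) :
    zcl (Set.range (pmap pa)) < zcl (Set.range (pmap pb)) := by
  constructor
  · apply zcl_mono
    rintro y ⟨x, rfl⟩
    obtain ⟨x', hx'⟩ := hsub x
    exact ⟨x', hx'⟩
  · intro hc
    have h1 : zcl (Set.range (pmap pa)) ⊆ zLocus {f} := by
      refine zcl_subset ⟨{f}, rfl⟩ ?_
      rintro y ⟨x, rfl⟩ g hg
      rw [Set.mem_singleton_iff] at hg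
      subst hg
      exact hf x
    have h2 : pmap pb xb ∈ zcl (Set.range (pmap pb)) := subset_zcl _ (Set.mem_range_self xb)
    exact hxb (h1 (hc h2) f rfl)

theorem adim_part1 : adim (zcl (Set.range (pmap p₁))) = 2 := by
  apply le_antisymm
  · exact_mod_cast adim_zcl_range_le p₁
  · set c₀ : Fin 4 → MvPolynomial (Fin 0) ℂ := fun _ => 0 with hc₀
    set c₁ : Fin 4 → MvPolynomial (Fin 1) ℂ := ![0, X 0, 0, 0] with hc₁
    have hlt01 : zcl (Set.range (pmap c₀)) < zcl (Set.range (pmap c₁)) := by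
      refine chain_lt c₀ c₁ (fun x => ⟨![0], ?_⟩) (X 1) (fun x => by simp [pmap, hc₀])
        ![1] (by simp [pmap, hc₁])
      funext i
      fin_cases i <;> simp [pmap, hc₀, hc₁]
    have hlt12 : zcl (Set.range (pmap c₁)) < zcl (Set.range (pmap p₁)) := by
      refine chain_lt c₁ p₁ (fun x => ⟨![x 0, 0], ?_⟩) (X 2)
        (fun x => by simp [pmap, hc₁]) ![0, 1] (by simp [pmap, p₁])
      funext i
      fin_cases i <;> simp [pmap, hc₁, p₁]
    have hmain := le_adim_of_chain (zcl (Set.range (pmap p₁))) 2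
      ![zcl (Set.range (pmap c₀)), zcl (Set.range (pmap c₁)), zcl (Set.range (pmap p₁))]
      (fun i => by
        fin_cases i <;>
          exact ⟨isAlg_zcl _, isIrredV_zcl (isIrredV_range _), by
            first
              | exact (hlt01.le.trans hlt12.le)
              | exact hlt12.le
              | exact subset_rfl⟩)
      (by
        rw [Fin.strictMono_iff_lt_succ]
        intro i
        fin_cases i <;> simpa using by first | exact hlt01 | exact hlt12)
    exact_mod_cast hmain

theorem adim_part2 : adim (zcl (Set.range (pmap p₂))) = 3 := by
  apply le_antisymm
  · exact_mod_cast adim_zcl_range_le p₂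
  · set d₀ : Fin 5 → MvPolynomial (Fin 0) ℂ := fun _ => 0 with hd₀
    set d₁ : Fin 5 → MvPolynomial (Fin 1) ℂ := ![0, 0, 0, X 0 ^ 2, 0] with hd₁
    set d₂ : Fin 5 → MvPolynomial (Fin 2) ℂ := ![X 0 * X 1, 0, 0, X 0 ^ 2, 0] with hd₂
    have hlt01 : zcl (Set.range (pmap d₀)) < zcl (Set.range (pmap d₁)) := by
      refine chain_lt d₀ d₁ (fun x => ⟨![0], ?_⟩) (X 3) (fun x => by simp [pmap, hd₀])
        ![1] (by simp [pmap, hd₁])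
      funext i
      fin_cases i <;> simp [pmap, hd₀, hd₁]
    have hlt12 : zcl (Set.range (pmap d₁)) < zcl (Set.range (pmap d₂)) := by
      refine chain_lt d₁ d₂ (fun x => ⟨![x 0, 0], ?_⟩) (X 0)
        (fun x => by simp [pmap, hd₁]) ![1, 1] (by simp [pmap, hd₂])
      funext i
      fin_cases i <;> simp [pmap, hd₁, hd₂]
    have hlt23 : zcl (Set.range (pmap d₂)) < zcl (Set.range (pmap p₂)) := by
      refine chain_lt d₂ p₂ (fun x => ⟨![0, x 0, x 1], ?_⟩) (X 1)
        (fun x => by simp [pmap, hd₂]) ![1, 1, 1] (by simp [pmap, p₂])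
      funext i
      fin_cases i <;> simp [pmap, hd₂, p₂]
    have hmain := le_adim_of_chain (zcl (Set.range (pmap p₂))) 3
      ![zcl (Set.range (pmap d₀)), zcl (Set.range (pmap d₁)), zcl (Set.range (pmap d₂)),
        zcl (Set.range (pmap p₂))]
      (fun i => by
        fin_cases i <;>
          exact ⟨isAlg_zcl _, isIrredV_zcl (isIrredV_range _), by
            first
              | exact ((hlt01.le.trans hlt12.le).trans hlt23.le)
              | exact (hlt12.le.trans hlt23.le)
              | exact hlt23.le
              | exact subset_rfl⟩)
      (by
        rw [Fin.strictMono_iff_lt_succ]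
        intro i
        fin_cases i <;> simpa using by first | exact hlt01 | exact hlt12 | exact hlt23)
    exact_mod_cast hmain

end S5T
end S5Proof

/-- on the chart `x₀ = 1` the Gauss map of the Perazzo cubic is
`(x₁,x₂,x₃) ↦ (x₁x₂ + 2x₁²x₃, −x₂ − 2x₁x₃, −x₁, −x₁²)`, whose image is
2-dimensional; correspondingly the cone over the dual variety has (affine)
dimension 3, i.e. the dual defect equals `4 − 1 − 2 = 1`. -/

theorem stmt5 :
    adim (zcl (Set.range (fun w : Fin 3 → ℂ =>
        (![w 0 * w 1 + 2 * (w 0) ^ 2 * (w 2), -(w 1) - 2 * (w 0) * (w 2),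
            -(w 0), -((w 0) ^ 2)] : Fin 4 → ℂ)))) = 2 ∧
    adim (zcl (gradP perazzoCubic ''
        {v : Fin 5 → ℂ | MvPolynomial.eval v perazzoCubic = 0})) = 3 := by
  constructor
  · rw [S5T.range_eq_1]
    exact S5T.adim_part1
  · rw [S5T.range_eq_2]
    exact S5T.adim_part2
end

section
/- Let X ⊂ P^N be a cubic hypersurface, s_1, s_2 ∈ Sing(X), and l_1 ⊂ X a line with s_1 ∈ l_1 and s_2 ∉ l_1. Let M = ⟨l_1, s_2⟩ be the 2-plane spanned by l_1 and s_2, and assume M ⊄ X. Then either (i) X ∩ M is set-theoretically equal to ⟨s_1 s_2⟩ ∪ l_1 and Sing(X ∩ M) = ⟨s_1 s_2⟩, or (ii) there is a line l_2 ⊂ M with s_2 ∈ l_2, s_1 ∉ l_2, such that X ∩ M = ⟨s_1 s_2⟩ ∪ l_1 ∪ l_2 and Sing(X ∩ M) = {s_1, s_2, l_1 ∩ l_2}. -/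
open MvPolynomial

namespace Stmt8Aux

open MvPolynomial

noncomputable section

theorem mem_span_triple {M : Type*} [AddCommGroup M] [Module ℂ M] {x y z m : M} :
    m ∈ Submodule.span ℂ ({x, y, z} : Set M) ↔ ∃ a b c : ℂ, a • x + b • y + c • z = m := by
  constructor
  · intro h
    rw [Submodule.mem_span_insert] at h
    obtain ⟨a, w, hw, rfl⟩ := h
    obtain ⟨b, c, rfl⟩ := Submodule.mem_span_pair.mp hw
    exact ⟨a, b, c, add_assoc _ _ _⟩
  · rintro ⟨a, b, c, rfl⟩
    rw [Submodule.mem_span_insert]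
    exact ⟨a, b • y + c • z, Submodule.mem_span_pair.mpr ⟨b, c, rfl⟩, add_assoc _ _ _⟩

theorem pderiv_aeval' {ι : Type*} [Fintype ι] [DecidableEq ι]
    (g : ι → MvPolynomial (Fin 3) ℂ) (P : MvPolynomial ι ℂ) (j : Fin 3) :
    pderiv j (aeval g P) = ∑ i, aeval g (pderiv i P) * pderiv j (g i) := by
  induction P using MvPolynomial.induction_on with
  | C a => simp [algebraMap_eq, pderiv_C]
  | add p q hp hq => simp only [map_add, hp, hq, add_mul, Finset.sum_add_distrib]
  | mul_X p i hp =>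
    rw [map_mul, aeval_X, pderiv_mul, hp, Finset.sum_mul]
    have key : ∀ i' : ι, aeval g (pderiv i' (p * X i)) * pderiv j (g i')
        = aeval g (pderiv i' p) * pderiv j (g i') * g i
          + (if i' = i then aeval g p * pderiv j (g i) else 0) := by
      intro i'
      rw [pderiv_mul]
      by_cases h : i' = i
      · subst h
        rw [pderiv_X_self, mul_one, if_pos rfl, map_add, map_mul, aeval_X]
        ring
      · rw [pderiv_X_of_ne (Ne.symm h), mul_zero, add_zero, if_neg h, add_zero, map_mul, aeval_X]
        ring
    rw [Finset.sum_congr rfl fun i' _ => key i', Finset.sum_add_distrib,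
      Finset.sum_ite_eq' Finset.univ, if_pos (Finset.mem_univ i)]

theorem eval_aeval' {ι : Type*} (v : Fin 3 → ℂ)
    (g : ι → MvPolynomial (Fin 3) ℂ) (P : MvPolynomial ι ℂ) :
    eval v (aeval g P) = eval (fun i => eval v (g i)) P := by
  rw [aeval_def, algebraMap_eq, ← eval_assoc]
  rfl

def d3 (i j k : ℕ) : Fin 3 →₀ ℕ :=
  Finsupp.single 0 i + Finsupp.single 1 j + Finsupp.single 2 k

@[simp] lemma d3_apply0 (i j k : ℕ) : d3 i j k 0 = i := by
  simp [d3, Finsupp.single_apply]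
@[simp] lemma d3_apply1 (i j k : ℕ) : d3 i j k 1 = j := by
  simp [d3, Finsupp.single_apply]
@[simp] lemma d3_apply2 (i j k : ℕ) : d3 i j k 2 = k := by
  simp [d3, Finsupp.single_apply]

@[simp] lemma d3_inj {a b c a' b' c' : ℕ} :
    d3 a b c = d3 a' b' c' ↔ (a = a' ∧ b = b' ∧ c = c') := by
  constructor
  · intro h
    refine ⟨?_, ?_, ?_⟩
    · simpa using DFunLike.congr_fun h 0
    · simpa using DFunLike.congr_fun h 1
    · simpa using DFunLike.congr_fun h 2
  · rintro ⟨rfl, rfl, rfl⟩; rfl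

lemma monomial_d3 (i j k : ℕ) (r : ℂ) :
    monomial (d3 i j k) r = C r * X 0 ^ i * X 1 ^ j * X 2 ^ k := by
  rw [d3, monomial_add_single, monomial_add_single, ← zero_add (Finsupp.single 0 i),
    monomial_add_single, C_apply]

lemma degree_eq_sum3 (d : Fin 3 →₀ ℕ) : d.degree = d 0 + d 1 + d 2 := by
  have : d.degree = ∑ i : Fin 3, d i := by
    rw [Finsupp.degree]
    exact Finset.sum_subset (Finset.subset_univ _)
      (fun i _ hi => Finsupp.notMem_support_iff.mp hi)
  rw [this, Fin.sum_univ_three]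

lemma cubic_expand (Q : MvPolynomial (Fin 3) ℂ) (hQ : Q.IsHomogeneous 3) :
    Q = monomial (d3 3 0 0) (coeff (d3 3 0 0) Q)
      + monomial (d3 2 1 0) (coeff (d3 2 1 0) Q)
      + monomial (d3 2 0 1) (coeff (d3 2 0 1) Q)
      + monomial (d3 1 2 0) (coeff (d3 1 2 0) Q)
      + monomial (d3 1 1 1) (coeff (d3 1 1 1) Q)
      + monomial (d3 1 0 2) (coeff (d3 1 0 2) Q)
      + monomial (d3 0 3 0) (coeff (d3 0 3 0) Q)
      + monomial (d3 0 2 1) (coeff (d3 0 2 1) Q)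
      + monomial (d3 0 1 2) (coeff (d3 0 1 2) Q)
      + monomial (d3 0 0 3) (coeff (d3 0 0 3) Q) := by
  have key : ∀ a b c : ℕ, a + b + c = 3 → ∀ d : Fin 3 →₀ ℕ, d = d3 a b c →
      coeff d Q = coeff d (monomial (d3 3 0 0) (coeff (d3 3 0 0) Q)
      + monomial (d3 2 1 0) (coeff (d3 2 1 0) Q)
      + monomial (d3 2 0 1) (coeff (d3 2 0 1) Q)
      + monomial (d3 1 2 0) (coeff (d3 1 2 0) Q)
      + monomial (d3 1 1 1) (coeff (d3 1 1 1) Q)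
      + monomial (d3 1 0 2) (coeff (d3 1 0 2) Q)
      + monomial (d3 0 3 0) (coeff (d3 0 3 0) Q)
      + monomial (d3 0 2 1) (coeff (d3 0 2 1) Q)
      + monomial (d3 0 1 2) (coeff (d3 0 1 2) Q)
      + monomial (d3 0 0 3) (coeff (d3 0 0 3) Q)) := by
    intro a b c hsum d hd
    subst hd
    have ha : a ≤ 3 := by omega
    have hb : b ≤ 3 := by omega
    have hc : c ≤ 3 := by omega
    interval_cases a <;> interval_cases b <;> interval_cases c <;>
      first
        | omega
        | simp [coeff_add, coeff_monomial, d3_inj]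
  ext d
  by_cases hdeg : d.degree = 3
  · have hsum : d 0 + d 1 + d 2 = 3 := by rw [← degree_eq_sum3]; exact hdeg
    have hd3 : d = d3 (d 0) (d 1) (d 2) := by
      ext l; fin_cases l <;> simp
    exact key (d 0) (d 1) (d 2) hsum d hd3
  · have hne : ∀ i j k : ℕ, i + j + k = 3 → ¬ (d3 i j k = d) := by
      intro i j k hijk h
      apply hdeg
      rw [← h, degree_eq_sum3]
      simpa using hijk
    rw [hQ.coeff_eq_zero hdeg]
    simp only [coeff_add, coeff_monomial,
      if_neg (hne 3 0 0 (by norm_num)), if_neg (hne 2 1 0 (by norm_num)),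
      if_neg (hne 2 0 1 (by norm_num)), if_neg (hne 1 2 0 (by norm_num)),
      if_neg (hne 1 1 1 (by norm_num)), if_neg (hne 1 0 2 (by norm_num)),
      if_neg (hne 0 3 0 (by norm_num)), if_neg (hne 0 2 1 (by norm_num)),
      if_neg (hne 0 1 2 (by norm_num)), if_neg (hne 0 0 3 (by norm_num))]
    norm_num

end

end Stmt8Aux


set_option maxHeartbeats 8000000 in
/-- classification of the plane cubic `X ∩ M` for `M = ⟨l₁, s₂⟩`,
where `l₁ = ⟨s₁, p⟩ ⊂ X` is a line through the singular point `s₁`, `s₂` is a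
second singular point not on `l₁`, and `M ⊄ X`.  Singular points of the plane
cubic `X ∩ M` are the points `m ∈ M` where all directional derivatives of `P`
in directions of `M` vanish. -/
theorem stmt8 {N : ℕ} (P : MvPolynomial (Fin (N + 1)) ℂ) (hP : P.IsHomogeneous 3)
    (s₁ s₂ p : Fin (N + 1) → ℂ)
    (hs₁ : ∀ i, MvPolynomial.eval s₁ (MvPolynomial.pderiv i P) = 0)
    (hs₂ : ∀ i, MvPolynomial.eval s₂ (MvPolynomial.pderiv i P) = 0)
    (hl₁ : LinearIndependent ℂ ![s₁, p])
    (hl₁X : ∀ v ∈ Submodule.span ℂ {s₁, p}, MvPolynomial.eval v P = 0)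
    (hs₂l₁ : s₂ ∉ Submodule.span ℂ {s₁, p})
    (hMX : ∃ m ∈ Submodule.span ℂ {s₁, p, s₂}, MvPolynomial.eval m P ≠ 0) :
    -- case (i): X ∩ M = ⟨s₁s₂⟩ ∪ l₁ with Sing(X ∩ M) = ⟨s₁s₂⟩
    ({m ∈ (Submodule.span ℂ {s₁, p, s₂} : Set (Fin (N + 1) → ℂ)) |
          MvPolynomial.eval m P = 0}
        = ↑(Submodule.span ℂ {s₁, s₂}) ∪ ↑(Submodule.span ℂ {s₁, p}) ∧
      {m ∈ (Submodule.span ℂ {s₁, p, s₂} : Set (Fin (N + 1) → ℂ)) |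
          ∀ w ∈ Submodule.span ℂ {s₁, p, s₂},
            ∑ i, w i * MvPolynomial.eval m (MvPolynomial.pderiv i P) = 0}
        = ↑(Submodule.span ℂ {s₁, s₂}))
    ∨
    -- case (ii): X ∩ M = ⟨s₁s₂⟩ ∪ l₁ ∪ l₂ with l₂ = ⟨s₂, q⟩, q = l₁ ∩ l₂,
    -- and Sing(X ∩ M) = {s₁, s₂, q}
    (∃ q : Fin (N + 1) → ℂ, q ∈ Submodule.span ℂ {s₁, p} ∧ q ≠ 0 ∧
      s₁ ∉ Submodule.span ℂ {s₂, q} ∧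
      {m ∈ (Submodule.span ℂ {s₁, p, s₂} : Set (Fin (N + 1) → ℂ)) |
          MvPolynomial.eval m P = 0}
        = ↑(Submodule.span ℂ {s₁, s₂}) ∪ ↑(Submodule.span ℂ {s₁, p})
            ∪ ↑(Submodule.span ℂ {s₂, q}) ∧
      {m ∈ (Submodule.span ℂ {s₁, p, s₂} : Set (Fin (N + 1) → ℂ)) |
          ∀ w ∈ Submodule.span ℂ {s₁, p, s₂},
            ∑ i, w i * MvPolynomial.eval m (MvPolynomial.pderiv i P) = 0}
        = ↑(Submodule.span ℂ {s₁}) ∪ ↑(Submodule.span ℂ {s₂})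
            ∪ ↑(Submodule.span ℂ {q})) := by
  classical
  -- setup
  set g : Fin (N + 1) → MvPolynomial (Fin 3) ℂ :=
    fun i => C (s₁ i) * X 0 + C (p i) * X 1 + C (s₂ i) * X 2 with hgdef
  set L : (Fin 3 → ℂ) → (Fin (N + 1) → ℂ) :=
    fun v => v 0 • s₁ + v 1 • p + v 2 • s₂ with hLdef
  set Q : MvPolynomial (Fin 3) ℂ := aeval g P with hQdef
  have hgL : ∀ (v : Fin 3 → ℂ) (i : Fin (N + 1)), eval v (g i) = L v i := by
    intro v i
    simp only [hgdef, hLdef, map_add, map_mul, eval_C, eval_X, Pi.add_apply, Pi.smul_apply,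
      smul_eq_mul]
    ring
  have hevalQ : ∀ v : Fin 3 → ℂ, eval v Q = eval (L v) P := by
    intro v
    rw [hQdef, Stmt8Aux.eval_aeval']
    exact congrArg (fun z => eval z P) (funext fun i => hgL v i)
  have hLv : ∀ a b c : ℂ, L ![a, b, c] = a • s₁ + b • p + c • s₂ := by
    intro a b c
    simp only [hLdef]
    norm_num
    rfl
  -- partial derivatives of the g i
  have e10 : (1 : Fin 3) ≠ 0 := by decide
  have e20 : (2 : Fin 3) ≠ 0 := by decide
  have e01 : (0 : Fin 3) ≠ 1 := by decide
  have e21 : (2 : Fin 3) ≠ 1 := by decide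
  have e02 : (0 : Fin 3) ≠ 2 := by decide
  have e12 : (1 : Fin 3) ≠ 2 := by decide
  have hg0 : ∀ i, pderiv (0 : Fin 3) (g i) = C (s₁ i) := by
    intro i
    simp only [hgdef, map_add, pderiv_C_mul, pderiv_X_self, pderiv_X_of_ne e10,
      pderiv_X_of_ne e20, mul_one, mul_zero, add_zero]
  have hg1 : ∀ i, pderiv (1 : Fin 3) (g i) = C (p i) := by
    intro i
    simp only [hgdef, map_add, pderiv_C_mul, pderiv_X_self, pderiv_X_of_ne e01,
      pderiv_X_of_ne e21, mul_one, mul_zero, add_zero, zero_add]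
  have hg2 : ∀ i, pderiv (2 : Fin 3) (g i) = C (s₂ i) := by
    intro i
    simp only [hgdef, map_add, pderiv_C_mul, pderiv_X_self, pderiv_X_of_ne e02,
      pderiv_X_of_ne e12, mul_one, mul_zero, add_zero, zero_add]
  have hpdQ : ∀ (j : Fin 3) (w : Fin (N + 1) → ℂ), (∀ i, pderiv j (g i) = C (w i)) →
      ∀ v : Fin 3 → ℂ, eval v (pderiv j Q) = ∑ i, w i * eval (L v) (pderiv i P) := by
    intro j w hw v
    rw [hQdef, Stmt8Aux.pderiv_aeval', map_sum]
    refine Finset.sum_congr rfl fun i _ => ?_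
    rw [map_mul, hw i, eval_C, Stmt8Aux.eval_aeval']
    rw [mul_comm]
    congr 1
    simp only [hgL]
  have hD0 := hpdQ 0 s₁ hg0
  have hD1 := hpdQ 1 p hg1
  have hD2 := hpdQ 2 s₂ hg2
  -- homogeneity and expansion of Q
  have hQ3 : Q.IsHomogeneous 3 := by
    have hgh : ∀ i, (g i).IsHomogeneous 1 := by
      intro i
      rw [hgdef]
      exact ((isHomogeneous_C_mul_X _ _).add (isHomogeneous_C_mul_X _ _)).add
        (isHomogeneous_C_mul_X _ _)
    have := hP.aeval g hgh
    rw [hQdef]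
    simpa using this
  have hQeq := Stmt8Aux.cubic_expand Q hQ3
  simp only [Stmt8Aux.monomial_d3] at hQeq
  set A300 := coeff (Stmt8Aux.d3 3 0 0) Q with hA300d
  set A210 := coeff (Stmt8Aux.d3 2 1 0) Q with hA210d
  set A201 := coeff (Stmt8Aux.d3 2 0 1) Q with hA201d
  set A120 := coeff (Stmt8Aux.d3 1 2 0) Q with hA120d
  set A111 := coeff (Stmt8Aux.d3 1 1 1) Q with hA111d
  set A102 := coeff (Stmt8Aux.d3 1 0 2) Q with hA102d
  set A030 := coeff (Stmt8Aux.d3 0 3 0) Q with hA030d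
  set A021 := coeff (Stmt8Aux.d3 0 2 1) Q with hA021d
  set A012 := coeff (Stmt8Aux.d3 0 1 2) Q with hA012d
  set A003 := coeff (Stmt8Aux.d3 0 0 3) Q with hA003d
  -- evaluation formulas
  have hEv : ∀ v : Fin 3 → ℂ, eval v Q =
      A300 * v 0 ^ 3 + A210 * (v 0 ^ 2 * v 1) + A201 * (v 0 ^ 2 * v 2)
      + A120 * (v 0 * v 1 ^ 2) + A111 * (v 0 * v 1 * v 2) + A102 * (v 0 * v 2 ^ 2)
      + A030 * v 1 ^ 3 + A021 * (v 1 ^ 2 * v 2) + A012 * (v 1 * v 2 ^ 2)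
      + A003 * v 2 ^ 3 := by
    intro v
    conv_lhs => rw [hQeq]
    simp only [map_add, map_mul, map_pow, eval_C, eval_X]
    ring
  have hEv0 : ∀ v : Fin 3 → ℂ, eval v (pderiv 0 Q) =
      3 * A300 * v 0 ^ 2 + 2 * A210 * (v 0 * v 1) + 2 * A201 * (v 0 * v 2)
      + A120 * v 1 ^ 2 + A111 * (v 1 * v 2) + A102 * v 2 ^ 2 := by
    intro v
    conv_lhs => rw [hQeq]
    simp only [map_add, pderiv_C_mul, pderiv_mul, pderiv_pow, pderiv_X_self,
      pderiv_X_of_ne e10, pderiv_X_of_ne e20, map_add, map_mul, map_pow, eval_C, eval_X,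
      map_ofNat, Nat.cast_ofNat, map_mul]
    norm_num
    ring
  have hEv1 : ∀ v : Fin 3 → ℂ, eval v (pderiv 1 Q) =
      A210 * v 0 ^ 2 + 2 * A120 * (v 0 * v 1) + A111 * (v 0 * v 2)
      + 3 * A030 * v 1 ^ 2 + 2 * A021 * (v 1 * v 2) + A012 * v 2 ^ 2 := by
    intro v
    conv_lhs => rw [hQeq]
    simp only [map_add, pderiv_C_mul, pderiv_mul, pderiv_pow, pderiv_X_self,
      pderiv_X_of_ne e01, pderiv_X_of_ne e21, map_add, map_mul, map_pow, eval_C, eval_X,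
      map_ofNat, Nat.cast_ofNat, map_mul]
    norm_num
    ring
  have hEv2 : ∀ v : Fin 3 → ℂ, eval v (pderiv 2 Q) =
      A201 * v 0 ^ 2 + A111 * (v 0 * v 1) + 2 * A102 * (v 0 * v 2)
      + A021 * v 1 ^ 2 + 2 * A012 * (v 1 * v 2) + 3 * A003 * v 2 ^ 2 := by
    intro v
    conv_lhs => rw [hQeq]
    simp only [map_add, pderiv_C_mul, pderiv_mul, pderiv_pow, pderiv_X_self,
      pderiv_X_of_ne e02, pderiv_X_of_ne e12, map_add, map_mul, map_pow, eval_C, eval_X,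
      map_ofNat, Nat.cast_ofNat, map_mul]
    norm_num
    ring
  -- values on l₁
  have z1 : eval s₁ P = 0 := hl₁X s₁ (Submodule.subset_span (by simp))
  have z2 : eval p P = 0 := hl₁X p (Submodule.subset_span (by simp))
  have z3 : eval (s₁ + p) P = 0 := hl₁X _ (Submodule.mem_span_pair.mpr ⟨1, 1, by module⟩)
  have z4 : eval (s₁ - p) P = 0 := hl₁X _ (Submodule.mem_span_pair.mpr ⟨1, -1, by module⟩)
  have hL100 : L ![1, 0, 0] = s₁ := by rw [hLv]; module
  have hL010 : L ![0, 1, 0] = p := by rw [hLv]; module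
  have hL001 : L ![0, 0, 1] = s₂ := by rw [hLv]; module
  have hL110 : L ![1, 1, 0] = s₁ + p := by rw [hLv]; module
  have hL1m10 : L ![1, -1, 0] = s₁ - p := by rw [hLv]; module
  -- coefficient identities from vanishing on l₁
  have h300 : A300 = 0 := by
    have h := (hevalQ ![1, 0, 0]).symm.trans (hEv ![1, 0, 0])
    rw [hL100, z1] at h
    norm_num [Matrix.cons_val_two, Matrix.vecHead, Matrix.vecTail] at h
    linear_combination -h
  have h030 : A030 = 0 := by
    have h := (hevalQ ![0, 1, 0]).symm.trans (hEv ![0, 1, 0])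
    rw [hL010, z2] at h
    norm_num [Matrix.cons_val_two, Matrix.vecHead, Matrix.vecTail] at h
    linear_combination -h
  have h3 := (hevalQ ![1, 1, 0]).symm.trans (hEv ![1, 1, 0])
  rw [hL110, z3] at h3
  have h4 := (hevalQ ![1, -1, 0]).symm.trans (hEv ![1, -1, 0])
  rw [hL1m10, z4] at h4
  norm_num [Matrix.cons_val_two, Matrix.vecHead, Matrix.vecTail] at h3 h4
  have h210 : A210 = 0 := by linear_combination (h4 - h3) / 2 - h030
  have h120 : A120 = 0 := by linear_combination -(h3 + h4) / 2 - h300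
  -- gradient vanishing at s₁ and s₂
  have g10 : eval ![(1:ℂ), 0, 0] (pderiv 0 Q) = 0 := by
    rw [hD0 ![1, 0, 0], hL100]; simp [hs₁]
  have g12 : eval ![(1:ℂ), 0, 0] (pderiv 2 Q) = 0 := by
    rw [hD2 ![1, 0, 0], hL100]; simp [hs₁]
  have g20 : eval ![(0:ℂ), 0, 1] (pderiv 0 Q) = 0 := by
    rw [hD0 ![0, 0, 1], hL001]; simp [hs₂]
  have g21 : eval ![(0:ℂ), 0, 1] (pderiv 1 Q) = 0 := by
    rw [hD1 ![0, 0, 1], hL001]; simp [hs₂]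
  have g22 : eval ![(0:ℂ), 0, 1] (pderiv 2 Q) = 0 := by
    rw [hD2 ![0, 0, 1], hL001]; simp [hs₂]
  have h201 : A201 = 0 := by
    have h := (hEv2 ![1, 0, 0]).symm.trans g12
    norm_num [Matrix.cons_val_two, Matrix.vecHead, Matrix.vecTail] at h
    exact h
  have h003 : A003 = 0 := by
    have h := (hEv2 ![0, 0, 1]).symm.trans g22
    norm_num [Matrix.cons_val_two, Matrix.vecHead, Matrix.vecTail] at h
    linear_combination h
  have h102 : A102 = 0 := by
    have h := (hEv0 ![0, 0, 1]).symm.trans g20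
    norm_num [Matrix.cons_val_two, Matrix.vecHead, Matrix.vecTail] at h
    exact h
  have h012 : A012 = 0 := by
    have h := (hEv1 ![0, 0, 1]).symm.trans g21
    norm_num [Matrix.cons_val_two, Matrix.vecHead, Matrix.vecTail] at h
    exact h
  -- reduced evaluation formulas
  have hF : ∀ a b c : ℂ, eval (a • s₁ + b • p + c • s₂) P
      = b * c * (A111 * a + A021 * b) := by
    intro a b c
    rw [← hLv a b c, ← hevalQ, hEv ![a, b, c], h300, h210, h201, h120, h102, h030, h012, h003]
    norm_num [Matrix.cons_val_two, Matrix.vecHead, Matrix.vecTail]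
    ring
  have hB0 : ∀ a b c : ℂ, (∑ i, s₁ i * eval (a • s₁ + b • p + c • s₂) (pderiv i P))
      = A111 * (b * c) := by
    intro a b c
    rw [← hLv a b c, ← hD0 ![a, b, c], hEv0 ![a, b, c], h300, h210, h201, h120, h102]
    norm_num [Matrix.cons_val_two, Matrix.vecHead, Matrix.vecTail]
  have hB1 : ∀ a b c : ℂ, (∑ i, p i * eval (a • s₁ + b • p + c • s₂) (pderiv i P))
      = A111 * (a * c) + 2 * A021 * (b * c) := by
    intro a b c
    rw [← hLv a b c, ← hD1 ![a, b, c], hEv1 ![a, b, c], h210, h120, h030, h012]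
    norm_num [Matrix.cons_val_two, Matrix.vecHead, Matrix.vecTail]
  have hB2 : ∀ a b c : ℂ, (∑ i, s₂ i * eval (a • s₁ + b • p + c • s₂) (pderiv i P))
      = A111 * (a * b) + A021 * b ^ 2 := by
    intro a b c
    rw [← hLv a b c, ← hD2 ![a, b, c], hEv2 ![a, b, c], h201, h102, h012, h003]
    norm_num [Matrix.cons_val_two, Matrix.vecHead, Matrix.vecTail]
  -- singular-locus characterisation
  have hSing : ∀ a b c : ℂ,
      ((∀ w ∈ Submodule.span ℂ {s₁, p, s₂},
          ∑ i, w i * eval (a • s₁ + b • p + c • s₂) (pderiv i P) = 0)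
        ↔ (A111 * (b * c) = 0 ∧ A111 * (a * c) + 2 * A021 * (b * c) = 0
            ∧ A111 * (a * b) + A021 * b ^ 2 = 0)) := by
    intro a b c
    constructor
    · intro h
      exact ⟨by rw [← hB0 a b c]; exact h s₁ (Submodule.subset_span (by simp)),
             by rw [← hB1 a b c]; exact h p (Submodule.subset_span (by simp)),
             by rw [← hB2 a b c]; exact h s₂ (Submodule.subset_span (by simp))⟩
    · rintro ⟨h1, h2, h3⟩ w hw
      obtain ⟨x, y, z, rfl⟩ := Stmt8Aux.mem_span_triple.mp hw
      have expand : (∑ i, (x • s₁ + y • p + z • s₂) i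
            * eval (a • s₁ + b • p + c • s₂) (pderiv i P))
          = x * (∑ i, s₁ i * eval (a • s₁ + b • p + c • s₂) (pderiv i P))
          + y * (∑ i, p i * eval (a • s₁ + b • p + c • s₂) (pderiv i P))
          + z * (∑ i, s₂ i * eval (a • s₁ + b • p + c • s₂) (pderiv i P)) := by
        rw [Finset.mul_sum, Finset.mul_sum, Finset.mul_sum, ← Finset.sum_add_distrib,
          ← Finset.sum_add_distrib]
        refine Finset.sum_congr rfl fun i _ => ?_
        simp only [Pi.add_apply, Pi.smul_apply, smul_eq_mul]
        ring
      rw [expand, hB0, hB1, hB2, h1, h2, h3]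
      ring
  -- not both coefficients vanish
  have hβγ : ¬(A111 = 0 ∧ A021 = 0) := by
    rintro ⟨hb, hc⟩
    obtain ⟨m, hmM, hm⟩ := hMX
    obtain ⟨a, b, c, rfl⟩ := Stmt8Aux.mem_span_triple.mp hmM
    exact hm (by rw [hF a b c, hb, hc]; ring)
  -- coordinates are unique
  have hzero : ∀ a b c : ℂ, a • s₁ + b • p + c • s₂ = 0 → a = 0 ∧ b = 0 ∧ c = 0 := by
    intro a b c h
    have hc : c = 0 := by
      by_contra hc
      apply hs₂l₁
      refine Submodule.mem_span_pair.mpr ⟨-(a / c), -(b / c), ?_⟩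
      have h3 : c • s₂ = -(a • s₁) - b • p := by linear_combination (norm := module) h
      refine smul_right_injective (Fin (N + 1) → ℂ) hc ?_
      show c • (-(a / c) • s₁ + -(b / c) • p) = c • s₂
      rw [h3]
      match_scalars <;> field_simp <;> ring
    subst hc
    have h4 : a • s₁ + b • p = 0 := by linear_combination (norm := module) h
    obtain ⟨ha, hb⟩ := LinearIndependent.pair_iff.mp hl₁ a b h4
    exact ⟨ha, hb, rfl⟩
  have hcoords : ∀ a b c a' b' c' : ℂ,
      a • s₁ + b • p + c • s₂ = a' • s₁ + b' • p + c' • s₂ →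
        a = a' ∧ b = b' ∧ c = c' := by
    intro a b c a' b' c' h
    have h0 := hzero (a - a') (b - b') (c - c') (by linear_combination (norm := module) h)
    exact ⟨by linear_combination h0.1, by linear_combination h0.2.1, by linear_combination h0.2.2⟩
  -- membership characterisations
  have hmem12 : ∀ a b c : ℂ,
      (a • s₁ + b • p + c • s₂ ∈ Submodule.span ℂ ({s₁, s₂} : Set (Fin (N + 1) → ℂ)) ↔ b = 0) := by
    intro a b c
    constructor
    · intro h
      obtain ⟨x, y, hxy⟩ := Submodule.mem_span_pair.mp h
      have h2 : x • s₁ + (0 : ℂ) • p + y • s₂ = a • s₁ + b • p + c • s₂ := by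
        linear_combination (norm := module) hxy
      exact ((hcoords _ _ _ _ _ _ h2).2.1).symm
    · rintro rfl
      exact Submodule.mem_span_pair.mpr ⟨a, c, by module⟩
  have hmem1p : ∀ a b c : ℂ,
      (a • s₁ + b • p + c • s₂ ∈ Submodule.span ℂ ({s₁, p} : Set (Fin (N + 1) → ℂ)) ↔ c = 0) := by
    intro a b c
    constructor
    · intro h
      obtain ⟨x, y, hxy⟩ := Submodule.mem_span_pair.mp h
      have h2 : x • s₁ + y • p + (0 : ℂ) • s₂ = a • s₁ + b • p + c • s₂ := by
        linear_combination (norm := module) hxy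
      exact ((hcoords _ _ _ _ _ _ h2).2.2).symm
    · rintro rfl
      exact Submodule.mem_span_pair.mpr ⟨a, b, by module⟩
  have hmem1 : ∀ a b c : ℂ,
      (a • s₁ + b • p + c • s₂ ∈ Submodule.span ℂ ({s₁} : Set (Fin (N + 1) → ℂ))
        ↔ b = 0 ∧ c = 0) := by
    intro a b c
    constructor
    · intro h
      obtain ⟨x, hx⟩ := Submodule.mem_span_singleton.mp h
      have h2 : x • s₁ + (0 : ℂ) • p + (0 : ℂ) • s₂ = a • s₁ + b • p + c • s₂ := by
        linear_combination (norm := module) hx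
      have h0 := hcoords _ _ _ _ _ _ h2
      exact ⟨h0.2.1.symm, h0.2.2.symm⟩
    · rintro ⟨rfl, rfl⟩
      exact Submodule.mem_span_singleton.mpr ⟨a, by module⟩
  have hmem2 : ∀ a b c : ℂ,
      (a • s₁ + b • p + c • s₂ ∈ Submodule.span ℂ ({s₂} : Set (Fin (N + 1) → ℂ))
        ↔ a = 0 ∧ b = 0) := by
    intro a b c
    constructor
    · intro h
      obtain ⟨x, hx⟩ := Submodule.mem_span_singleton.mp h
      have h2 : (0 : ℂ) • s₁ + (0 : ℂ) • p + x • s₂ = a • s₁ + b • p + c • s₂ := by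
        linear_combination (norm := module) hx
      have h0 := hcoords _ _ _ _ _ _ h2
      exact ⟨h0.1.symm, h0.2.1.symm⟩
    · rintro ⟨rfl, rfl⟩
      exact Submodule.mem_span_singleton.mpr ⟨c, by module⟩
  -- main case split
  by_cases hβ : A111 = 0
  · -- case (i)
    have hγ : A021 ≠ 0 := fun h => hβγ ⟨hβ, h⟩
    left
    constructor
    · ext m
      simp only [Set.mem_setOf_eq, Set.mem_union, SetLike.mem_coe]
      constructor
      · rintro ⟨hmM, hm0⟩
        obtain ⟨a, b, c, rfl⟩ := Stmt8Aux.mem_span_triple.mp hmM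
        rw [hF a b c, hβ] at hm0
        have hbc : b = 0 ∨ c = 0 := by
          have h2 : A021 * (b * (b * c)) = 0 := by linear_combination hm0
          rcases mul_eq_zero.mp h2 with h | h
          · exact absurd h hγ
          · rcases mul_eq_zero.mp h with h' | h'
            · exact Or.inl h'
            · rcases mul_eq_zero.mp h' with h'' | h''
              · exact Or.inl h''
              · exact Or.inr h''
        rcases hbc with h | h
        · exact Or.inl ((hmem12 a b c).mpr h)
        · exact Or.inr ((hmem1p a b c).mpr h)
      · rintro (hm | hm)
        · obtain ⟨x, y, hxy⟩ := Submodule.mem_span_pair.mp hm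
          have hm' : x • s₁ + (0 : ℂ) • p + y • s₂ = m := by
            linear_combination (norm := module) hxy
          refine ⟨?_, ?_⟩
          · rw [← hm']; exact Stmt8Aux.mem_span_triple.mpr ⟨x, 0, y, rfl⟩
          · rw [← hm', hF]; ring
        · obtain ⟨x, y, hxy⟩ := Submodule.mem_span_pair.mp hm
          have hm' : x • s₁ + y • p + (0 : ℂ) • s₂ = m := by
            linear_combination (norm := module) hxy
          refine ⟨?_, ?_⟩
          · rw [← hm']; exact Stmt8Aux.mem_span_triple.mpr ⟨x, y, 0, rfl⟩
          · rw [← hm', hF]; ring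
    · ext m
      simp only [Set.mem_setOf_eq, SetLike.mem_coe]
      constructor
      · rintro ⟨hmM, hsing⟩
        obtain ⟨a, b, c, rfl⟩ := Stmt8Aux.mem_span_triple.mp hmM
        obtain ⟨h1, h2, h3⟩ := (hSing a b c).mp hsing
        have hb2 : A021 * b ^ 2 = 0 := by linear_combination h3 - (a * b) * hβ
        have hb : b = 0 := by
          have := (mul_eq_zero.mp hb2).resolve_left hγ
          exact (pow_eq_zero_iff two_ne_zero).mp this
        exact (hmem12 a b c).mpr hb
      · intro hm
        obtain ⟨x, y, hxy⟩ := Submodule.mem_span_pair.mp hm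
        have hm' : x • s₁ + (0 : ℂ) • p + y • s₂ = m := by
          linear_combination (norm := module) hxy
        refine ⟨?_, ?_⟩
        · rw [← hm']; exact Stmt8Aux.mem_span_triple.mpr ⟨x, 0, y, rfl⟩
        · rw [← hm']
          refine (hSing x 0 y).mpr ⟨by rw [hβ]; ring, by rw [hβ]; ring, by rw [hβ]; ring⟩
  · -- case (ii)
    right
    have hmem2q : ∀ a b c : ℂ,
        (a • s₁ + b • p + c • s₂ ∈
            Submodule.span ℂ ({s₂, A021 • s₁ - A111 • p} : Set (Fin (N + 1) → ℂ))
          ↔ A111 * a + A021 * b = 0) := by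
      intro a b c
      constructor
      · intro h
        obtain ⟨x, y, hxy⟩ := Submodule.mem_span_pair.mp h
        have h2 : (y * A021) • s₁ + (-(y * A111)) • p + x • s₂ = a • s₁ + b • p + c • s₂ := by
          linear_combination (norm := module) hxy
        obtain ⟨e1, e2, e3⟩ := hcoords _ _ _ _ _ _ h2
        linear_combination -A111 * e1 - A021 * e2
      · intro h
        refine Submodule.mem_span_pair.mpr ⟨c, -(b / A111), ?_⟩
        match_scalars <;> field_simp <;> linear_combination -h
    have hmemq : ∀ a b c : ℂ,
        (a • s₁ + b • p + c • s₂ ∈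
            Submodule.span ℂ ({A021 • s₁ - A111 • p} : Set (Fin (N + 1) → ℂ))
          ↔ A111 * a + A021 * b = 0 ∧ c = 0) := by
      intro a b c
      constructor
      · intro h
        obtain ⟨t, ht⟩ := Submodule.mem_span_singleton.mp h
        have h2 : (t * A021) • s₁ + (-(t * A111)) • p + (0 : ℂ) • s₂
            = a • s₁ + b • p + c • s₂ := by
          linear_combination (norm := module) ht
        obtain ⟨e1, e2, e3⟩ := hcoords _ _ _ _ _ _ h2
        exact ⟨by linear_combination -A111 * e1 - A021 * e2, e3.symm⟩
      · rintro ⟨h, rfl⟩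
        refine Submodule.mem_span_singleton.mpr ⟨-(b / A111), ?_⟩
        match_scalars <;> field_simp <;> linear_combination -h
    refine ⟨A021 • s₁ - A111 • p,
      Submodule.mem_span_pair.mpr ⟨A021, -A111, by module⟩, ?_, ?_, ?_, ?_⟩
    · intro h
      have h0 := hzero A021 (-A111) 0 (by linear_combination (norm := module) h)
      exact hβ (by linear_combination -h0.2.1)
    · intro h
      obtain ⟨x, y, hxy⟩ := Submodule.mem_span_pair.mp h
      have h2 : (y * A021) • s₁ + (-(y * A111)) • p + x • s₂
          = (1 : ℂ) • s₁ + (0 : ℂ) • p + (0 : ℂ) • s₂ := by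
        linear_combination (norm := module) hxy
      obtain ⟨e1, e2, e3⟩ := hcoords _ _ _ _ _ _ h2
      have hy : y = 0 := by
        rcases mul_eq_zero.mp (neg_eq_zero.mp e2) with h' | h'
        · exact h'
        · exact absurd h' hβ
      rw [hy] at e1
      norm_num at e1
    · ext m
      simp only [Set.mem_setOf_eq, Set.mem_union, SetLike.mem_coe]
      constructor
      · rintro ⟨hmM, hm0⟩
        obtain ⟨a, b, c, rfl⟩ := Stmt8Aux.mem_span_triple.mp hmM
        rw [hF a b c] at hm0
        rcases mul_eq_zero.mp hm0 with h | h
        · rcases mul_eq_zero.mp h with h' | h'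
          · exact Or.inl (Or.inl ((hmem12 a b c).mpr h'))
          · exact Or.inl (Or.inr ((hmem1p a b c).mpr h'))
        · exact Or.inr ((hmem2q a b c).mpr h)
      · rintro ((hm | hm) | hm)
        · obtain ⟨x, y, hxy⟩ := Submodule.mem_span_pair.mp hm
          have hm' : x • s₁ + (0 : ℂ) • p + y • s₂ = m := by
            linear_combination (norm := module) hxy
          exact ⟨by rw [← hm']; exact Stmt8Aux.mem_span_triple.mpr ⟨x, 0, y, rfl⟩,
            by rw [← hm', hF]; ring⟩
        · obtain ⟨x, y, hxy⟩ := Submodule.mem_span_pair.mp hm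
          have hm' : x • s₁ + y • p + (0 : ℂ) • s₂ = m := by
            linear_combination (norm := module) hxy
          exact ⟨by rw [← hm']; exact Stmt8Aux.mem_span_triple.mpr ⟨x, y, 0, rfl⟩,
            by rw [← hm', hF]; ring⟩
        · obtain ⟨x, y, hxy⟩ := Submodule.mem_span_pair.mp hm
          have hm' : (y * A021) • s₁ + (-(y * A111)) • p + x • s₂ = m := by
            linear_combination (norm := module) hxy
          exact ⟨by rw [← hm']; exact Stmt8Aux.mem_span_triple.mpr ⟨_, _, _, rfl⟩,
            by rw [← hm', hF]; ring⟩
    · ext m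
      simp only [Set.mem_setOf_eq, Set.mem_union, SetLike.mem_coe]
      constructor
      · rintro ⟨hmM, hsing⟩
        obtain ⟨a, b, c, rfl⟩ := Stmt8Aux.mem_span_triple.mp hmM
        obtain ⟨h1, h2, h3⟩ := (hSing a b c).mp hsing
        have hbc : b * c = 0 := (mul_eq_zero.mp h1).resolve_left hβ
        rcases mul_eq_zero.mp hbc with hb | hc
        · have hac : a * c = 0 := by
            have h2' : A111 * (a * c) = 0 := by linear_combination h2 - 2 * c * A021 * hb
            exact (mul_eq_zero.mp h2').resolve_left hβ
          rcases mul_eq_zero.mp hac with ha | hc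
          · exact Or.inl (Or.inr ((hmem2 a b c).mpr ⟨ha, hb⟩))
          · exact Or.inl (Or.inl ((hmem1 a b c).mpr ⟨hb, hc⟩))
        · have h3' : b * (A111 * a + A021 * b) = 0 := by linear_combination h3
          rcases mul_eq_zero.mp h3' with hb | hr
          · exact Or.inl (Or.inl ((hmem1 a b c).mpr ⟨hb, hc⟩))
          · exact Or.inr ((hmemq a b c).mpr ⟨hr, hc⟩)
      · rintro ((hm | hm) | hm)
        · obtain ⟨t, ht⟩ := Submodule.mem_span_singleton.mp hm
          have hm' : t • s₁ + (0 : ℂ) • p + (0 : ℂ) • s₂ = m := by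
            linear_combination (norm := module) ht
          exact ⟨by rw [← hm']; exact Stmt8Aux.mem_span_triple.mpr ⟨_, _, _, rfl⟩,
            by rw [← hm']; exact (hSing t 0 0).mpr ⟨by ring, by ring, by ring⟩⟩
        · obtain ⟨t, ht⟩ := Submodule.mem_span_singleton.mp hm
          have hm' : (0 : ℂ) • s₁ + (0 : ℂ) • p + t • s₂ = m := by
            linear_combination (norm := module) ht
          exact ⟨by rw [← hm']; exact Stmt8Aux.mem_span_triple.mpr ⟨_, _, _, rfl⟩,
            by rw [← hm']; exact (hSing 0 0 t).mpr ⟨by ring, by ring, by ring⟩⟩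
        · obtain ⟨t, ht⟩ := Submodule.mem_span_singleton.mp hm
          have hm' : (t * A021) • s₁ + (-(t * A111)) • p + (0 : ℂ) • s₂ = m := by
            linear_combination (norm := module) ht
          exact ⟨by rw [← hm']; exact Stmt8Aux.mem_span_triple.mpr ⟨_, _, _, rfl⟩,
            by rw [← hm']; exact (hSing _ _ _).mpr ⟨by ring, by ring, by ring⟩⟩
end

section
/- Let X ⊂ P^N be a cubic hypersurface, x ∈ X a smooth point such that the closure F of the Gauss-map fiber through x is a line, and w ∈ Sing(X) ∩ T_x X a point not on F. Then the 2-plane ⟨F, w⟩ spanned by F and w is contained in X; in particular the line ⟨xw⟩ lies in X. -/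
open MvPolynomial

section StmtNineAux

open Polynomial

noncomputable def lineSub {m : ℕ} (u w : Fin m → ℂ) : Fin m → Polynomial ℂ :=
  fun i => Polynomial.C (u i) + Polynomial.C (w i) * Polynomial.X

lemma eval_lineSub {m : ℕ} (u w : Fin m → ℂ) (Q : MvPolynomial (Fin m) ℂ) (t : ℂ) :
    (MvPolynomial.aeval (lineSub u w) Q).eval t
      = MvPolynomial.eval (fun i => u i + t * w i) Q := by
  induction Q using MvPolynomial.induction_on with
  | C a => simp
  | add p q hp hq => simp [hp, hq]
  | mul_X p j hp =>
      simp only [map_mul, MvPolynomial.aeval_X, Polynomial.eval_mul, hp, lineSub,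
        Polynomial.eval_add, Polynomial.eval_C, Polynomial.eval_X, MvPolynomial.eval_X]
      ring

lemma derivative_lineSub {m : ℕ} (u w : Fin m → ℂ) (Q : MvPolynomial (Fin m) ℂ) :
    Polynomial.derivative (MvPolynomial.aeval (lineSub u w) Q)
      = ∑ i, Polynomial.C (w i) * MvPolynomial.aeval (lineSub u w) (MvPolynomial.pderiv i Q) := by
  induction Q using MvPolynomial.induction_on with
  | C a => simp
  | add p q hp hq => simp [hp, hq, mul_add, Finset.sum_add_distrib]
  | mul_X p j hp =>
      have h1 : Polynomial.derivative (lineSub u w j) = Polynomial.C (w j) := by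
        simp [lineSub]
      simp only [map_mul, MvPolynomial.aeval_X, derivative_mul, hp, h1, MvPolynomial.pderiv_mul,
        MvPolynomial.pderiv_X, map_add, mul_add, Finset.sum_add_distrib]
      congr 1
      · rw [Finset.sum_mul]
        exact Finset.sum_congr rfl fun i _ => (mul_assoc _ _ _)
      · rw [Finset.sum_eq_single j]
        · simp [mul_comm]
        · intro i _ hij
          simp [Pi.single_apply, hij]
        · simp

lemma natDegree_lineSub_le {m n : ℕ} (u w : Fin m → ℂ) {Q : MvPolynomial (Fin m) ℂ}
    (hQ : Q.IsHomogeneous n) :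
    (MvPolynomial.aeval (lineSub u w) Q).natDegree ≤ n := by
  rw [Q.as_sum, map_sum]
  apply Polynomial.natDegree_sum_le_of_forall_le
  intro d hd
  rw [MvPolynomial.aeval_monomial]
  apply (Polynomial.natDegree_mul_le).trans
  have h1 : (algebraMap ℂ (Polynomial ℂ) (MvPolynomial.coeff d Q)).natDegree = 0 := by
    simp [Polynomial.natDegree_C]
  rw [h1, zero_add]
  apply (Polynomial.natDegree_prod_le _ _).trans
  calc ∑ i ∈ d.support, ((lineSub u w i) ^ d i).natDegree
      ≤ ∑ i ∈ d.support, d i := by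
        apply Finset.sum_le_sum
        intro i _
        apply (Polynomial.natDegree_pow_le).trans
        have : (lineSub u w i).natDegree ≤ 1 := by
          apply (Polynomial.natDegree_add_le _ _).trans
          simp [Polynomial.natDegree_C]
          exact (Polynomial.natDegree_C_mul_le _ _).trans (by simp)
        calc d i * (lineSub u w i).natDegree ≤ d i * 1 := Nat.mul_le_mul_left _ this
          _ = d i := Nat.mul_one _
    _ = n := by
        have := hQ (MvPolynomial.mem_support_iff.mp hd)
        simpa [Finsupp.weight_apply, Finsupp.sum] using this

lemma eval_smul_of_homog {m n : ℕ} {Q : MvPolynomial (Fin m) ℂ}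
    (hQ : Q.IsHomogeneous n) (t : ℂ) (v : Fin m → ℂ) :
    MvPolynomial.eval (fun i => t * v i) Q = t ^ n * MvPolynomial.eval v Q := by
  rw [MvPolynomial.eval_eq', MvPolynomial.eval_eq', Finset.mul_sum]
  apply Finset.sum_congr rfl
  intro d hd
  have hdeg : ∑ i, d i = n := by
    have h := hQ (MvPolynomial.mem_support_iff.mp hd)
    rw [← h]
    simp [Finsupp.weight_apply, Finsupp.sum]
    exact (Finset.sum_subset (Finset.subset_univ d.support) (by
      intro i _ hi; simpa using Finsupp.notMem_support_iff.mp hi)).symm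
  rw [show (∏ i, (t * v i) ^ d i) = (∏ i, t ^ d i) * ∏ i, v i ^ d i by
    rw [← Finset.prod_mul_distrib]; exact Finset.prod_congr rfl fun i _ => mul_pow _ _ _]
  rw [Finset.prod_pow_eq_pow_sum, hdeg]
  ring

/-- Euler-type consequence: a cubic vanishes at any singular point. -/
lemma eval_eq_zero_of_sing {m : ℕ} {Q : MvPolynomial (Fin m) ℂ} (hQ : Q.IsHomogeneous 3)
    (w : Fin m → ℂ) (hw : ∀ i, MvPolynomial.eval w (MvPolynomial.pderiv i Q) = 0) :
    MvPolynomial.eval w Q = 0 := by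
  set c : ℂ := MvPolynomial.eval w Q with hc
  set g := MvPolynomial.aeval (lineSub 0 w) Q with hg
  have hge : ∀ t : ℂ, g.eval t = c * t ^ 3 := by
    intro t
    rw [hg, eval_lineSub]
    have h0 : (fun i => (0 : Fin m → ℂ) i + t * w i) = fun i => t * w i := by
      funext i; simp
    rw [h0, eval_smul_of_homog hQ t w]
    ring
  have hgeq : g = Polynomial.C c * Polynomial.X ^ 3 := by
    apply Polynomial.eq_of_infinite_eval_eq
    refine Set.infinite_of_injective_forall_mem (f := (id : ℂ → ℂ))
      (fun a b hab => hab) fun t => ?_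
    simp only [Set.mem_setOf_eq, hge t, Polynomial.eval_mul, Polynomial.eval_C,
      Polynomial.eval_pow, Polynomial.eval_X, id]
  have hd : (Polynomial.derivative g).eval 1 = 3 * c := by
    rw [hgeq]
    simp
    ring
  have hd2 : (Polynomial.derivative g).eval 1 = 0 := by
    rw [hg, derivative_lineSub, Polynomial.eval_finset_sum]
    apply Finset.sum_eq_zero
    intro i _
    rw [Polynomial.eval_mul, Polynomial.eval_C, eval_lineSub]
    have h0 : (fun j => (0 : Fin m → ℂ) j + 1 * w j) = w := by funext j; simp
    rw [h0, hw i, mul_zero]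
  have h30 : (3 : ℂ) * c = 0 := by rw [← hd, hd2]
  rcases mul_eq_zero.mp h30 with h | h
  · exact absurd h (by norm_num)
  · exact h

end StmtNineAux

/-- if the closure `F = ⟨x, z⟩` of the Gauss fiber through the
smooth point `x` of the cubic `X = {P = 0}` is a line (with `z ∈ F ∩ Sing X`),
and `w ∈ Sing(X) ∩ T_x X` does not lie on `F`, then the 2-plane `⟨F, w⟩` is
contained in `X`; in particular so is the line `⟨x, w⟩`. -/
theorem stmt9 {N : ℕ} (P : MvPolynomial (Fin (N + 1)) ℂ) (hP : P.IsHomogeneous 3)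
    (x z w : Fin (N + 1) → ℂ)
    (hxX : MvPolynomial.eval x P = 0) (hxsm : gradP P x ≠ 0)
    (hz : ∀ i, MvPolynomial.eval z (MvPolynomial.pderiv i P) = 0)
    (hxz : LinearIndependent ℂ ![x, z])
    (hFX : ∀ v ∈ Submodule.span ℂ {x, z}, MvPolynomial.eval v P = 0)
    (hcontract : ∀ v ∈ Submodule.span ℂ {x, z}, ∃ c : ℂ, gradP P v = c • gradP P x)
    (hw : ∀ i, MvPolynomial.eval w (MvPolynomial.pderiv i P) = 0) (hw0 : w ≠ 0)
    (hwT : ∑ i, w i * MvPolynomial.eval x (MvPolynomial.pderiv i P) = 0)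
    (hwF : w ∉ Submodule.span ℂ {x, z}) :
    ∀ v ∈ Submodule.span ℂ {x, z, w}, MvPolynomial.eval v P = 0 := by
  intro v hv
  -- decompose v = u + c • w with u ∈ span {x, z}
  rw [show ({x, z, w} : Set (Fin (N+1) → ℂ)) = insert x (insert z {w}) from rfl,
    Submodule.mem_span_insert] at hv
  obtain ⟨a, y, hy, rfl⟩ := hv
  rw [Submodule.mem_span_insert] at hy
  obtain ⟨b, y', hy', rfl⟩ := hy
  rw [Submodule.mem_span_singleton] at hy'
  obtain ⟨c, rfl⟩ := hy'
  set u : Fin (N+1) → ℂ := a • x + b • z with hu_def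
  have hu : u ∈ Submodule.span ℂ ({x, z} : Set (Fin (N+1) → ℂ)) := by
    apply Submodule.add_mem
    · exact Submodule.smul_mem _ _ (Submodule.subset_span (by simp))
    · exact Submodule.smul_mem _ _ (Submodule.subset_span (by simp))
  have hv_eq : a • x + (b • z + c • w) = fun i => u i + c * w i := by
    funext i; simp [hu_def]; ring
  rw [hv_eq]
  set g := MvPolynomial.aeval (lineSub u w) P with hg
  set h := MvPolynomial.aeval (lineSub w u) P with hh
  have hg_eval : ∀ t : ℂ, g.eval t = MvPolynomial.eval (fun i => u i + t * w i) P :=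
    fun t => eval_lineSub u w P t
  have hh_eval : ∀ t : ℂ, h.eval t = MvPolynomial.eval (fun i => w i + t * u i) P :=
    fun t => eval_lineSub w u P t
  -- coefficient facts
  have hg0 : g.coeff 0 = 0 := by
    rw [Polynomial.coeff_zero_eq_eval_zero, hg_eval 0]
    have h0 : (fun i => u i + 0 * w i) = u := by funext i; ring
    rw [h0]
    exact hFX u hu
  have hg1 : g.coeff 1 = 0 := by
    obtain ⟨c', hc'⟩ := hcontract u hu
    have hgrad : ∀ i, MvPolynomial.eval u (MvPolynomial.pderiv i P)
        = c' * MvPolynomial.eval x (MvPolynomial.pderiv i P) := by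
      intro i
      have := congrFun hc' i
      simpa [gradP] using this
    have h2 : (Polynomial.derivative g).coeff 0 = g.coeff 1 := by
      rw [Polynomial.coeff_derivative]
      push_cast
      ring
    rw [← h2, hg, derivative_lineSub, Polynomial.finset_sum_coeff]
    have h3 : ∀ i ∈ Finset.univ, (Polynomial.C (w i)
        * MvPolynomial.aeval (lineSub u w) (MvPolynomial.pderiv i P)).coeff 0
        = c' * (w i * MvPolynomial.eval x (MvPolynomial.pderiv i P)) := by
      intro i _
      rw [Polynomial.coeff_C_mul, Polynomial.coeff_zero_eq_eval_zero, eval_lineSub]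
      have h0 : (fun j => u j + 0 * w j) = u := by funext j; ring
      rw [h0, hgrad i]
      ring
    rw [Finset.sum_congr rfl h3, ← Finset.mul_sum, hwT, mul_zero]
  have hh0 : h.coeff 0 = 0 := by
    rw [Polynomial.coeff_zero_eq_eval_zero, hh_eval 0]
    have h0 : (fun i => w i + 0 * u i) = w := by funext i; ring
    rw [h0]
    exact eval_eq_zero_of_sing hP w hw
  have hh1 : h.coeff 1 = 0 := by
    have h2 : (Polynomial.derivative h).coeff 0 = h.coeff 1 := by
      rw [Polynomial.coeff_derivative]
      push_cast
      ring
    rw [← h2, hh, derivative_lineSub, Polynomial.finset_sum_coeff]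
    apply Finset.sum_eq_zero
    intro i _
    rw [Polynomial.coeff_C_mul, Polynomial.coeff_zero_eq_eval_zero, eval_lineSub]
    have h0 : (fun j => w j + 0 * u j) = w := by funext j; ring
    rw [h0, hw i, mul_zero]
  -- degree bounds and expansions
  have hgd : g.natDegree < 4 := lt_of_le_of_lt (natDegree_lineSub_le u w hP) (by norm_num)
  have hhd : h.natDegree < 4 := lt_of_le_of_lt (natDegree_lineSub_le w u hP) (by norm_num)
  have hge : ∀ t : ℂ, g.eval t = g.coeff 2 * t ^ 2 + g.coeff 3 * t ^ 3 := by
    intro t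
    rw [Polynomial.eval_eq_sum_range' hgd]
    simp [Finset.sum_range_succ, hg0, hg1]
  have hhe : ∀ t : ℂ, h.eval t = h.coeff 2 * t ^ 2 + h.coeff 3 * t ^ 3 := by
    intro t
    rw [Polynomial.eval_eq_sum_range' hhd]
    simp [Finset.sum_range_succ, hh0, hh1]
  -- the scaling relation
  have key : ∀ t : ℂ, t ≠ 0 →
      g.coeff 2 * t ^ 2 + g.coeff 3 * t ^ 3 = h.coeff 2 * t + h.coeff 3 := by
    intro t ht
    have h1 : g.eval t = t ^ 3 * h.eval (1 / t) := by
      rw [hg_eval, hh_eval]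
      have h0 : (fun i => u i + t * w i) = fun i => t * (w i + (1 / t) * u i) := by
        funext i; field_simp; ring
      rw [h0, eval_smul_of_homog hP]
    rw [hge t, hhe (1 / t)] at h1
    rw [h1]
    field_simp
  -- conclude coefficients vanish via infinitely many roots
  set q : Polynomial ℂ := Polynomial.C (g.coeff 2) * Polynomial.X ^ 2
      + Polynomial.C (g.coeff 3) * Polynomial.X ^ 3
      - Polynomial.C (h.coeff 2) * Polynomial.X - Polynomial.C (h.coeff 3) with hq_def
  have hq : q = 0 := by
    apply Polynomial.eq_zero_of_infinite_isRoot
    apply Set.Infinite.mono (s := {t : ℂ | t ≠ 0})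
    · intro t ht
      have := key t ht
      simp only [Set.mem_setOf_eq, Polynomial.IsRoot, hq_def, Polynomial.eval_sub,
        Polynomial.eval_add, Polynomial.eval_mul, Polynomial.eval_C, Polynomial.eval_pow,
        Polynomial.eval_X]
      rw [this]
      ring
    · have : ({t : ℂ | t ≠ 0}) = ({0}ᶜ : Set ℂ) := by ext t; simp
      rw [this]
      exact Set.Finite.infinite_compl (Set.finite_singleton 0)
  have hg2 : g.coeff 2 = 0 := by
    have := congrArg (fun p => Polynomial.coeff p 2) hq
    simpa [hq_def, Polynomial.coeff_X] using this
  have hg3 : g.coeff 3 = 0 := by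
    have := congrArg (fun p => Polynomial.coeff p 3) hq
    simpa [hq_def, Polynomial.coeff_X] using this
  have : MvPolynomial.eval (fun i => u i + c * w i) P = g.eval c := (hg_eval c).symm
  rw [this, hge c, hg2, hg3]
  ring
end

section
/- Let X ⊂ P^N be a cubic hypersurface and F ⊂ X a line contracted to a point under the Gauss map, with F ∩ Sing(X) = {z}. Let s ∈ Sing(X) be a point with ⟨sz⟩ ⊄ Sing(X). Then F ⊂ T_y X for every y ∈ ⟨sz⟩ \ Sing(X). -/
open MvPolynomial

section AuxSection
open Polynomial


set_option linter.unusedSectionVars false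

namespace Stmt10Aux

noncomputable section

variable {σ : Type*} [Fintype σ] [DecidableEq σ]

/-- directional derivative of `Q` at `v` in direction `u`. -/
def dirD (u v : σ → ℂ) (Q : MvPolynomial σ ℂ) : ℂ :=
  ∑ j, u j * MvPolynomial.eval v (MvPolynomial.pderiv j Q)

/-- restriction of a multivariate polynomial to the line `t ↦ x + t y`. -/
def lineComp (x y : σ → ℂ) : MvPolynomial σ ℂ →+* Polynomial ℂ :=
  MvPolynomial.eval₂Hom (Polynomial.C)
    (fun i => Polynomial.C (x i) + Polynomial.C (y i) * Polynomial.X)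

lemma lineComp_eval (x y : σ → ℂ) (Q : MvPolynomial σ ℂ) (t : ℂ) :
    (lineComp x y Q).eval t = MvPolynomial.eval (x + t • y) Q := by
  have h := MvPolynomial.eval₂_comp_left (Polynomial.evalRingHom t)
    (Polynomial.C : ℂ →+* Polynomial ℂ)
    (fun i => Polynomial.C (x i) + Polynomial.C (y i) * Polynomial.X) Q
  have h1 : (Polynomial.evalRingHom t).comp (Polynomial.C : ℂ →+* Polynomial ℂ)
      = RingHom.id ℂ := by ext a; simp
  rw [h1] at h
  have h2 : ((Polynomial.evalRingHom t) ∘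
      fun i => Polynomial.C (x i) + Polynomial.C (y i) * Polynomial.X) = (x + t • y) := by
    funext i
    simp [Pi.add_apply, Pi.smul_apply]
    ring
  rw [h2] at h
  rw [MvPolynomial.eval₂_id] at h
  exact h

lemma degree_eq_sum_univ (d : σ →₀ ℕ) : d.degree = ∑ j, d j := by
  rw [Finsupp.degree]
  exact Finset.sum_subset (Finset.subset_univ _)
    (fun x _ hx => by simpa using Finsupp.notMem_support_iff.mp hx)

lemma lineComp_natDegree_le (x y : σ → ℂ) {Q : MvPolynomial σ ℂ} {d : ℕ}
    (h : Q.IsHomogeneous d) : (lineComp x y Q).natDegree ≤ d := by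
  conv_lhs => rw [Q.as_sum]
  rw [map_sum]
  apply Polynomial.natDegree_sum_le_of_forall_le
  intro m hm
  have hdeg : m.degree = d := by
    by_contra hne
    exact (MvPolynomial.mem_support_iff.mp hm) (h.coeff_eq_zero hne)
  have : lineComp x y (monomial m (MvPolynomial.coeff m Q))
      = Polynomial.C (MvPolynomial.coeff m Q) *
        ∏ i : σ, (Polynomial.C (x i) + Polynomial.C (y i) * Polynomial.X) ^ (m i) := by
    simp only [lineComp, MvPolynomial.eval₂Hom_monomial]
    rw [Finsupp.prod_fintype]
    intro i; exact pow_zero _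
  rw [this]
  apply le_trans (Polynomial.natDegree_mul_le)
  rw [Polynomial.natDegree_C]
  rw [← hdeg, degree_eq_sum_univ]
  apply le_trans (add_le_add_right (Polynomial.natDegree_prod_le _ _) 0)
  rw [zero_add]
  apply Finset.sum_le_sum
  intro i _
  apply le_trans (Polynomial.natDegree_pow_le)
  have : (Polynomial.C (x i) + Polynomial.C (y i) * Polynomial.X).natDegree ≤ 1 := by
    apply le_trans (Polynomial.natDegree_add_le _ _)
    simp [Polynomial.natDegree_C_mul_le]
    exact le_trans (Polynomial.natDegree_mul_le) (by simp)
  calc (m i) * (Polynomial.C (x i) + Polynomial.C (y i) * Polynomial.X).natDegree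
      ≤ m i * 1 := Nat.mul_le_mul_left _ this
    _ = m i := mul_one _

lemma lineComp_derivative (x y : σ → ℂ) (Q : MvPolynomial σ ℂ) :
    Polynomial.derivative (lineComp x y Q)
      = ∑ j, Polynomial.C (y j) * lineComp x y (MvPolynomial.pderiv j Q) := by
  induction Q using MvPolynomial.induction_on with
  | C a => simp [lineComp]
  | add p q hp hq =>
      simp only [map_add, hp, hq, mul_add, ← Finset.sum_add_distrib]
  | mul_X p i hp =>
      have hXi : lineComp x y (MvPolynomial.X i)
          = Polynomial.C (x i) + Polynomial.C (y i) * Polynomial.X := by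
        simp [lineComp]
      have hpd : ∀ j : σ, MvPolynomial.pderiv j (p * MvPolynomial.X i)
          = MvPolynomial.pderiv j p * MvPolynomial.X i
            + p * (if i = j then 1 else 0) := by
        intro j
        rw [MvPolynomial.pderiv_mul, MvPolynomial.pderiv_X]
        congr 1
        by_cases hij : i = j
        · subst hij; simp
        · simp [hij, Pi.single_apply]
      rw [map_mul, hXi, Polynomial.derivative_mul, hp]
      have : ∀ j : σ, Polynomial.C (y j) * lineComp x y (MvPolynomial.pderiv j (p * MvPolynomial.X i))
          = Polynomial.C (y j) * lineComp x y (MvPolynomial.pderiv j p)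
              * (Polynomial.C (x i) + Polynomial.C (y i) * Polynomial.X)
            + (if i = j then Polynomial.C (y i) * lineComp x y p else 0) := by
        intro j
        rw [hpd j, map_add, map_mul, map_mul, hXi, mul_add]
        congr 1
        · ring
        · by_cases hij : i = j
          · subst hij; simp
          · simp [hij]
      rw [Finset.sum_congr rfl (fun j _ => this j), Finset.sum_add_distrib, ← Finset.sum_mul,
        Finset.sum_ite_eq (Finset.univ : Finset σ) i
          (fun _ => Polynomial.C (y i) * lineComp x y p)]
      simp only [Finset.mem_univ, if_true, Polynomial.derivative_add,
        Polynomial.derivative_C, Polynomial.derivative_mul, Polynomial.derivative_X,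
        zero_add, mul_one, zero_mul, add_zero]
      ring

lemma eval_smul_homog {Q : MvPolynomial σ ℂ} {d : ℕ} (h : Q.IsHomogeneous d)
    (c : ℂ) (v : σ → ℂ) :
    MvPolynomial.eval (c • v) Q = c ^ d * MvPolynomial.eval v Q := by
  conv_lhs => rw [Q.as_sum]
  conv_rhs => rw [Q.as_sum]
  rw [map_sum, map_sum, Finset.mul_sum]
  apply Finset.sum_congr rfl
  intro m hm
  have hdeg : m.degree = d := by
    by_contra hne
    exact (MvPolynomial.mem_support_iff.mp hm) (h.coeff_eq_zero hne)
  rw [MvPolynomial.eval_monomial, MvPolynomial.eval_monomial]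
  rw [Finsupp.prod, Finsupp.prod]
  have : ∀ i ∈ m.support, (c • v) i ^ m i = c ^ m i * v i ^ m i := by
    intro i _
    rw [Pi.smul_apply, smul_eq_mul, mul_pow]
  rw [Finset.prod_congr rfl this, Finset.prod_mul_distrib, Finset.prod_pow_eq_pow_sum]
  rw [← Finsupp.degree_apply, hdeg]
  ring

lemma pderiv_homog {P : MvPolynomial σ ℂ} {n : ℕ} (h : P.IsHomogeneous (n + 1)) (i : σ) :
    (MvPolynomial.pderiv i P).IsHomogeneous n := by
  conv => rw [P.as_sum]
  rw [map_sum]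
  apply MvPolynomial.IsHomogeneous.sum
  intro m hm
  have hdeg : m.degree = n + 1 := by
    by_contra hne
    exact (MvPolynomial.mem_support_iff.mp hm) (h.coeff_eq_zero hne)
  rw [MvPolynomial.pderiv_monomial]
  by_cases h0 : m i = 0
  · rw [h0]
    simp only [Nat.cast_zero, mul_zero, map_zero]
    exact MvPolynomial.isHomogeneous_zero _ _ _
  · apply MvPolynomial.isHomogeneous_monomial
    set m' : σ →₀ ℕ := m - Finsupp.single i 1 with hm'
    have key : ∀ j, m' j + Finsupp.single i 1 j = m j := by
      intro j
      rw [hm', Finsupp.tsub_apply]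
      by_cases hij : j = i
      · subst hij; simp only [Finsupp.single_eq_same]; omega
      · simp [Finsupp.single_apply, Ne.symm hij]
    have h1 : m'.degree + 1 = m.degree := by
      rw [degree_eq_sum_univ, degree_eq_sum_univ]
      have hsum : (∑ j, m' j) + ∑ j, Finsupp.single i 1 j = ∑ j, m j := by
        rw [← Finset.sum_add_distrib]
        exact Finset.sum_congr rfl (fun j _ => key j)
      have hs : ∑ j, Finsupp.single i 1 j = 1 := by
        simp [Finsupp.single_apply]
      omega
    omega

lemma pderiv_comm' (i j : σ) (p : MvPolynomial σ ℂ) :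
    MvPolynomial.pderiv i (MvPolynomial.pderiv j p)
      = MvPolynomial.pderiv j (MvPolynomial.pderiv i p) := by
  induction p using MvPolynomial.induction_on with
  | C a => simp
  | add p q hp hq => simp [hp, hq]
  | mul_X p k hp =>
      simp only [MvPolynomial.pderiv_mul, map_add, MvPolynomial.pderiv_mul, hp]
      have hik : ∀ a b : σ, MvPolynomial.pderiv a (MvPolynomial.pderiv b (MvPolynomial.X k : MvPolynomial σ ℂ)) = 0 := by
        intro a b
        by_cases h : k = b
        · subst h; rw [MvPolynomial.pderiv_X_self]; simp
        · rw [MvPolynomial.pderiv_X_of_ne h]; simp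
      rw [hik i j, hik j i]
      ring

lemma quad_expand {Q : MvPolynomial σ ℂ} (h : Q.IsHomogeneous 2) (x y : σ → ℂ) :
    (∀ t : ℂ, MvPolynomial.eval (x + t • y) Q
        = MvPolynomial.eval x Q + t * dirD y x Q + t ^ 2 * MvPolynomial.eval y Q)
      ∧ dirD y x Q = dirD x y Q := by
  set p := lineComp x y Q with hpdef
  set q := lineComp y x Q with hqdef
  have hp : ∀ t, p.eval t = MvPolynomial.eval (x + t • y) Q := lineComp_eval x y Q
  have hq : ∀ t, q.eval t = MvPolynomial.eval (y + t • x) Q := lineComp_eval y x Q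
  have hdp : p.natDegree < 3 := lt_of_le_of_lt (lineComp_natDegree_le x y h) (by norm_num)
  have hdq : q.natDegree < 3 := lt_of_le_of_lt (lineComp_natDegree_le y x h) (by norm_num)
  have hpe : ∀ t : ℂ, p.eval t = p.coeff 0 + p.coeff 1 * t + p.coeff 2 * t ^ 2 := by
    intro t
    rw [Polynomial.eval_eq_sum_range' hdp]
    simp [Finset.sum_range_succ]
  have hqe : ∀ t : ℂ, q.eval t = q.coeff 0 + q.coeff 1 * t + q.coeff 2 * t ^ 2 := by
    intro t
    rw [Polynomial.eval_eq_sum_range' hdq]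
    simp [Finset.sum_range_succ]
  have hx0 : x + (0 : ℂ) • y = x := by funext i; simp
  have hy0 : y + (0 : ℂ) • x = y := by funext i; simp
  have hp0 : p.coeff 0 = MvPolynomial.eval x Q := by
    rw [Polynomial.coeff_zero_eq_eval_zero, hp 0, hx0]
  have hq0 : q.coeff 0 = MvPolynomial.eval y Q := by
    rw [Polynomial.coeff_zero_eq_eval_zero, hq 0, hy0]
  have hcoeff1 : ∀ (u v : σ → ℂ), (lineComp u v Q).coeff 1 = dirD v u Q := by
    intro u v
    have hcd : (lineComp u v Q).coeff 1
        = (Polynomial.derivative (lineComp u v Q)).coeff 0 := by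
      rw [Polynomial.coeff_derivative]
      norm_num
    rw [hcd, lineComp_derivative, Polynomial.coeff_zero_eq_eval_zero,
      Polynomial.eval_finset_sum]
    unfold dirD
    apply Finset.sum_congr rfl
    intro j _
    rw [Polynomial.eval_mul, Polynomial.eval_C, lineComp_eval,
      show u + (0 : ℂ) • v = u from by funext i; simp]
  have hp1 : p.coeff 1 = dirD y x Q := hcoeff1 x y
  have hq1 : q.coeff 1 = dirD x y Q := hcoeff1 y x
  have hkey : ∀ t : ℂ, t ≠ 0 → p.eval t = t ^ 2 * q.eval t⁻¹ := by
    intro t ht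
    rw [hp, hq]
    have hline : x + t • y = t • (y + t⁻¹ • x) := by
      funext i
      simp only [Pi.add_apply, Pi.smul_apply, smul_eq_mul]
      field_simp
      ring
    rw [hline, eval_smul_homog h]
  have e1 := hkey 1 one_ne_zero
  have e2 := hkey (-1) (by norm_num)
  have e3 := hkey 2 two_ne_zero
  rw [hpe, hqe] at e1 e2 e3
  have hc1 : p.coeff 1 = q.coeff 1 := by linear_combination (e1 - e2) / 2
  have hc2 : p.coeff 2 = q.coeff 0 := by linear_combination (e3 - e1) / 3 - hc1 / 3
  constructor
  · intro t
    rw [← hp, hpe, hp0, hp1, hc2, hq0]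
    ring
  · rw [← hp1, hc1, hq1]

lemma quad_eval {Q : MvPolynomial σ ℂ} (h : Q.IsHomogeneous 2) (x y : σ → ℂ) (t : ℂ) :
    MvPolynomial.eval (x + t • y) Q
      = MvPolynomial.eval x Q + t * dirD y x Q + t ^ 2 * MvPolynomial.eval y Q :=
  (quad_expand h x y).1 t

lemma dirD_symm {Q : MvPolynomial σ ℂ} (h : Q.IsHomogeneous 2) (x y : σ → ℂ) :
    dirD y x Q = dirD x y Q :=
  (quad_expand h x y).2

lemma dirD_eq_vals {Q : MvPolynomial σ ℂ} (h : Q.IsHomogeneous 2) (x y : σ → ℂ) :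
    dirD y x Q = MvPolynomial.eval (x + y) Q - MvPolynomial.eval x Q
      - MvPolynomial.eval y Q := by
  have := quad_eval h x y 1
  rw [show x + (1 : ℂ) • y = x + y from by funext i; simp] at this
  linear_combination -this

lemma euler2 {Q : MvPolynomial σ ℂ} (h : Q.IsHomogeneous 2) (v : σ → ℂ) :
    dirD v v Q = 2 * MvPolynomial.eval v Q := by
  have h1 := quad_eval h v v 1
  rw [show v + (1 : ℂ) • v = (2 : ℂ) • v from by funext i; simp; ring] at h1
  rw [eval_smul_homog h] at h1
  linear_combination -h1

end

end Stmt10Aux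


/-- let `F = ⟨z, e⟩ ⊂ X` be a line contracted to a point by the
Gauss map of the cubic `X = {P = 0}` with `F ∩ Sing(X) = {z}`, and let
`s ∈ Sing(X)` with `⟨s, z⟩ ⊄ Sing(X)`.  Then `F ⊂ T_y X` for every smooth
point `y` of `X` on the line `⟨s, z⟩`. -/
theorem stmt10 {N : ℕ} (P : MvPolynomial (Fin (N + 1)) ℂ) (hP : P.IsHomogeneous 3)
    (z e s : Fin (N + 1) → ℂ)
    (hz : ∀ i, MvPolynomial.eval z (MvPolynomial.pderiv i P) = 0)
    (hze : LinearIndependent ℂ ![z, e])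
    (hFX : ∀ v ∈ Submodule.span ℂ {z, e}, MvPolynomial.eval v P = 0)
    (hcontract : ∃ x₀ ∈ Submodule.span ℂ {z, e}, gradP P x₀ ≠ 0 ∧
      ∀ v ∈ Submodule.span ℂ {z, e}, ∃ c : ℂ, gradP P v = c • gradP P x₀)
    (hFsing : ∀ v ∈ Submodule.span ℂ {z, e},
      (∀ i, MvPolynomial.eval v (MvPolynomial.pderiv i P) = 0) → ∃ c : ℂ, v = c • z)
    (hs : ∀ i, MvPolynomial.eval s (MvPolynomial.pderiv i P) = 0)
    (hsz : LinearIndependent ℂ ![s, z])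
    (hszSing : ∃ y ∈ Submodule.span ℂ {s, z},
      ¬ ∀ i, MvPolynomial.eval y (MvPolynomial.pderiv i P) = 0) :
    ∀ y ∈ Submodule.span ℂ {s, z}, gradP P y ≠ 0 →
      ∀ v ∈ Submodule.span ℂ {z, e},
        ∑ i, v i * MvPolynomial.eval y (MvPolynomial.pderiv i P) = 0 := by
  classical
  have hQ : ∀ i, (MvPolynomial.pderiv i P).IsHomogeneous 2 :=
    fun i => Stmt10Aux.pderiv_homog hP i
  -- the mixed term on the line ⟨s,z⟩
  have hdirw : ∀ i, Stmt10Aux.dirD z s (MvPolynomial.pderiv i P)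
      = MvPolynomial.eval (s + z) (MvPolynomial.pderiv i P) := by
    intro i
    rw [Stmt10Aux.dirD_eq_vals (hQ i) s z, hs i, hz i]
    ring
  -- gradient on the line ⟨s,z⟩
  have gradLine : ∀ (a b : ℂ) (i : Fin (N + 1)),
      MvPolynomial.eval (a • s + b • z) (MvPolynomial.pderiv i P)
        = a * b * MvPolynomial.eval (s + z) (MvPolynomial.pderiv i P) := by
    intro a b i
    by_cases ha : a = 0
    · subst ha
      rw [show (0 : ℂ) • s + b • z = b • z from by funext j; simp]
      rw [Stmt10Aux.eval_smul_homog (hQ i), hz i]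
      ring
    · rw [show a • s + b • z = a • (s + (b / a) • z) from by
        funext j
        simp only [Pi.add_apply, Pi.smul_apply, smul_eq_mul]
        field_simp]
      rw [Stmt10Aux.eval_smul_homog (hQ i), Stmt10Aux.quad_eval (hQ i), hs i, hz i, hdirw i]
      field_simp
      ring
  -- the mixed term on the line F = ⟨z,e⟩
  have hdirB : ∀ i, Stmt10Aux.dirD z e (MvPolynomial.pderiv i P)
      = MvPolynomial.eval (z + e) (MvPolynomial.pderiv i P)
        - MvPolynomial.eval e (MvPolynomial.pderiv i P) := by
    intro i
    rw [Stmt10Aux.dirD_eq_vals (hQ i) e z, hz i, show e + z = z + e from add_comm e z]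
    ring
  -- gradient on the line F
  have gradF : ∀ (α β : ℂ) (i : Fin (N + 1)),
      MvPolynomial.eval (α • z + β • e) (MvPolynomial.pderiv i P)
        = α * β * (MvPolynomial.eval (z + e) (MvPolynomial.pderiv i P)
            - MvPolynomial.eval e (MvPolynomial.pderiv i P))
          + β ^ 2 * MvPolynomial.eval e (MvPolynomial.pderiv i P) := by
    intro α β i
    by_cases hb : β = 0
    · subst hb
      rw [show α • z + (0 : ℂ) • e = α • z from by funext j; simp]
      rw [Stmt10Aux.eval_smul_homog (hQ i), hz i]
      ring
    · rw [show α • z + β • e = β • (e + (α / β) • z) from by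
        funext j
        simp only [Pi.add_apply, Pi.smul_apply, smul_eq_mul]
        field_simp
        ring]
      rw [Stmt10Aux.eval_smul_homog (hQ i), Stmt10Aux.quad_eval (hQ i), hz i, hdirB i]
      field_simp
      ring
  have hmemF : ∀ α β : ℂ,
      α • z + β • e ∈ Submodule.span ℂ ({z, e} : Set (Fin (N + 1) → ℂ)) := by
    intro α β
    exact Submodule.add_mem _
      (Submodule.smul_mem _ _ (Submodule.subset_span (by simp)))
      (Submodule.smul_mem _ _ (Submodule.subset_span (by simp)))
  -- the mixed term on F vanishes
  have hB0 : ∀ i, MvPolynomial.eval (z + e) (MvPolynomial.pderiv i P)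
      - MvPolynomial.eval e (MvPolynomial.pderiv i P) = 0 := by
    obtain ⟨x₀, hx₀, hg₀, hall⟩ := hcontract
    obtain ⟨c₁, hc₁⟩ := hall ((1 : ℂ) • z + (1 : ℂ) • e) (hmemF 1 1)
    obtain ⟨c₂, hc₂⟩ := hall ((-1 : ℂ) • z + (1 : ℂ) • e) (hmemF (-1) 1)
    have hc₁' : ∀ i, (1 : ℂ) * 1 * (MvPolynomial.eval (z + e) (MvPolynomial.pderiv i P)
        - MvPolynomial.eval e (MvPolynomial.pderiv i P))
          + 1 ^ 2 * MvPolynomial.eval e (MvPolynomial.pderiv i P)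
        = c₁ * gradP P x₀ i := by
      intro i
      rw [← gradF 1 1 i]
      show gradP P ((1 : ℂ) • z + (1 : ℂ) • e) i = c₁ * gradP P x₀ i
      rw [hc₁]
      simp
    have hc₂' : ∀ i, (-1 : ℂ) * 1 * (MvPolynomial.eval (z + e) (MvPolynomial.pderiv i P)
        - MvPolynomial.eval e (MvPolynomial.pderiv i P))
          + 1 ^ 2 * MvPolynomial.eval e (MvPolynomial.pderiv i P)
        = c₂ * gradP P x₀ i := by
      intro i
      rw [← gradF (-1) 1 i]
      show gradP P ((-1 : ℂ) • z + (1 : ℂ) • e) i = c₂ * gradP P x₀ i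
      rw [hc₂]
      simp
    by_contra hBne
    push_neg at hBne
    obtain ⟨i₀, hi₀⟩ := hBne
    have hg : ∀ i, 2 * (MvPolynomial.eval (z + e) (MvPolynomial.pderiv i P)
        - MvPolynomial.eval e (MvPolynomial.pderiv i P)) = (c₁ - c₂) * gradP P x₀ i := by
      intro i
      linear_combination hc₁' i - hc₂' i
    have hcc : c₁ - c₂ ≠ 0 := by
      intro hcc
      apply hi₀
      have h2 := hg i₀
      rw [hcc, zero_mul] at h2
      linear_combination h2 / 2
    set lam : ℂ := (c₁ + c₂) / (c₁ - c₂) with hlam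
    have hGB : ∀ i, MvPolynomial.eval e (MvPolynomial.pderiv i P)
        = lam * (MvPolynomial.eval (z + e) (MvPolynomial.pderiv i P)
            - MvPolynomial.eval e (MvPolynomial.pderiv i P)) := by
      intro i
      have hsum : 2 * MvPolynomial.eval e (MvPolynomial.pderiv i P)
          = (c₁ + c₂) * gradP P x₀ i := by
        linear_combination hc₁' i + hc₂' i
      rw [hlam]
      field_simp
      linear_combination ((c₁ - c₂) * hsum - (c₁ + c₂) * hg i) / 2
    have hsing : ∀ i, MvPolynomial.eval ((-lam) • z + (1 : ℂ) • e)
        (MvPolynomial.pderiv i P) = 0 := by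
      intro i
      rw [gradF (-lam) 1 i]
      linear_combination hGB i
    obtain ⟨c, hc⟩ := hFsing _ (hmemF (-lam) 1) hsing
    have hzero : (c + lam) • z + (-1 : ℂ) • e = 0 := by
      funext j
      have hj := congrFun hc j
      simp only [Pi.add_apply, Pi.smul_apply, smul_eq_mul, Pi.zero_apply] at hj ⊢
      linear_combination -hj
    rcases LinearIndependent.pair_iff.mp hze _ _ hzero with ⟨h1, h2⟩
    norm_num at h2
  -- first orthogonality: ⟨z, w⟩ = 0
  have hzw : ∑ i, z i * MvPolynomial.eval (s + z) (MvPolynomial.pderiv i P) = 0 := by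
    have step1 : ∑ i, z i * MvPolynomial.eval (s + z) (MvPolynomial.pderiv i P)
        = ∑ i, z i * ∑ j, s j * MvPolynomial.eval z
            (MvPolynomial.pderiv j (MvPolynomial.pderiv i P)) := by
      apply Finset.sum_congr rfl
      intro i _
      rw [← hdirw i, Stmt10Aux.dirD_symm (hQ i)]
      rfl
    rw [step1]
    have swap : ∑ i, z i * ∑ j, s j * MvPolynomial.eval z
          (MvPolynomial.pderiv j (MvPolynomial.pderiv i P))
        = ∑ j, s j * ∑ i, z i * MvPolynomial.eval z
            (MvPolynomial.pderiv j (MvPolynomial.pderiv i P)) := by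
      simp_rw [Finset.mul_sum]
      rw [Finset.sum_comm]
      exact Finset.sum_congr rfl fun j _ => Finset.sum_congr rfl fun i _ => by ring
    rw [swap]
    apply Finset.sum_eq_zero
    intro j _
    have hin : ∑ i, z i * MvPolynomial.eval z
          (MvPolynomial.pderiv j (MvPolynomial.pderiv i P))
        = Stmt10Aux.dirD z z (MvPolynomial.pderiv j P) := by
      unfold Stmt10Aux.dirD
      exact Finset.sum_congr rfl fun i _ => by rw [Stmt10Aux.pderiv_comm']
    rw [hin, Stmt10Aux.euler2 (hQ j), hz j, mul_zero, mul_zero]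
  -- second orthogonality: ⟨e, w⟩ = 0
  have hew : ∑ i, e i * MvPolynomial.eval (s + z) (MvPolynomial.pderiv i P) = 0 := by
    have step1 : ∑ i, e i * MvPolynomial.eval (s + z) (MvPolynomial.pderiv i P)
        = ∑ i, e i * ∑ j, z j * MvPolynomial.eval s
            (MvPolynomial.pderiv j (MvPolynomial.pderiv i P)) := by
      apply Finset.sum_congr rfl
      intro i _
      rw [← hdirw i]
      rfl
    rw [step1]
    have swap1 : ∑ i, e i * ∑ j, z j * MvPolynomial.eval s
          (MvPolynomial.pderiv j (MvPolynomial.pderiv i P))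
        = ∑ j, z j * ∑ i, e i * MvPolynomial.eval s
            (MvPolynomial.pderiv j (MvPolynomial.pderiv i P)) := by
      simp_rw [Finset.mul_sum]
      rw [Finset.sum_comm]
      exact Finset.sum_congr rfl fun j _ => Finset.sum_congr rfl fun i _ => by ring
    rw [swap1]
    have step2 : ∀ j, ∑ i, e i * MvPolynomial.eval s
          (MvPolynomial.pderiv j (MvPolynomial.pderiv i P))
        = ∑ i, s i * MvPolynomial.eval e
            (MvPolynomial.pderiv i (MvPolynomial.pderiv j P)) := by
      intro j
      have h1 : ∑ i, e i * MvPolynomial.eval s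
            (MvPolynomial.pderiv j (MvPolynomial.pderiv i P))
          = Stmt10Aux.dirD e s (MvPolynomial.pderiv j P) := by
        unfold Stmt10Aux.dirD
        exact Finset.sum_congr rfl fun i _ => by rw [Stmt10Aux.pderiv_comm']
      rw [h1, Stmt10Aux.dirD_symm (hQ j)]
      rfl
    rw [Finset.sum_congr rfl fun j _ => by rw [step2 j]]
    have swap2 : ∑ j, z j * ∑ i, s i * MvPolynomial.eval e
          (MvPolynomial.pderiv i (MvPolynomial.pderiv j P))
        = ∑ i, s i * ∑ j, z j * MvPolynomial.eval e
            (MvPolynomial.pderiv i (MvPolynomial.pderiv j P)) := by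
      simp_rw [Finset.mul_sum]
      rw [Finset.sum_comm]
      exact Finset.sum_congr rfl fun j _ => Finset.sum_congr rfl fun i _ => by ring
    rw [swap2]
    apply Finset.sum_eq_zero
    intro i _
    have hin : ∑ j, z j * MvPolynomial.eval e
          (MvPolynomial.pderiv i (MvPolynomial.pderiv j P))
        = Stmt10Aux.dirD z e (MvPolynomial.pderiv i P) := by
      unfold Stmt10Aux.dirD
      exact Finset.sum_congr rfl fun j _ => by rw [Stmt10Aux.pderiv_comm']
    rw [hin, hdirB i, hB0 i, mul_zero]
  -- conclusion
  intro y hy hgy v hv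
  rw [Submodule.mem_span_pair] at hy hv
  obtain ⟨a, b, hab⟩ := hy
  obtain ⟨pc, qc, hpq⟩ := hv
  have hterm : ∀ i, v i * MvPolynomial.eval y (MvPolynomial.pderiv i P)
      = (a * b * pc) * (z i * MvPolynomial.eval (s + z) (MvPolynomial.pderiv i P))
        + (a * b * qc) * (e i * MvPolynomial.eval (s + z) (MvPolynomial.pderiv i P)) := by
    intro i
    rw [← hab, ← hpq, gradLine a b i]
    simp only [Pi.add_apply, Pi.smul_apply, smul_eq_mul]
    ring
  rw [Finset.sum_congr rfl fun i _ => hterm i, Finset.sum_add_distrib,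
    ← Finset.mul_sum, ← Finset.mul_sum, hzw, hew]
  ring
end AuxSection
end

section
/- Let Q_1 ⊂ P^{p+1} = {x_{p+1} = ⋯ = x_{p+q} = y_2 = 0} be the smooth quadric {−x_0 y_1 + x_1^2 + ⋯ + x_p^2 = 0} and Q_2 ⊂ P^{q+1} = {x_1 = ⋯ = x_p = y_1 = 0} the smooth quadric {−x_0 y_2 + x_{p+1}^2 + ⋯ + x_{p+q}^2 = 0} in P^{p+q+2} with coordinates [x_0 : x_1 : ⋯ : x_{p+q} : y_1 : y_2]. Then the join Join(Q_1, Q_2) is the cubic hypersurface defined by −x_0 y_1 y_2 + y_1(x_{p+1}^2 + ⋯ + x_{p+q}^2) + y_2(x_1^2 + ⋯ + x_p^2) = 0. -/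
open MvPolynomial

/-- Index type for coordinates `(x₀, x₁, …, x_p, x_{p+1}, …, x_{p+q}, y₁, y₂)`
of `ℙ^{p+q+2}`. -/
abbrev JoinIdx (p q : ℕ) := Unit ⊕ Fin p ⊕ Fin q ⊕ Unit ⊕ Unit

def jx0 {p q : ℕ} : JoinIdx p q := Sum.inl ()
def jxp {p q : ℕ} (j : Fin p) : JoinIdx p q := Sum.inr (Sum.inl j)
def jxq {p q : ℕ} (j : Fin q) : JoinIdx p q := Sum.inr (Sum.inr (Sum.inl j))
def jy1 {p q : ℕ} : JoinIdx p q := Sum.inr (Sum.inr (Sum.inr (Sum.inl ())))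
def jy2 {p q : ℕ} : JoinIdx p q := Sum.inr (Sum.inr (Sum.inr (Sum.inr ())))

/-- The smooth quadric `Q₁ = {−x₀y₁ + x₁² + ⋯ + x_p² = 0}` in
`ℙ^{p+1} = {x_{p+1} = ⋯ = x_{p+q} = y₂ = 0}` (as an affine cone). -/
def quadOne (p q : ℕ) : Set (JoinIdx p q → ℂ) :=
  {v | (∀ j, v (jxq j) = 0) ∧ v jy2 = 0 ∧
    -(v jx0 * v jy1) + ∑ j, (v (jxp j)) ^ 2 = 0}

/-- The smooth quadric `Q₂ = {−x₀y₂ + x_{p+1}² + ⋯ + x_{p+q}² = 0}` in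
`ℙ^{q+1} = {x₁ = ⋯ = x_p = y₁ = 0}` (as an affine cone). -/
def quadTwo (p q : ℕ) : Set (JoinIdx p q → ℂ) :=
  {v | (∀ j, v (jxp j) = 0) ∧ v jy1 = 0 ∧
    -(v jx0 * v jy2) + ∑ j, (v (jxq j)) ^ 2 = 0}

noncomputable section Stmt11Aux

open Filter Topology

namespace Stmt11Aux

variable {p q : ℕ}

/-- Build a vector from its pieces. -/
def mk (c : ℂ) (xp : Fin p → ℂ) (xq : Fin q → ℂ) (u1 u2 : ℂ) : JoinIdx p q → ℂ :=
  Sum.elim (fun _ => c) (Sum.elim xp (Sum.elim xq (Sum.elim (fun _ => u1) (fun _ => u2))))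

@[simp] lemma mk_x0 (c : ℂ) (xp : Fin p → ℂ) (xq : Fin q → ℂ) (u1 u2 : ℂ) :
    mk c xp xq u1 u2 jx0 = c := rfl

@[simp] lemma mk_xp (c : ℂ) (xp : Fin p → ℂ) (xq : Fin q → ℂ) (u1 u2 : ℂ) (j : Fin p) :
    mk c xp xq u1 u2 (jxp j) = xp j := rfl

@[simp] lemma mk_xq (c : ℂ) (xp : Fin p → ℂ) (xq : Fin q → ℂ) (u1 u2 : ℂ) (j : Fin q) :
    mk c xp xq u1 u2 (jxq j) = xq j := rfl

@[simp] lemma mk_y1 (c : ℂ) (xp : Fin p → ℂ) (xq : Fin q → ℂ) (u1 u2 : ℂ) :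
    mk c xp xq u1 u2 jy1 = u1 := rfl

@[simp] lemma mk_y2 (c : ℂ) (xp : Fin p → ℂ) (xq : Fin q → ℂ) (u1 u2 : ℂ) :
    mk c xp xq u1 u2 jy2 = u2 := rfl

lemma mk_eq (v : JoinIdx p q → ℂ) :
    v = mk (v jx0) (fun j => v (jxp j)) (fun j => v (jxq j)) (v jy1) (v jy2) := by
  funext i
  rcases i with ⟨⟩ | j | j | ⟨⟩ | ⟨⟩ <;> rfl

/-- The span set whose closure we take. -/
def spanSet (p q : ℕ) : Set (JoinIdx p q → ℂ) :=
  {v : JoinIdx p q → ℂ | ∃ a ∈ quadOne p q, ∃ b ∈ quadTwo p q,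
      ∃ s t : ℂ, v = s • a + t • b}

lemma mem_span1 (c : ℂ) (xp : Fin p → ℂ) (xq : Fin q → ℂ) (u1 u2 : ℂ)
    (h1 : u1 ≠ 0) (h2 : u2 ≠ 0)
    (hc : -(c * u1 * u2) + u1 * ∑ j, (xq j) ^ 2 + u2 * ∑ j, (xp j) ^ 2 = 0) :
    mk c xp xq u1 u2 ∈ spanSet p q := by
  refine ⟨mk ((∑ j, (xp j) ^ 2) / u1) xp 0 u1 0, ⟨fun j => rfl, rfl, ?_⟩,
    mk ((∑ j, (xq j) ^ 2) / u2) 0 xq 0 u2, ⟨fun j => rfl, rfl, ?_⟩, 1, 1, ?_⟩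
  · simp only [mk_x0, mk_y1, mk_xp]
    field_simp
    ring
  · simp only [mk_x0, mk_y2, mk_xq]
    field_simp
    ring
  · funext i
    rcases i with ⟨⟩ | j | j | ⟨⟩ | ⟨⟩ <;>
      simp only [Pi.add_apply, Pi.smul_apply, smul_eq_mul, one_mul] <;>
      show _ = _ + _
    · show c = (∑ j, (xp j) ^ 2) / u1 + (∑ j, (xq j) ^ 2) / u2
      field_simp
      linear_combination -hc
    · show xp j = xp j + 0; ring
    · show xq j = 0 + xq j; ring
    · show u1 = u1 + 0; ring
    · show u2 = 0 + u2; ring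

lemma mem_span2 (c : ℂ) (xp : Fin p → ℂ) (xq : Fin q → ℂ) (u2 : ℂ)
    (hA : ∑ j, (xp j) ^ 2 = 0) (h2 : u2 ≠ 0) :
    mk c xp xq 0 u2 ∈ spanSet p q := by
  refine ⟨mk (c - (∑ j, (xq j) ^ 2) / u2) xp 0 0 0, ⟨fun j => rfl, rfl, ?_⟩,
    mk ((∑ j, (xq j) ^ 2) / u2) 0 xq 0 u2, ⟨fun j => rfl, rfl, ?_⟩, 1, 1, ?_⟩
  · simp only [mk_x0, mk_y1, mk_xp, mul_zero, neg_zero, zero_add]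
    exact hA
  · simp only [mk_x0, mk_y2, mk_xq]
    field_simp
    ring
  · funext i
    rcases i with ⟨⟩ | j | j | ⟨⟩ | ⟨⟩ <;>
      simp only [Pi.add_apply, Pi.smul_apply, smul_eq_mul, one_mul]
    · show c = (c - (∑ j, (xq j) ^ 2) / u2) + (∑ j, (xq j) ^ 2) / u2; ring
    · show xp j = xp j + 0; ring
    · show xq j = 0 + xq j; ring
    · show (0 : ℂ) = 0 + 0; ring
    · show u2 = 0 + u2; ring

lemma mem_span3 (c : ℂ) (xp : Fin p → ℂ) (xq : Fin q → ℂ) (u1 : ℂ)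
    (hB : ∑ j, (xq j) ^ 2 = 0) (h1 : u1 ≠ 0) :
    mk c xp xq u1 0 ∈ spanSet p q := by
  refine ⟨mk ((∑ j, (xp j) ^ 2) / u1) xp 0 u1 0, ⟨fun j => rfl, rfl, ?_⟩,
    mk (c - (∑ j, (xp j) ^ 2) / u1) 0 xq 0 0, ⟨fun j => rfl, rfl, ?_⟩, 1, 1, ?_⟩
  · simp only [mk_x0, mk_y1, mk_xp]
    field_simp
    ring
  · simp only [mk_x0, mk_y2, mk_xq, mul_zero, neg_zero, zero_add]
    exact hB
  · funext i
    rcases i with ⟨⟩ | j | j | ⟨⟩ | ⟨⟩ <;>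
      simp only [Pi.add_apply, Pi.smul_apply, smul_eq_mul, one_mul]
    · show c = (∑ j, (xp j) ^ 2) / u1 + (c - (∑ j, (xp j) ^ 2) / u1); ring
    · show xp j = xp j + 0; ring
    · show xq j = 0 + xq j; ring
    · show u1 = u1 + 0; ring
    · show (0 : ℂ) = 0 + 0; ring

/-- Every point of the span set satisfies the cubic equation. -/
lemma span_subset_cubic (x : JoinIdx p q → ℂ) (hx : x ∈ spanSet p q) :
    -(x jx0 * x jy1 * x jy2) + x jy1 * ∑ j, (x (jxq j)) ^ 2
      + x jy2 * ∑ j, (x (jxp j)) ^ 2 = 0 := by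
  obtain ⟨a, ⟨ha1, ha2, ha3⟩, b, ⟨hb1, hb2, hb3⟩, s, t, rfl⟩ := hx
  simp only [Pi.add_apply, Pi.smul_apply, smul_eq_mul, ha1, ha2, hb1, hb2,
    mul_zero, add_zero, zero_add, mul_pow, ← Finset.mul_sum]
  linear_combination (s ^ 2 * t * (b jy2)) * ha3 + (s * t ^ 2 * (a jy1)) * hb3

/-- The cubic polynomial. -/
def cubicPoly (p q : ℕ) : MvPolynomial (JoinIdx p q) ℂ :=
  -(X jx0 * X jy1 * X jy2) + X jy1 * ∑ j, (X (jxq j)) ^ 2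
    + X jy2 * ∑ j, (X (jxp j)) ^ 2

lemma eval_cubicPoly (v : JoinIdx p q → ℂ) :
    eval v (cubicPoly p q)
      = -(v jx0 * v jy1 * v jy2) + v jy1 * ∑ j, (v (jxq j)) ^ 2
          + v jy2 * ∑ j, (v (jxp j)) ^ 2 := by
  simp [cubicPoly]

/-- Continuity limit lemma. -/
lemma lim_lemma (f : MvPolynomial (JoinIdx p q) ℂ) (g : ℂ → (JoinIdx p q → ℂ))
    (hg : ContinuousAt g 0)
    (h0 : ∀ᶠ ε in 𝓝[≠] (0 : ℂ), eval (g ε) f = 0) :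
    eval (g 0) f = 0 := by
  have hc : ContinuousAt (fun ε => eval (g ε) f) 0 :=
    (MvPolynomial.continuous_eval f).continuousAt.comp hg
  have h1 : Tendsto (fun ε => eval (g ε) f) (𝓝[≠] (0 : ℂ)) (𝓝 (eval (g 0) f)) :=
    hc.continuousWithinAt.tendsto
  have h2 : Tendsto (fun ε => eval (g ε) f) (𝓝[≠] (0 : ℂ)) (𝓝 0) :=
    Tendsto.congr' (Filter.EventuallyEq.symm h0) tendsto_const_nhds
  exact tendsto_nhds_unique h1 h2
/-- Main lemma: any polynomial vanishing on the span set vanishes on the cubic. -/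
lemma eval_zero (f : MvPolynomial (JoinIdx p q) ℂ)
    (hf : ∀ x ∈ spanSet p q, eval x f = 0)
    (c : ℂ) (xp : Fin p → ℂ) (xq : Fin q → ℂ) (u1 u2 : ℂ)
    (hc : -(c * u1 * u2) + u1 * ∑ j, (xq j) ^ 2 + u2 * ∑ j, (xp j) ^ 2 = 0) :
    eval (mk c xp xq u1 u2) f = 0 := by
  by_cases h1 : u1 = 0
  · subst h1
    by_cases h2 : u2 = 0
    · subst h2
      by_cases hA : ∑ j, (xp j) ^ 2 = 0
      · -- polynomial curve ε ↦ (c, xp, xq, 0, ε)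
        have := lim_lemma f (fun ε => mk c xp xq 0 ε) ?_ ?_
        · simpa using this
        · apply continuousAt_pi.2
          intro i
          rcases i with ⟨⟩ | j | j | ⟨⟩ | ⟨⟩ <;> simp only [mk, Sum.elim_inl, Sum.elim_inr] <;> fun_prop
        · filter_upwards [self_mem_nhdsWithin] with ε hε
          exact hf _ (mem_span2 c xp xq ε hA hε)
      · -- rational curve ε ↦ (c, xp, xq, ε, B ε / (c ε − A))
        set A := ∑ j, (xp j) ^ 2 with hAdef
        set B := ∑ j, (xq j) ^ 2 with hBdef
        have := lim_lemma f (fun ε => mk c xp xq ε (B * ε / (c * ε - A))) ?_ ?_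
        · simpa using this
        · apply continuousAt_pi.2
          intro i
          rcases i with ⟨⟩ | j | j | ⟨⟩ | ⟨⟩ <;> simp only [mk, Sum.elim_inl, Sum.elim_inr]
          · fun_prop
          · fun_prop
          · fun_prop
          · fun_prop
          · apply ContinuousAt.div (by fun_prop) (by fun_prop)
            simpa using hA
        · have hne : ∀ᶠ ε in 𝓝 (0 : ℂ), c * ε - A ≠ 0 := by
            apply ContinuousAt.eventually_ne (g := fun ε => c * ε - A) (by fun_prop)
            simpa using hA
          filter_upwards [eventually_nhdsWithin_of_eventually_nhds hne,
            self_mem_nhdsWithin] with ε hεd hε0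
          have hcube : -(c * ε * (B * ε / (c * ε - A))) + ε * B
              + (B * ε / (c * ε - A)) * A = 0 := by
            field_simp
            ring
          by_cases hB : B = 0
          · have hδ : B * ε / (c * ε - A) = 0 := by simp [hB]
            rw [hδ]
            exact hf _ (mem_span3 c xp xq ε hB hε0)
          · exact hf _ (mem_span1 c xp xq ε _ hε0
              (div_ne_zero (mul_ne_zero hB hε0) hεd) hcube)
    · -- u1 = 0, u2 ≠ 0 forces A = 0
      have hA : ∑ j, (xp j) ^ 2 = 0 := by
        have : u2 * ∑ j, (xp j) ^ 2 = 0 := by linear_combination hc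
        exact (mul_eq_zero.1 this).resolve_left h2
      exact hf _ (mem_span2 c xp xq u2 hA h2)
  · by_cases h2 : u2 = 0
    · subst h2
      have hB : ∑ j, (xq j) ^ 2 = 0 := by
        have : u1 * ∑ j, (xq j) ^ 2 = 0 := by linear_combination hc
        exact (mul_eq_zero.1 this).resolve_left h1
      exact hf _ (mem_span3 c xp xq u1 hB h1)
    · exact hf _ (mem_span1 c xp xq u1 u2 h1 h2 hc)
end Stmt11Aux
end Stmt11Aux

/-- the join of the two quadrics `Q₁`, `Q₂` (the closure of the
union of all lines joining a point of `Q₁` to a point of `Q₂`) is the cubic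
hypersurface `{−x₀y₁y₂ + y₁(x_{p+1}²+⋯+x_{p+q}²) + y₂(x₁²+⋯+x_p²) = 0}`. -/
theorem stmt11 (p q : ℕ) (hp : 0 < p) (hq : 0 < q) :
    zcl {v : JoinIdx p q → ℂ | ∃ a ∈ quadOne p q, ∃ b ∈ quadTwo p q,
        ∃ s t : ℂ, v = s • a + t • b}
      = {v : JoinIdx p q → ℂ |
          -(v jx0 * v jy1 * v jy2) + v jy1 * ∑ j, (v (jxq j)) ^ 2
            + v jy2 * ∑ j, (v (jxp j)) ^ 2 = 0} := by
  have hset : {v : JoinIdx p q → ℂ |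
      -(v jx0 * v jy1 * v jy2) + v jy1 * ∑ j, (v (jxq j)) ^ 2
        + v jy2 * ∑ j, (v (jxp j)) ^ 2 = 0} = zLocus {Stmt11Aux.cubicPoly p q} := by
    ext w
    simp only [zLocus, Set.mem_setOf_eq, Set.mem_singleton_iff, forall_eq,
      Stmt11Aux.eval_cubicPoly]
  apply Set.Subset.antisymm
  · intro v hv
    exact Set.mem_sInter.1 hv _
      ⟨⟨{Stmt11Aux.cubicPoly p q}, hset⟩, fun x hx => Stmt11Aux.span_subset_cubic x hx⟩
  · intro v hv
    apply Set.mem_sInter.2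
    rintro T ⟨⟨I, rfl⟩, hST⟩
    intro f hfI
    have hf : ∀ x ∈ Stmt11Aux.spanSet p q, eval x f = 0 := fun x hx => hST hx f hfI
    have h := Stmt11Aux.eval_zero f hf (v jx0) (fun j => v (jxp j)) (fun j => v (jxq j))
      (v jy1) (v jy2) hv
    rwa [← Stmt11Aux.mk_eq] at h
end
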